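/- arXiv:1306.0758 — 5 statements merged into one kernel-verified Lean document; each statement's English description precedes it below -/
import Mathlib

section
/- Let k and n be integers with n ≥ k+2 ≥ 4. Suppose there exists a prime p > k with p dividing n−l for some l with 1 ≤ l ≤ k−1, and let e = ord_p(n−l) be the exact power of p dividing n−l; assume gcd(e, l) ≤ 2 and gcd(e, k−l) ≤ 2. If l_1 is a positive integer with l_1 < k/2 such that l ∉ {l_1, 2l_1, k−l_1, k−2l_1}, then F_{n,k}(x) has no factor of degree l_1 over ℚ. -/
open Polynomial Finset

section NP

variable (p : ℕ)

noncomputable def vR (x : ℚ) : ℚ := (padicValRat p x : ℚ)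

noncomputable def npf (μ : ℚ) (P : Polynomial ℚ) (j : ℕ) : ℚ := vR p (P.coeff j) + μ * j

noncomputable def Wmin (μ : ℚ) (P : Polynomial ℚ) : ℚ :=
  if h : P.support.Nonempty then P.support.inf' h (npf p μ P) else 0

noncomputable def achievers (μ : ℚ) (P : Polynomial ℚ) : Finset ℕ :=
  P.support.filter fun j => npf p μ P j = Wmin p μ P

noncomputable def Smax (μ : ℚ) (P : Polynomial ℚ) : ℕ :=
  if h : (achievers p μ P).Nonempty then (achievers p μ P).max' h else 0

noncomputable def Smin (μ : ℚ) (P : Polynomial ℚ) : ℕ :=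
  if h : (achievers p μ P).Nonempty then (achievers p μ P).min' h else 0

variable {p} {μ : ℚ} {P Q : Polynomial ℚ}

lemma achievers_nonempty (hP : P ≠ 0) : (achievers p μ P).Nonempty := by
  obtain ⟨b, hb, hval⟩ := Finset.exists_mem_eq_inf' (Polynomial.support_nonempty.2 hP) (npf p μ P)
  exact ⟨b, Finset.mem_filter.2 ⟨hb, by rw [Wmin, dif_pos (Polynomial.support_nonempty.2 hP)]; exact hval.symm⟩⟩

lemma mem_achievers {j : ℕ} :
    j ∈ achievers p μ P ↔ j ∈ P.support ∧ npf p μ P j = Wmin p μ P := Finset.mem_filter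

lemma Wmin_le {j : ℕ} (hj : j ∈ P.support) : Wmin p μ P ≤ npf p μ P j := by
  rw [Wmin, dif_pos ⟨j, hj⟩]; exact Finset.inf'_le _ hj

lemma Smax_mem (hP : P ≠ 0) : Smax p μ P ∈ achievers p μ P := by
  rw [Smax, dif_pos (achievers_nonempty hP)]; exact Finset.max'_mem _ _

lemma Smin_mem (hP : P ≠ 0) : Smin p μ P ∈ achievers p μ P := by
  rw [Smin, dif_pos (achievers_nonempty hP)]; exact Finset.min'_mem _ _

lemma le_Smax (hP : P ≠ 0) {j : ℕ} (hj : j ∈ achievers p μ P) : j ≤ Smax p μ P := by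
  rw [Smax, dif_pos (achievers_nonempty hP)]; exact Finset.le_max' _ _ hj

lemma Smin_le (hP : P ≠ 0) {j : ℕ} (hj : j ∈ achievers p μ P) : Smin p μ P ≤ j := by
  rw [Smin, dif_pos (achievers_nonempty hP)]; exact Finset.min'_le _ _ hj

lemma Smin_le_Smax (hP : P ≠ 0) : Smin p μ P ≤ Smax p μ P :=
  Smin_le hP (Smax_mem hP)

lemma Smax_mem_support (hP : P ≠ 0) : Smax p μ P ∈ P.support := (mem_achievers.1 (Smax_mem hP)).1

lemma Smin_mem_support (hP : P ≠ 0) : Smin p μ P ∈ P.support := (mem_achievers.1 (Smin_mem hP)).1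

lemma npf_Smax (hP : P ≠ 0) : npf p μ P (Smax p μ P) = Wmin p μ P := (mem_achievers.1 (Smax_mem hP)).2

lemma npf_Smin (hP : P ≠ 0) : npf p μ P (Smin p μ P) = Wmin p μ P := (mem_achievers.1 (Smin_mem hP)).2

lemma Wmin_lt_of_gt_Smax (hP : P ≠ 0) {j : ℕ} (hj : j ∈ P.support) (h : Smax p μ P < j) :
    Wmin p μ P < npf p μ P j := by
  rcases lt_or_eq_of_le (Wmin_le hj) with h' | h'
  · exact h'
  · exact absurd (le_Smax hP (mem_achievers.2 ⟨hj, h'.symm⟩)) (not_le.2 h)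

lemma Wmin_lt_of_lt_Smin (hP : P ≠ 0) {j : ℕ} (hj : j ∈ P.support) (h : j < Smin p μ P) :
    Wmin p μ P < npf p μ P j := by
  rcases lt_or_eq_of_le (Wmin_le hj) with h' | h'
  · exact h'
  · exact absurd (Smin_le hP (mem_achievers.2 ⟨hj, h'.symm⟩)) (not_le.2 h)

lemma Smax_le_natDegree (hP : P ≠ 0) : Smax p μ P ≤ P.natDegree :=
  le_natDegree_of_mem_supp _ (Smax_mem_support hP)

end NP

section ValSum

variable {p : ℕ} [Fact p.Prime]

lemma val_add_right {x y : ℚ} (hx : x ≠ 0)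
    (hy : y = 0 ∨ padicValRat p x < padicValRat p y) :
    x + y ≠ 0 ∧ padicValRat p (x + y) = padicValRat p x := by
  by_cases hy0 : y = 0
  · subst hy0; simpa using hx
  have hlt : padicValRat p x < padicValRat p y := hy.resolve_left hy0
  have hne : x + y ≠ 0 := by
    intro h
    have hyx : y = -x := eq_neg_of_add_eq_zero_left (by linarith)
    rw [hyx, padicValRat.neg] at hlt; exact lt_irrefl _ hlt
  refine ⟨hne, ?_⟩
  rw [padicValRat.add_eq_min hne hx hy0 (ne_of_lt hlt), min_eq_left hlt.le]

lemma val_sum_lt {ι : Type*} {s : Finset ι} {f : ι → ℚ} {c : ℚ}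
    (h : ∀ i ∈ s, f i = 0 ∨ c < (padicValRat p (f i) : ℚ)) :
    (∑ i ∈ s, f i) = 0 ∨ c < (padicValRat p (∑ i ∈ s, f i) : ℚ) := by
  induction s using Finset.cons_induction with
  | empty => simp
  | cons a s ha ih =>
    rw [Finset.sum_cons]
    have hx := h a (Finset.mem_cons_self a s)
    have hy := ih (fun i hi => h i (Finset.mem_cons_of_mem hi))
    rcases hx with hx | hx
    · rw [hx, zero_add]; exact hy
    rcases hy with hy | hy
    · rw [hy, add_zero]; exact Or.inr hx
    by_cases hne : f a + ∑ i ∈ s, f i = 0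
    · exact Or.inl hne
    · refine Or.inr ?_
      have hmin := padicValRat.min_le_padicValRat_add (p := p) hne
      have : c < ((min (padicValRat p (f a)) (padicValRat p (∑ i ∈ s, f i)) : ℤ) : ℚ) := by
        push_cast
        exact lt_min hx hy
      exact lt_of_lt_of_le this (by exact_mod_cast hmin)

lemma val_sum_le {ι : Type*} {s : Finset ι} {f : ι → ℚ} {c : ℚ}
    (h : ∀ i ∈ s, f i = 0 ∨ c ≤ (padicValRat p (f i) : ℚ)) :
    (∑ i ∈ s, f i) = 0 ∨ c ≤ (padicValRat p (∑ i ∈ s, f i) : ℚ) := by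
  induction s using Finset.cons_induction with
  | empty => simp
  | cons a s ha ih =>
    rw [Finset.sum_cons]
    have hx := h a (Finset.mem_cons_self a s)
    have hy := ih (fun i hi => h i (Finset.mem_cons_of_mem hi))
    rcases hx with hx | hx
    · rw [hx, zero_add]; exact hy
    rcases hy with hy | hy
    · rw [hy, add_zero]; exact Or.inr hx
    by_cases hne : f a + ∑ i ∈ s, f i = 0
    · exact Or.inl hne
    · refine Or.inr ?_
      have hmin := padicValRat.min_le_padicValRat_add (p := p) hne
      have : c ≤ ((min (padicValRat p (f a)) (padicValRat p (∑ i ∈ s, f i)) : ℤ) : ℚ) := by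
        push_cast
        exact le_min hx hy
      exact le_trans this (by exact_mod_cast hmin)

lemma val_sum_eq {ι : Type*} [DecidableEq ι] {s : Finset ι} {f : ι → ℚ} {i₀ : ι} (hi₀ : i₀ ∈ s) (h0 : f i₀ ≠ 0)
    (h : ∀ i ∈ s, i ≠ i₀ → f i = 0 ∨ padicValRat p (f i₀) < padicValRat p (f i)) :
    (∑ i ∈ s, f i) ≠ 0 ∧ padicValRat p (∑ i ∈ s, f i) = padicValRat p (f i₀) := by
  rw [← Finset.add_sum_erase _ _ hi₀]
  refine val_add_right h0 ?_
  have hrest := val_sum_lt (p := p) (c := (padicValRat p (f i₀) : ℚ)) (s := s.erase i₀) (f := f)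
    (fun i hi => (h i (Finset.mem_of_mem_erase hi) (Finset.ne_of_mem_erase hi)).imp id
      (fun hh => by exact_mod_cast hh))
  exact hrest.imp id (fun hh => by exact_mod_cast hh)

end ValSum

section Mul

variable {p : ℕ} [Fact p.Prime] {μ : ℚ} {P Q : Polynomial ℚ}

lemma vR_mul {x y : ℚ} (hx : x ≠ 0) (hy : y ≠ 0) : vR p (x * y) = vR p x + vR p y := by
  unfold vR; rw [padicValRat.mul hx hy]; push_cast; ring

lemma mul_coeff_bound (j : ℕ) :
    (P * Q).coeff j = 0 ∨
      Wmin p μ P + Wmin p μ Q - μ * j ≤ vR p ((P * Q).coeff j) := by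
  rw [Polynomial.coeff_mul]
  refine (val_sum_le (p := p) ?_).imp id id
  rintro ⟨x1, x2⟩ hx
  rw [Finset.HasAntidiagonal.mem_antidiagonal] at hx
  by_cases h1 : P.coeff x1 = 0
  · exact Or.inl (by rw [h1, zero_mul])
  by_cases h2 : Q.coeff x2 = 0
  · exact Or.inl (by rw [h2, mul_zero])
  refine Or.inr ?_
  have hc : (padicValRat p (P.coeff x1 * Q.coeff x2) : ℚ) = vR p (P.coeff x1) + vR p (Q.coeff x2) :=
    vR_mul h1 h2
  have hP1 : Wmin p μ P ≤ vR p (P.coeff x1) + μ * x1 :=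
    Wmin_le (Polynomial.mem_support_iff.2 h1)
  have hQ1 : Wmin p μ Q ≤ vR p (Q.coeff x2) + μ * x2 :=
    Wmin_le (Polynomial.mem_support_iff.2 h2)
  have hj : μ * (j : ℚ) = μ * x1 + μ * x2 := by rw [← hx]; push_cast; ring
  rw [hc]
  linarith

lemma mul_coeff_bound_gt (hP : P ≠ 0) (hQ : Q ≠ 0) {j : ℕ}
    (hj : Smax p μ P + Smax p μ Q < j) :
    (P * Q).coeff j = 0 ∨
      Wmin p μ P + Wmin p μ Q - μ * j < vR p ((P * Q).coeff j) := by
  rw [Polynomial.coeff_mul]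
  refine (val_sum_lt (p := p) ?_).imp id id
  rintro ⟨x1, x2⟩ hx
  rw [Finset.HasAntidiagonal.mem_antidiagonal] at hx
  by_cases h1 : P.coeff x1 = 0
  · exact Or.inl (by rw [h1, zero_mul])
  by_cases h2 : Q.coeff x2 = 0
  · exact Or.inl (by rw [h2, mul_zero])
  refine Or.inr ?_
  have hc : (padicValRat p (P.coeff x1 * Q.coeff x2) : ℚ) = vR p (P.coeff x1) + vR p (Q.coeff x2) :=
    vR_mul h1 h2
  have hj' : μ * (j : ℚ) = μ * x1 + μ * x2 := by rw [← hx]; push_cast; ring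
  rw [hc]
  rcases (by omega : Smax p μ P < x1 ∨ Smax p μ Q < x2) with hgt | hgt
  · have hP1 : Wmin p μ P < vR p (P.coeff x1) + μ * x1 :=
      Wmin_lt_of_gt_Smax hP (Polynomial.mem_support_iff.2 h1) hgt
    have hQ1 : Wmin p μ Q ≤ vR p (Q.coeff x2) + μ * x2 :=
      Wmin_le (Polynomial.mem_support_iff.2 h2)
    linarith
  · have hP1 : Wmin p μ P ≤ vR p (P.coeff x1) + μ * x1 :=
      Wmin_le (Polynomial.mem_support_iff.2 h1)
    have hQ1 : Wmin p μ Q < vR p (Q.coeff x2) + μ * x2 :=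
      Wmin_lt_of_gt_Smax hQ (Polynomial.mem_support_iff.2 h2) hgt
    linarith

lemma mul_coeff_bound_lt (hP : P ≠ 0) (hQ : Q ≠ 0) {j : ℕ}
    (hj : j < Smin p μ P + Smin p μ Q) :
    (P * Q).coeff j = 0 ∨
      Wmin p μ P + Wmin p μ Q - μ * j < vR p ((P * Q).coeff j) := by
  rw [Polynomial.coeff_mul]
  refine (val_sum_lt (p := p) ?_).imp id id
  rintro ⟨x1, x2⟩ hx
  rw [Finset.HasAntidiagonal.mem_antidiagonal] at hx
  by_cases h1 : P.coeff x1 = 0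
  · exact Or.inl (by rw [h1, zero_mul])
  by_cases h2 : Q.coeff x2 = 0
  · exact Or.inl (by rw [h2, mul_zero])
  refine Or.inr ?_
  have hc : (padicValRat p (P.coeff x1 * Q.coeff x2) : ℚ) = vR p (P.coeff x1) + vR p (Q.coeff x2) :=
    vR_mul h1 h2
  have hj' : μ * (j : ℚ) = μ * x1 + μ * x2 := by rw [← hx]; push_cast; ring
  rw [hc]
  rcases (by omega : x1 < Smin p μ P ∨ x2 < Smin p μ Q) with hgt | hgt
  · have hP1 : Wmin p μ P < vR p (P.coeff x1) + μ * x1 :=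
      Wmin_lt_of_lt_Smin hP (Polynomial.mem_support_iff.2 h1) hgt
    have hQ1 : Wmin p μ Q ≤ vR p (Q.coeff x2) + μ * x2 :=
      Wmin_le (Polynomial.mem_support_iff.2 h2)
    linarith
  · have hP1 : Wmin p μ P ≤ vR p (P.coeff x1) + μ * x1 :=
      Wmin_le (Polynomial.mem_support_iff.2 h1)
    have hQ1 : Wmin p μ Q < vR p (Q.coeff x2) + μ * x2 :=
      Wmin_lt_of_lt_Smin hQ (Polynomial.mem_support_iff.2 h2) hgt
    linarith

lemma mul_coeff_exact_max (hP : P ≠ 0) (hQ : Q ≠ 0) :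
    (P * Q).coeff (Smax p μ P + Smax p μ Q) ≠ 0 ∧
      vR p ((P * Q).coeff (Smax p μ P + Smax p μ Q)) + μ * (Smax p μ P + Smax p μ Q : ℕ)
        = Wmin p μ P + Wmin p μ Q := by
  set A := Smax p μ P with hA
  set B := Smax p μ Q with hB
  have hAs : P.coeff A ≠ 0 := Polynomial.mem_support_iff.1 (Smax_mem_support hP)
  have hBs : Q.coeff B ≠ 0 := Polynomial.mem_support_iff.1 (Smax_mem_support hQ)
  have key := val_sum_eq (p := p) (s := Finset.HasAntidiagonal.antidiagonal (A + B))
    (f := fun x => P.coeff x.1 * Q.coeff x.2) (i₀ := (A, B))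
    (Finset.HasAntidiagonal.mem_antidiagonal.2 rfl) (mul_ne_zero hAs hBs) ?_
  · rw [Polynomial.coeff_mul]
    refine ⟨key.1, ?_⟩
    have h2 : (padicValRat p (∑ x ∈ Finset.HasAntidiagonal.antidiagonal (A + B), P.coeff x.1 * Q.coeff x.2) : ℚ)
        = vR p (P.coeff A) + vR p (Q.coeff B) := by
      rw [key.2]; exact vR_mul hAs hBs
    have hPA := npf_Smax (p := p) (μ := μ) hP
    have hQB := npf_Smax (p := p) (μ := μ) hQ
    unfold npf at hPA hQB
    have : vR p ((∑ x ∈ Finset.HasAntidiagonal.antidiagonal (A + B), P.coeff x.1 * Q.coeff x.2)) =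
        vR p (P.coeff A) + vR p (Q.coeff B) := h2
    rw [this]
    push_cast
    linarith
  · rintro ⟨x1, x2⟩ hx hne
    rw [Finset.HasAntidiagonal.mem_antidiagonal] at hx
    dsimp only at hx ⊢
    by_cases h1 : P.coeff x1 = 0
    · exact Or.inl (by rw [h1, zero_mul])
    by_cases h2 : Q.coeff x2 = 0
    · exact Or.inl (by rw [h2, mul_zero])
    refine Or.inr ?_
    have hc1 : (padicValRat p (P.coeff x1 * Q.coeff x2) : ℚ) = vR p (P.coeff x1) + vR p (Q.coeff x2) :=
      vR_mul h1 h2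
    have hc0 : (padicValRat p (P.coeff A * Q.coeff B) : ℚ) = vR p (P.coeff A) + vR p (Q.coeff B) :=
      vR_mul hAs hBs
    have hx1A : x1 ≠ A ∨ x2 ≠ B := by
      by_contra hcon
      push_neg at hcon
      exact hne (Prod.ext hcon.1 hcon.2)
    have hcase : A < x1 ∨ B < x2 := by omega
    have hPA := npf_Smax (p := p) (μ := μ) hP
    have hQB := npf_Smax (p := p) (μ := μ) hQ
    unfold npf at hPA hQB
    have hxq : (x1 : ℚ) + x2 = (A : ℚ) + B := by exact_mod_cast congrArg (Nat.cast (R := ℚ)) hx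
    have hj' : μ * (x1 : ℚ) + μ * x2 = μ * A + μ * B := by rw [← mul_add, ← mul_add, hxq]
    have goal : vR p (P.coeff A) + vR p (Q.coeff B) < vR p (P.coeff x1) + vR p (Q.coeff x2) := by
      rcases hcase with hgt | hgt
      · have hs1 : Wmin p μ P < vR p (P.coeff x1) + μ * x1 :=
          Wmin_lt_of_gt_Smax hP (Polynomial.mem_support_iff.2 h1) hgt
        have hs2 : Wmin p μ Q ≤ vR p (Q.coeff x2) + μ * x2 :=
          Wmin_le (Polynomial.mem_support_iff.2 h2)
        linarith
      · have hs1 : Wmin p μ P ≤ vR p (P.coeff x1) + μ * x1 :=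
          Wmin_le (Polynomial.mem_support_iff.2 h1)
        have hs2 : Wmin p μ Q < vR p (Q.coeff x2) + μ * x2 :=
          Wmin_lt_of_gt_Smax hQ (Polynomial.mem_support_iff.2 h2) hgt
        linarith
    have := hc1 ▸ hc0 ▸ goal
    exact_mod_cast this

end Mul

section Mul2

variable {p : ℕ} [Fact p.Prime] {μ : ℚ} {P Q : Polynomial ℚ}

lemma mul_coeff_exact_min (hP : P ≠ 0) (hQ : Q ≠ 0) :
    (P * Q).coeff (Smin p μ P + Smin p μ Q) ≠ 0 ∧
      vR p ((P * Q).coeff (Smin p μ P + Smin p μ Q)) + μ * (Smin p μ P + Smin p μ Q : ℕ)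
        = Wmin p μ P + Wmin p μ Q := by
  set A := Smin p μ P with hA
  set B := Smin p μ Q with hB
  have hAs : P.coeff A ≠ 0 := Polynomial.mem_support_iff.1 (Smin_mem_support hP)
  have hBs : Q.coeff B ≠ 0 := Polynomial.mem_support_iff.1 (Smin_mem_support hQ)
  have key := val_sum_eq (p := p) (s := Finset.HasAntidiagonal.antidiagonal (A + B))
    (f := fun x => P.coeff x.1 * Q.coeff x.2) (i₀ := (A, B))
    (Finset.HasAntidiagonal.mem_antidiagonal.2 rfl) (mul_ne_zero hAs hBs) ?_
  · rw [Polynomial.coeff_mul]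
    refine ⟨key.1, ?_⟩
    have h2 : (padicValRat p (∑ x ∈ Finset.HasAntidiagonal.antidiagonal (A + B), P.coeff x.1 * Q.coeff x.2) : ℚ)
        = vR p (P.coeff A) + vR p (Q.coeff B) := by
      rw [key.2]; exact vR_mul hAs hBs
    have hPA := npf_Smin (p := p) (μ := μ) hP
    have hQB := npf_Smin (p := p) (μ := μ) hQ
    unfold npf at hPA hQB
    have : vR p ((∑ x ∈ Finset.HasAntidiagonal.antidiagonal (A + B), P.coeff x.1 * Q.coeff x.2)) =
        vR p (P.coeff A) + vR p (Q.coeff B) := h2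
    rw [this]
    push_cast
    linarith
  · rintro ⟨x1, x2⟩ hx hne
    rw [Finset.HasAntidiagonal.mem_antidiagonal] at hx
    dsimp only at hx ⊢
    by_cases h1 : P.coeff x1 = 0
    · exact Or.inl (by rw [h1, zero_mul])
    by_cases h2 : Q.coeff x2 = 0
    · exact Or.inl (by rw [h2, mul_zero])
    refine Or.inr ?_
    have hc1 : (padicValRat p (P.coeff x1 * Q.coeff x2) : ℚ) = vR p (P.coeff x1) + vR p (Q.coeff x2) :=
      vR_mul h1 h2
    have hc0 : (padicValRat p (P.coeff A * Q.coeff B) : ℚ) = vR p (P.coeff A) + vR p (Q.coeff B) :=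
      vR_mul hAs hBs
    have hx1A : x1 ≠ A ∨ x2 ≠ B := by
      by_contra hcon
      push_neg at hcon
      exact hne (Prod.ext hcon.1 hcon.2)
    have hcase : x1 < A ∨ x2 < B := by omega
    have hPA := npf_Smin (p := p) (μ := μ) hP
    have hQB := npf_Smin (p := p) (μ := μ) hQ
    unfold npf at hPA hQB
    have hxq : (x1 : ℚ) + x2 = (A : ℚ) + B := by exact_mod_cast congrArg (Nat.cast (R := ℚ)) hx
    have hj' : μ * (x1 : ℚ) + μ * x2 = μ * A + μ * B := by rw [← mul_add, ← mul_add, hxq]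
    have goal : vR p (P.coeff A) + vR p (Q.coeff B) < vR p (P.coeff x1) + vR p (Q.coeff x2) := by
      rcases hcase with hgt | hgt
      · have hs1 : Wmin p μ P < vR p (P.coeff x1) + μ * x1 :=
          Wmin_lt_of_lt_Smin hP (Polynomial.mem_support_iff.2 h1) hgt
        have hs2 : Wmin p μ Q ≤ vR p (Q.coeff x2) + μ * x2 :=
          Wmin_le (Polynomial.mem_support_iff.2 h2)
        linarith
      · have hs1 : Wmin p μ P ≤ vR p (P.coeff x1) + μ * x1 :=
          Wmin_le (Polynomial.mem_support_iff.2 h1)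
        have hs2 : Wmin p μ Q < vR p (Q.coeff x2) + μ * x2 :=
          Wmin_lt_of_lt_Smin hQ (Polynomial.mem_support_iff.2 h2) hgt
        linarith
    have := hc1 ▸ hc0 ▸ goal
    exact_mod_cast this

lemma NP_mul (hP : P ≠ 0) (hQ : Q ≠ 0) :
    Wmin p μ (P * Q) = Wmin p μ P + Wmin p μ Q ∧
    Smax p μ (P * Q) = Smax p μ P + Smax p μ Q ∧
    Smin p μ (P * Q) = Smin p μ P + Smin p μ Q := by
  have hPQ : P * Q ≠ 0 := mul_ne_zero hP hQ
  obtain ⟨hS0, hSval⟩ := mul_coeff_exact_max (p := p) (μ := μ) hP hQ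
  obtain ⟨hS0', hSval'⟩ := mul_coeff_exact_min (p := p) (μ := μ) hP hQ
  set S := Smax p μ P + Smax p μ Q with hSdef
  set S' := Smin p μ P + Smin p μ Q with hS'def
  have hSsupp : S ∈ (P * Q).support := Polynomial.mem_support_iff.2 hS0
  have hS'supp : S' ∈ (P * Q).support := Polynomial.mem_support_iff.2 hS0'
  have hnpfS : npf p μ (P * Q) S = Wmin p μ P + Wmin p μ Q := hSval
  have hnpfS' : npf p μ (P * Q) S' = Wmin p μ P + Wmin p μ Q := hSval'
  have hW : Wmin p μ (P * Q) = Wmin p μ P + Wmin p μ Q := by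
    apply le_antisymm
    · exact le_of_le_of_eq (Wmin_le hSsupp) hnpfS
    · have h1 := npf_Smin (p := p) (μ := μ) hPQ
      have hmem := Smin_mem_support (p := p) (μ := μ) hPQ
      have hne := Polynomial.mem_support_iff.1 hmem
      rcases mul_coeff_bound (p := p) (μ := μ) (P := P) (Q := Q) (Smin p μ (P * Q)) with h | h
      · exact absurd h hne
      · rw [← h1]; unfold npf; linarith
  refine ⟨hW, ?_, ?_⟩
  · have hach : S ∈ achievers p μ (P * Q) :=
      mem_achievers.2 ⟨hSsupp, by rw [hnpfS, hW]⟩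
    have h1 : S ≤ Smax p μ (P * Q) := le_Smax hPQ hach
    have h2 : Smax p μ (P * Q) ≤ S := by
      by_contra hcon
      push_neg at hcon
      have hmem := Smax_mem_support (p := p) (μ := μ) hPQ
      have hne := Polynomial.mem_support_iff.1 hmem
      rcases mul_coeff_bound_gt (p := p) (μ := μ) hP hQ hcon with h | h
      · exact absurd h hne
      · have h3 := npf_Smax (p := p) (μ := μ) hPQ
        unfold npf at h3
        rw [hW] at h3
        linarith
    omega
  · have hach : S' ∈ achievers p μ (P * Q) :=
      mem_achievers.2 ⟨hS'supp, by rw [hnpfS', hW]⟩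
    have h1 : Smin p μ (P * Q) ≤ S' := Smin_le hPQ hach
    have h2 : S' ≤ Smin p μ (P * Q) := by
      by_contra hcon
      push_neg at hcon
      have hmem := Smin_mem_support (p := p) (μ := μ) hPQ
      have hne := Polynomial.mem_support_iff.1 hmem
      rcases mul_coeff_bound_lt (p := p) (μ := μ) hP hQ hcon with h | h
      · exact absurd h hne
      · have h3 := npf_Smin (p := p) (μ := μ) hPQ
        unfold npf at h3
        rw [hW] at h3
        linarith
    omega

end Mul2

section Mono

variable {p : ℕ} {P : Polynomial ℚ}

lemma Smax_le_Smin_of_lt (hP : P ≠ 0) {μ1 μ2 : ℚ} (h : μ1 < μ2) :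
    Smax p μ2 P ≤ Smin p μ1 P := by
  by_contra hcon
  push_neg at hcon
  set i := Smax p μ2 P with hi
  set j := Smin p μ1 P with hj
  have h1 : npf p μ2 P i ≤ npf p μ2 P j := by
    rw [npf_Smax (p := p) (μ := μ2) hP]
    exact Wmin_le (Smin_mem_support (p := p) (μ := μ1) hP)
  have h2 : npf p μ1 P j ≤ npf p μ1 P i := by
    rw [npf_Smin (p := p) (μ := μ1) hP]
    exact Wmin_le (Smax_mem_support (p := p) (μ := μ2) hP)
  unfold npf at h1 h2
  have hij : (j : ℚ) < i := by exact_mod_cast hcon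
  nlinarith [mul_pos (sub_pos.2 h) (sub_pos.2 hij)]

lemma Smax_constant (hP : P ≠ 0) {α β : ℚ}
    (hu : ∀ μ : ℚ, α < μ → μ < β → Smin p μ P = Smax p μ P) :
    ∀ μ1 μ2 : ℚ, α < μ1 → μ1 < μ2 → μ2 < β → Smax p μ1 P = Smax p μ2 P := by
  have huniq : ∀ μ : ℚ, α < μ → μ < β → ∀ j ∈ P.support, j ≠ Smax p μ P →
      npf p μ P (Smax p μ P) < npf p μ P j := by
    intro μ hα hβ j hj hne
    rw [npf_Smax hP]
    rcases lt_or_eq_of_le (Wmin_le hj) with h' | h'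
    · exact h'
    · exfalso
      apply hne
      have hj1 := le_Smax hP (mem_achievers.2 ⟨hj, h'.symm⟩)
      have hj2 := Smin_le hP (mem_achievers.2 ⟨hj, h'.symm⟩)
      have := hu μ hα hβ
      omega
  suffices haux : ∀ d : ℕ, ∀ μ1 μ2 : ℚ, α < μ1 → μ1 < μ2 → μ2 < β →
      Smax p μ1 P - Smax p μ2 P ≤ d → Smax p μ1 P = Smax p μ2 P by
    intro μ1 μ2 h1 h2 h3
    exact haux (Smax p μ1 P) μ1 μ2 h1 h2 h3 (Nat.sub_le _ _)
  intro d
  induction d with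
  | zero =>
    intro μ1 μ2 h1 h2 h3 hd
    have hm := Smax_le_Smin_of_lt (p := p) hP h2
    have h' := hu μ1 h1 (h2.trans h3)
    omega
  | succ d ih =>
    intro μ1 μ2 h1 h2 h3 hd
    set i := Smax p μ1 P with hi
    set j := Smax p μ2 P with hj
    have hji : j ≤ i := le_trans (Smax_le_Smin_of_lt (p := p) hP h2) (le_of_eq (hu μ1 h1 (h2.trans h3)))
    rcases eq_or_lt_of_le hji with heq | hlt
    · exact heq.symm
    have hisupp : i ∈ P.support := Smax_mem_support hP
    have hjsupp : j ∈ P.support := Smax_mem_support hP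
    have hstrict1 : npf p μ1 P i < npf p μ1 P j := huniq μ1 h1 (h2.trans h3) j hjsupp (by omega)
    have hstrict2 : npf p μ2 P j < npf p μ2 P i := huniq μ2 (h1.trans h2) h3 i hisupp (by omega)
    unfold npf at hstrict1 hstrict2
    have hijq : (0 : ℚ) < (i : ℚ) - j := by
      have : (j : ℚ) < i := by exact_mod_cast hlt
      linarith
    set Vi := vR p (P.coeff i) with hVi
    set Vj := vR p (P.coeff j) with hVj
    set σ := (Vj - Vi) / ((i : ℚ) - j) with hσ
    have hσmul : σ * ((i : ℚ) - j) = Vj - Vi := div_mul_cancel₀ _ (ne_of_gt hijq)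
    have hσeq : Vi + σ * i = Vj + σ * j := by
      have hexp : σ * ((i : ℚ) - j) = σ * i - σ * j := by ring
      linarith [hσmul, hexp]
    have hσ1 : μ1 < σ := by
      have hmul : μ1 * ((i : ℚ) - j) < σ * ((i : ℚ) - j) := by
        rw [hσmul]
        have hexp : μ1 * ((i : ℚ) - j) = μ1 * i - μ1 * j := by ring
        linarith
      exact lt_of_mul_lt_mul_right hmul (le_of_lt hijq)
    have hσ2 : σ < μ2 := by
      have hmul : σ * ((i : ℚ) - j) < μ2 * ((i : ℚ) - j) := by
        rw [hσmul]
        have hexp : μ2 * ((i : ℚ) - j) = μ2 * i - μ2 * j := by ring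
        linarith
      exact lt_of_mul_lt_mul_right hmul (le_of_lt hijq)
    set w := Smax p σ P with hw
    have hασ : α < σ := h1.trans hσ1
    have hσβ : σ < β := hσ2.trans h3
    have hw_ne_i : w ≠ i := by
      intro hcon
      have := huniq σ hασ hσβ j hjsupp (by omega)
      rw [← hw, hcon] at this
      unfold npf at this
      rw [← hVi, ← hVj] at this
      linarith
    have hw_ne_j : w ≠ j := by
      intro hcon
      have := huniq σ hασ hσβ i hisupp (by omega)
      rw [← hw, hcon] at this
      unfold npf at this
      rw [← hVi, ← hVj] at this
      linarith
    have hwi : w ≤ i := le_trans (Smax_le_Smin_of_lt (p := p) hP hσ1) (le_of_eq (hu μ1 h1 (h2.trans h3)))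
    have hjw : j ≤ w := le_trans (Smax_le_Smin_of_lt (p := p) hP hσ2) (le_of_eq (hu σ hασ hσβ))
    have := ih μ1 σ h1 hσ1 hσβ (by omega)
    exact absurd this.symm hw_ne_i

lemma linear_endpoint {α β c D : ℚ} (hαβ : α < β)
    (h : ∀ μ : ℚ, α < μ → μ < β → 0 ≤ c + μ * D) : 0 ≤ c + β * D := by
  by_contra hc
  push_neg at hc
  rcases le_or_gt 0 D with hD | hD
  · have h0 := h ((α + β) / 2) (by linarith) (by linarith)
    nlinarith
  · set ε := -(c + β * D) with hε
    have hε0 : 0 < ε := by linarith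
    have hD' : 0 < -D := by linarith
    set q := ε / (2 * (-D)) with hq'
    have hq : 0 < q := by positivity
    set μ := max ((α + β) / 2) (β - q) with hμ
    have hμβ : μ < β := by
      apply max_lt
      · linarith
      · linarith
    have hμα : α < μ := lt_of_lt_of_le (by linarith : α < (α + β) / 2) (le_max_left _ _)
    have h1 := h μ hμα hμβ
    have h2 : β - μ ≤ q := by
      have := le_max_right ((α + β) / 2) (β - q)
      rw [← hμ] at this
      linarith
    have h3 : (β - μ) * (-D) ≤ q * (-D) := mul_le_mul_of_nonneg_right h2 (le_of_lt hD')
    have h4 : q * (-D) = ε / 2 := by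
      rw [hq', mul_comm (2 : ℚ) (-D), div_mul_eq_mul_div, mul_comm ε (-D),
        mul_div_mul_left _ _ hD'.ne']
    nlinarith

lemma linear_endpoint' {α β c D : ℚ} (hαβ : α < β)
    (h : ∀ μ : ℚ, α < μ → μ < β → 0 ≤ c + μ * D) :
    0 ≤ c + β * D ∧ 0 ≤ c + α * D := by
  refine ⟨linear_endpoint hαβ h, ?_⟩
  have h2 := linear_endpoint (α := -β) (β := -α) (c := c) (D := -D) (by linarith) ?_
  · nlinarith [h2]
  · intro ν h1' h2'
    have := h (-ν) (by linarith) (by linarith)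
    nlinarith [this]

end Mono

/-- `c n k j = (−1)^{k−j} C(n,j) C(n−j−1, k−j)`, the `j`-th coefficient of `P_{n,k}(x−1)`. -/
def c (n k j : ℕ) : ℤ :=
  (-1) ^ (k - j) * (n.choose j : ℤ) * ((n - j - 1).choose (k - j) : ℤ)

/-- `F n k a = ∑_{j=0}^{k} a_j c_j x^j` as a polynomial over `ℚ`. -/
noncomputable def F (n k : ℕ) (a : ℕ → ℤ) : Polynomial ℚ :=
  ∑ j ∈ Finset.range (k + 1), Polynomial.C ((a j * c n k j : ℤ) : ℚ) * Polynomial.X ^ j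

section NT

variable {p : ℕ} [hfp : Fact p.Prime]

lemma padicValNat_prod {ι : Type*} {s : Finset ι} {f : ι → ℕ}
    (hf : ∀ i ∈ s, f i ≠ 0) :
    padicValNat p (∏ i ∈ s, f i) = ∑ i ∈ s, padicValNat p (f i) := by
  induction s using Finset.cons_induction with
  | empty => simp
  | cons a s ha ih =>
    rw [Finset.prod_cons, Finset.sum_cons,
      padicValNat.mul (hf a (Finset.mem_cons_self a s))
        (Finset.prod_ne_zero_iff.2 fun i hi => hf i (Finset.mem_cons_of_mem hi)),
      ih fun i hi => hf i (Finset.mem_cons_of_mem hi)]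

lemma val_n_sub {n k l : ℕ} (hkp : k < p) (hn : k + 2 ≤ n)
    (hl2 : l < k) (hpl : p ∣ n - l) {i : ℕ} (hik : i ≤ k) (hil : i ≠ l) :
    padicValNat p (n - i) = 0 := by
  apply padicValNat.eq_zero_of_not_dvd
  intro hdvd
  have h1 : (p : ℤ) ∣ (n : ℤ) - i := by
    have := Int.natCast_dvd_natCast.2 hdvd
    rwa [Nat.cast_sub (by omega)] at this
  have h2 : (p : ℤ) ∣ (n : ℤ) - l := by
    have := Int.natCast_dvd_natCast.2 hpl
    rwa [Nat.cast_sub (by omega)] at this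
  have h3 : (p : ℤ) ∣ (l : ℤ) - i := by
    have := dvd_sub h1 h2
    have heq : (n : ℤ) - i - ((n : ℤ) - l) = (l : ℤ) - i := by ring
    rwa [heq] at this
  have h4 : p ∣ ((l : ℤ) - i).natAbs := by
    rwa [Int.natCast_dvd] at h3
  have h5 : ((l : ℤ) - i).natAbs ≠ 0 := by omega
  have h6 := Nat.le_of_dvd (by omega) h4
  omega

lemma val_choose_left {n k l e : ℕ} (hkp : k < p) (hn : k + 2 ≤ n)
    (hl2 : l < k) (hpl : p ∣ n - l) (he : e = padicValNat p (n - l))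
    {j : ℕ} (hj : j ≤ k) :
    padicValNat p (n.choose j) = if l < j then e else 0 := by
  have hfac : padicValNat p (Nat.factorial j) = 0 :=
    padicValNat.eq_zero_of_not_dvd (fun hd => by
      have := (Nat.Prime.dvd_factorial hfp.out).1 hd
      omega)
  have hchoose_pos : n.choose j ≠ 0 := (Nat.choose_pos (by omega)).ne'
  have hdesc : n.descFactorial j = Nat.factorial j * n.choose j := Nat.descFactorial_eq_factorial_mul_choose n j
  have hv : padicValNat p (n.descFactorial j) = padicValNat p (n.choose j) := by
    rw [hdesc, padicValNat.mul (Nat.factorial_ne_zero j) hchoose_pos, hfac, zero_add]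
  rw [← hv, Nat.descFactorial_eq_prod_range,
    padicValNat_prod (fun i hi => by
      rw [Finset.mem_range] at hi; omega)]
  have hterm : ∀ i ∈ Finset.range j, padicValNat p (n - i) = if i = l then e else 0 := by
    intro i hi
    rw [Finset.mem_range] at hi
    by_cases hil : i = l
    · subst hil; rw [if_pos rfl, he]
    · rw [if_neg hil, val_n_sub hkp hn hl2 hpl (by omega) hil]
  rw [Finset.sum_congr rfl hterm, Finset.sum_ite_eq' (Finset.range j) l (fun _ => e)]
  simp [Finset.mem_range]

lemma val_choose_right {n k l e : ℕ} (hkp : k < p) (hn : k + 2 ≤ n)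
    (hl1 : 1 ≤ l) (hl2 : l < k) (hpl : p ∣ n - l) (he : e = padicValNat p (n - l))
    {j : ℕ} (hj : j ≤ k) :
    padicValNat p ((n - j - 1).choose (k - j)) = if j < l then e else 0 := by
  have hfac : padicValNat p (Nat.factorial (k - j)) = 0 :=
    padicValNat.eq_zero_of_not_dvd (fun hd => by
      have := (Nat.Prime.dvd_factorial hfp.out).1 hd
      omega)
  have hchoose_pos : (n - j - 1).choose (k - j) ≠ 0 := (Nat.choose_pos (by omega)).ne'
  have hdesc : (n - j - 1).descFactorial (k - j) = Nat.factorial (k - j) * (n - j - 1).choose (k - j) :=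
    Nat.descFactorial_eq_factorial_mul_choose _ _
  have hv : padicValNat p ((n - j - 1).descFactorial (k - j))
      = padicValNat p ((n - j - 1).choose (k - j)) := by
    rw [hdesc, padicValNat.mul (Nat.factorial_ne_zero _) hchoose_pos, hfac, zero_add]
  rw [← hv, Nat.descFactorial_eq_prod_range,
    padicValNat_prod (fun i hi => by
      rw [Finset.mem_range] at hi; omega)]
  have hterm : ∀ i ∈ Finset.range (k - j), padicValNat p (n - j - 1 - i)
      = if i = l - j - 1 ∧ j < l then e else 0 := by
    intro i hi
    rw [Finset.mem_range] at hi
    have hrw : n - j - 1 - i = n - (j + 1 + i) := by omega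
    by_cases hcase : i = l - j - 1 ∧ j < l
    · rw [if_pos hcase, hrw]
      have : j + 1 + i = l := by omega
      rw [this, he]
    · rw [if_neg hcase, hrw]
      exact val_n_sub hkp hn hl2 hpl (by omega) (by omega)
  rw [Finset.sum_congr rfl hterm]
  by_cases hjl : j < l
  · rw [if_pos hjl]
    have : ∀ i ∈ Finset.range (k - j), (if i = l - j - 1 ∧ j < l then e else 0)
        = if i = l - j - 1 then e else 0 := by
      intro i _
      by_cases hi : i = l - j - 1 <;> simp [hi, hjl]
    rw [Finset.sum_congr rfl this, Finset.sum_ite_eq' (Finset.range (k - j)) (l - j - 1) (fun _ => e)]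
    simp [Finset.mem_range]
    omega
  · rw [if_neg hjl]
    apply Finset.sum_eq_zero
    intro i _
    simp [hjl]

end NT

section FF

variable {p : ℕ} [hfp : Fact p.Prime]

lemma F_coeff (n k : ℕ) (a : ℕ → ℤ) (j : ℕ) :
    (F n k a).coeff j = if j < k + 1 then ((a j * c n k j : ℤ) : ℚ) else 0 := by
  unfold F
  rw [Polynomial.finset_sum_coeff]
  simp only [Polynomial.coeff_C_mul, Polynomial.coeff_X_pow, mul_ite, mul_one, mul_zero]
  rw [Finset.sum_ite_eq (Finset.range (k + 1)) j]
  simp [Finset.mem_range]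

lemma c_ne_zero {n k j : ℕ} (hn : k + 2 ≤ n) (hj : j ≤ k) : c n k j ≠ 0 := by
  unfold c
  have h1 : (0:ℕ) < n.choose j := Nat.choose_pos (by omega)
  have h2 : (0:ℕ) < (n - j - 1).choose (k - j) := Nat.choose_pos (by omega)
  have e1 : ((-1 : ℤ)) ^ (k - j) ≠ 0 := pow_ne_zero _ (by norm_num)
  have e2 : (n.choose j : ℤ) ≠ 0 := Int.natCast_ne_zero.2 h1.ne'
  have e3 : ((n - j - 1).choose (k - j) : ℤ) ≠ 0 := Int.natCast_ne_zero.2 h2.ne'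
  exact mul_ne_zero (mul_ne_zero e1 e2) e3

lemma F_support {n k : ℕ} {a : ℕ → ℤ} (hn : k + 2 ≤ n)
    (ha0 : ∀ j ≤ k, a j ≠ 0) (j : ℕ) :
    (F n k a).coeff j ≠ 0 ↔ j ≤ k := by
  rw [F_coeff]
  by_cases h : j < k + 1
  · rw [if_pos h]
    constructor
    · intro _; omega
    · intro hjk
      exact Int.cast_ne_zero.2 (mul_ne_zero (ha0 j hjk) (c_ne_zero hn hjk))
  · rw [if_neg h]
    simp
    omega

lemma F_natDegree {n k : ℕ} {a : ℕ → ℤ} (hn : k + 2 ≤ n) (ha0 : ∀ j ≤ k, a j ≠ 0) :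
    (F n k a).natDegree = k := by
  apply le_antisymm
  · rw [Polynomial.natDegree_le_iff_coeff_eq_zero]
    intro m hm
    rw [F_coeff, if_neg (by omega)]
  · exact Polynomial.le_natDegree_of_ne_zero ((F_support hn ha0 k).2 le_rfl)

lemma F_coeff_val {n k l e : ℕ} (a : ℕ → ℤ)
    (hkp : k < p) (hn : k + 2 ≤ n)
    (hl1 : 1 ≤ l) (hl2 : l < k) (hpl : p ∣ n - l) (he : e = padicValNat p (n - l))
    (ha : ∀ j ≤ k, a j ≠ 0 ∧ ∀ q : ℕ, q.Prime → (q : ℤ) ∣ a j → q ≤ k)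
    {j : ℕ} (hj : j ≤ k) :
    padicValRat p ((F n k a).coeff j) = if j = l then 0 else (e : ℤ) := by
  rw [F_coeff, if_pos (by omega)]
  have hanz := (ha j hj).1
  have hpa : ¬ (p : ℤ) ∣ a j := fun hdvd => by
    have := (ha j hj).2 p hfp.out hdvd
    omega
  have hcast : ((a j * c n k j : ℤ) : ℚ)
      = ((a j : ℤ) : ℚ) * (((-1 : ℚ)) ^ (k - j) * ((n.choose j : ℕ) : ℚ)
          * (((n - j - 1).choose (k - j) : ℕ) : ℚ)) := by
    unfold c; push_cast; ring
  have h1 : ((a j : ℤ) : ℚ) ≠ 0 := Int.cast_ne_zero.2 hanz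
  have h2 : ((-1 : ℚ)) ^ (k - j) ≠ 0 := pow_ne_zero _ (by norm_num)
  have h3 : ((n.choose j : ℕ) : ℚ) ≠ 0 := Nat.cast_ne_zero.2 (Nat.choose_pos (by omega)).ne'
  have h4 : (((n - j - 1).choose (k - j) : ℕ) : ℚ) ≠ 0 :=
    Nat.cast_ne_zero.2 (Nat.choose_pos (by omega)).ne'
  rw [hcast, padicValRat.mul h1 (mul_ne_zero (mul_ne_zero h2 h3) h4),
    padicValRat.mul (mul_ne_zero h2 h3) h4, padicValRat.mul h2 h3]
  have hva : padicValRat p ((a j : ℤ) : ℚ) = 0 := by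
    rw [padicValRat.of_int, padicValInt.eq_zero_of_not_dvd hpa]
    norm_num
  have hvsign : padicValRat p (((-1 : ℚ)) ^ (k - j)) = 0 := by
    rcases Nat.even_or_odd (k - j) with hev | hod
    · rw [hev.neg_one_pow, padicValRat.one]
    · rw [hod.neg_one_pow, padicValRat.neg, padicValRat.one]
  have hv1 : padicValRat p ((n.choose j : ℕ) : ℚ) = ((if l < j then e else 0 : ℕ) : ℤ) := by
    rw [padicValRat.of_nat, val_choose_left hkp hn hl2 hpl he hj]
  have hv2 : padicValRat p (((n - j - 1).choose (k - j) : ℕ) : ℚ)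
      = ((if j < l then e else 0 : ℕ) : ℤ) := by
    rw [padicValRat.of_nat, val_choose_right hkp hn hl1 hl2 hpl he hj]
  rw [hva, hvsign, hv1, hv2]
  split_ifs <;> omega

end FF

set_option maxHeartbeats 1000000 in
theorem F_no_factor_of_degree (n k : ℕ) (hk : k + 2 ≥ 4) (hn : n ≥ k + 2)
    (p : ℕ) (hp : p.Prime) (hpk : k < p)
    (l : ℕ) (hl1 : 1 ≤ l) (hl2 : l ≤ k - 1) (hpl : p ∣ (n - l))
    (e : ℕ) (he : e = padicValNat p (n - l))
    (hd : Nat.gcd e l ≤ 2) (hd' : Nat.gcd e (k - l) ≤ 2)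
    (l₁ : ℕ) (hl₁ : 0 < l₁) (hl₁k : 2 * l₁ < k)
    (hnotin : l ∉ ({l₁, 2 * l₁, k - l₁, k - 2 * l₁} : Set ℕ))
    (a : ℕ → ℤ) (ha : ∀ j ≤ k, a j ≠ 0 ∧ ∀ q : ℕ, q.Prime → (q : ℤ) ∣ a j → q ≤ k) :
    ¬∃ g : Polynomial ℚ, g ∣ F n k a ∧ g.natDegree = l₁ := by
  haveI : Fact p.Prime := ⟨hp⟩
  rintro ⟨g, ⟨q, hFeq⟩, hgdeg⟩
  simp only [Set.mem_insert_iff, Set.mem_singleton_iff, not_or] at hnotin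
  obtain ⟨hne1, hne2, hne3, hne4⟩ := hnotin
  have hk2 : 2 ≤ k := by omega
  have hlk : l < k := by omega
  have ha0 : ∀ j ≤ k, a j ≠ 0 := fun j hj => (ha j hj).1
  have hF0 : F n k a ≠ 0 := fun h0 => ((F_support hn ha0 k).2 le_rfl) (by rw [h0]; simp)
  have hg0 : g ≠ 0 := fun h0 => hF0 (by rw [hFeq, h0, zero_mul])
  have hq0 : q ≠ 0 := fun h0 => hF0 (by rw [hFeq, h0, mul_zero])
  have hdegF : (F n k a).natDegree = k := F_natDegree hn ha0
  have hdegs : g.natDegree + q.natDegree = k := by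
    rw [← hdegF, hFeq, Polynomial.natDegree_mul hg0 hq0]
  have hdegq : q.natDegree = k - l₁ := by omega
  have hnl0 : 0 < n - l := by omega
  have he1 : 1 ≤ e := by rw [he]; exact one_le_padicValNat_of_dvd hnl0.ne' hpl
  -- slopes
  set β : ℚ := (e : ℚ) / (l : ℚ) with hβ
  set α : ℚ := -((e : ℚ) / ((k : ℚ) - (l : ℚ))) with hα
  clear_value β α
  have hlq : (0 : ℚ) < (l : ℚ) := by exact_mod_cast hl1
  have hklq : (0 : ℚ) < (k : ℚ) - (l : ℚ) := by
    have : (l : ℚ) < (k : ℚ) := by exact_mod_cast hlk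
    linarith
  have heq : (0 : ℚ) < (e : ℚ) := by exact_mod_cast he1
  have hβpos : 0 < β := by rw [hβ]; exact div_pos heq hlq
  have hαneg : α < 0 := by
    have := div_pos heq hklq
    rw [hα]; linarith
  have hαβ : α < β := by linarith
  have hβl : β * (l : ℚ) = e := by rw [hβ]; exact div_mul_cancel₀ _ (ne_of_gt hlq)
  -- support and valuations of F
  have hsuppF : ∀ j : ℕ, j ∈ (F n k a).support ↔ j ≤ k := fun j => by
    rw [Polynomial.mem_support_iff]; exact F_support hn ha0 j
  have hvRF : ∀ j, j ≤ k → vR p ((F n k a).coeff j) = if j = l then (0 : ℚ) else (e : ℚ) := by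
    intro j hj
    unfold vR
    rw [F_coeff_val a hpk hn hl1 hlk hpl he ha hj]
    split_ifs <;> simp
  have hnpfF : ∀ (μ : ℚ) (j : ℕ), j ≤ k →
      npf p μ (F n k a) j = (if j = l then (0 : ℚ) else (e : ℚ)) + μ * j := by
    intro μ j hj
    unfold npf
    rw [hvRF j hj]
  -- (A) slope β facts
  have hWβ : Wmin p β (F n k a) = (e : ℚ) := by
    apply le_antisymm
    · have h0supp : (0 : ℕ) ∈ (F n k a).support := (hsuppF 0).2 (by omega)
      have h0 := Wmin_le (p := p) (μ := β) h0supp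
      rw [hnpfF β 0 (by omega), if_neg (by omega : ¬ (0 : ℕ) = l)] at h0
      simpa using h0
    · have hmem := Smin_mem_support (p := p) (μ := β) hF0
      have hjk : Smin p β (F n k a) ≤ k := (hsuppF _).1 hmem
      have hval := npf_Smin (p := p) (μ := β) hF0
      rw [hnpfF β _ hjk] at hval
      rw [← hval]
      by_cases hcase : Smin p β (F n k a) = l
      · rw [if_pos hcase, hcase, hβl]; simp
      · rw [if_neg hcase]
        have : 0 ≤ β * (Smin p β (F n k a) : ℚ) := by positivity
        linarith
  have hachβ : ∀ j, j ≤ k → npf p β (F n k a) j = Wmin p β (F n k a) → j = 0 ∨ j = l := by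
    intro j hjk hach
    rw [hWβ, hnpfF β j hjk] at hach
    by_cases hcase : j = l
    · right; exact hcase
    · left
      rw [if_neg hcase] at hach
      have h0 : β * (j : ℚ) = 0 := by linarith
      have := (mul_eq_zero.1 h0).resolve_left (ne_of_gt hβpos)
      exact_mod_cast this
  have hSminβF : Smin p β (F n k a) = 0 := by
    have h0ach : (0 : ℕ) ∈ achievers p β (F n k a) := mem_achievers.2
      ⟨(hsuppF 0).2 (by omega), by
        rw [hnpfF β 0 (by omega), hWβ, if_neg (by omega : ¬ (0 : ℕ) = l)]
        norm_num⟩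
    have := Smin_le (p := p) hF0 h0ach
    omega
  have hSmaxβF : Smax p β (F n k a) = l := by
    have hlach : l ∈ achievers p β (F n k a) := mem_achievers.2
      ⟨(hsuppF l).2 (by omega), by
        rw [hnpfF β l (by omega), hWβ, if_pos rfl, hβl]
        ring⟩
    have h1 := le_Smax (p := p) hF0 hlach
    have h2 := hachβ _ ((hsuppF _).1 (Smax_mem_support (p := p) hF0)) (npf_Smax (p := p) hF0)
    omega
  -- (B) slope α facts
  have hid : ∀ j : ℕ, (e : ℚ) + α * j - α * l = (e : ℚ) * ((k : ℚ) - j) / ((k : ℚ) - l) := by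
    intro j
    rw [hα]
    field_simp
    ring
  have hWα : Wmin p α (F n k a) = α * l := by
    apply le_antisymm
    · have hlsupp : l ∈ (F n k a).support := (hsuppF l).2 (by omega)
      have h0 := Wmin_le (p := p) (μ := α) hlsupp
      rw [hnpfF α l (by omega)] at h0
      simpa using h0
    · have hmem := Smin_mem_support (p := p) (μ := α) hF0
      have hjk : Smin p α (F n k a) ≤ k := (hsuppF _).1 hmem
      have hval := npf_Smin (p := p) (μ := α) hF0
      rw [hnpfF α _ hjk] at hval
      rw [← hval]
      by_cases hcase : Smin p α (F n k a) = l
      · rw [if_pos hcase, hcase]; simp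
      · rw [if_neg hcase]
        have hj : ((Smin p α (F n k a) : ℚ)) ≤ (k : ℚ) := by exact_mod_cast hjk
        have hge : 0 ≤ (e : ℚ) * ((k : ℚ) - (Smin p α (F n k a) : ℚ)) / ((k : ℚ) - l) :=
          div_nonneg (mul_nonneg heq.le (by linarith)) hklq.le
        have := hid (Smin p α (F n k a))
        linarith
  have hachα : ∀ j, j ≤ k → npf p α (F n k a) j = Wmin p α (F n k a) → j = l ∨ j = k := by
    intro j hjk hach
    rw [hWα, hnpfF α j hjk] at hach
    by_cases hcase : j = l
    · left; exact hcase
    · right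
      rw [if_neg hcase] at hach
      have h0 : (e : ℚ) * ((k : ℚ) - j) / ((k : ℚ) - l) = 0 := by
        have := hid j
        linarith
      rcases div_eq_zero_iff.1 h0 with h1 | h1
      · rcases mul_eq_zero.1 h1 with h2 | h2
        · exact absurd h2 (ne_of_gt heq)
        · have : (j : ℚ) = (k : ℚ) := by linarith
          exact_mod_cast this
      · exact absurd h1 (ne_of_gt hklq)
  have hSminαF : Smin p α (F n k a) = l := by
    have hlach : l ∈ achievers p α (F n k a) := mem_achievers.2
      ⟨(hsuppF l).2 (by omega), by rw [hnpfF α l (by omega), hWα]; simp⟩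
    have h1 := Smin_le (p := p) hF0 hlach
    have h2 := hachα _ ((hsuppF _).1 (Smin_mem_support (p := p) hF0)) (npf_Smin (p := p) hF0)
    omega
  have hSmaxαF : Smax p α (F n k a) = k := by
    have hkach : k ∈ achievers p α (F n k a) := mem_achievers.2
      ⟨(hsuppF k).2 le_rfl, by
        rw [hnpfF α k le_rfl, hWα, if_neg (by omega : ¬ k = l)]
        have := hid k
        have hkk : (e : ℚ) * ((k : ℚ) - (k : ℚ)) / ((k : ℚ) - l) = 0 := by
          rw [sub_self, mul_zero, zero_div]
        linarith⟩
    have h1 := le_Smax (p := p) hF0 hkach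
    have h2 := (hsuppF _).1 (Smax_mem_support (p := p) (μ := α) hF0)
    omega
  -- (C) unique achiever on the open interval
  have hCuniq : ∀ μ : ℚ, α < μ → μ < β →
      Smin p μ (F n k a) = l ∧ Smax p μ (F n k a) = l := by
    intro μ hμ1 hμ2
    have hstrict : ∀ j, j ≤ k → j ≠ l →
        npf p μ (F n k a) l < npf p μ (F n k a) j := by
      intro j hjk hjl
      rw [hnpfF μ l (by omega), hnpfF μ j hjk, if_pos rfl, if_neg hjl]
      rcases lt_or_gt_of_ne hjl with hlt | hgt
      · -- j < l
        have hpos : (0 : ℚ) < (l : ℚ) - j := by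
          have : (j : ℚ) < (l : ℚ) := by exact_mod_cast hlt
          linarith
        have c1 : μ * ((l : ℚ) - j) < β * ((l : ℚ) - j) :=
          mul_lt_mul_of_pos_right hμ2 hpos
        have c2 : β * ((l : ℚ) - j) ≤ β * (l : ℚ) := by
          have hj0 : (0 : ℚ) ≤ (j : ℚ) := by positivity
          nlinarith
        have c0 : μ * ((l : ℚ) - j) = μ * l - μ * j := by ring
        linarith
      · -- l < j
        have hpos : (0 : ℚ) < (j : ℚ) - l := by
          have : (l : ℚ) < (j : ℚ) := by exact_mod_cast hgt
          linarith
        have c1 : α * ((j : ℚ) - l) < μ * ((j : ℚ) - l) :=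
          mul_lt_mul_of_pos_right hμ1 hpos
        have c2 : ((e : ℚ) / ((k : ℚ) - l)) * ((j : ℚ) - l) ≤ (e : ℚ) := by
          rw [div_mul_eq_mul_div, div_le_iff₀ hklq]
          have hj : (j : ℚ) ≤ (k : ℚ) := by exact_mod_cast hjk
          nlinarith
        have r1 : μ * ((j : ℚ) - l) = μ * j - μ * l := by ring
        have r2 : α * ((j : ℚ) - l) = -(((e : ℚ) / ((k : ℚ) - l)) * ((j : ℚ) - l)) := by
          rw [hα]; ring
        linarith
    have hWμ : Wmin p μ (F n k a) = npf p μ (F n k a) l := by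
      apply le_antisymm
      · exact Wmin_le ((hsuppF l).2 (by omega))
      · have hjk := (hsuppF _).1 (Smin_mem_support (p := p) (μ := μ) hF0)
        by_cases hc : Smin p μ (F n k a) = l
        · rw [← npf_Smin (p := p) (μ := μ) hF0, hc]
        · have := hstrict _ hjk hc
          rw [npf_Smin (p := p) (μ := μ) hF0] at this
          exact this.le
    have hachμ : ∀ j, j ∈ achievers p μ (F n k a) → j = l := by
      intro j hj
      obtain ⟨hjs, hjv⟩ := mem_achievers.1 hj
      by_contra hc
      have := hstrict j ((hsuppF j).1 hjs) hc
      rw [hjv, hWμ] at this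
      exact lt_irrefl _ this
    exact ⟨hachμ _ (Smin_mem (p := p) hF0), hachμ _ (Smax_mem (p := p) hF0)⟩
  -- additivity
  have hadd : ∀ μ : ℚ,
      Smax p μ (F n k a) = Smax p μ g + Smax p μ q ∧
      Smin p μ (F n k a) = Smin p μ g + Smin p μ q := by
    intro μ
    obtain ⟨-, h1, h2⟩ := NP_mul (p := p) (μ := μ) hg0 hq0
    rw [← hFeq] at h1 h2
    exact ⟨h1, h2⟩
  -- uniqueness for g on the interval
  have hu_g : ∀ μ : ℚ, α < μ → μ < β → Smin p μ g = Smax p μ g := by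
    intro μ h1 h2
    obtain ⟨hmax, hmin⟩ := hadd μ
    obtain ⟨hu1, hu2⟩ := hCuniq μ h1 h2
    have g1 := Smin_le_Smax (p := p) (μ := μ) hg0
    have g2 := Smin_le_Smax (p := p) (μ := μ) hq0
    omega
  -- constancy of Smax g on the interval
  have hmid1 : α < (α + β) / 2 := by linarith
  have hmid2 : (α + β) / 2 < β := by linarith
  set m : ℕ := Smax p ((α + β) / 2) g with hm
  have hconst := Smax_constant (p := p) hg0 hu_g
  have hm_const : ∀ μ : ℚ, α < μ → μ < β → Smax p μ g = m := by
    intro μ h1 h2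
    rcases lt_trichotomy μ ((α + β) / 2) with hc | hc | hc
    · exact hconst μ ((α + β) / 2) h1 hc hmid2
    · rw [hc]
    · exact (hconst ((α + β) / 2) μ hmid1 hc h2).symm
  have hmsupp : m ∈ g.support := Smax_mem_support (p := p) hg0
  -- endpoint achievement of m
  have hend : ∀ j ∈ g.support,
      npf p β g m ≤ npf p β g j ∧ npf p α g m ≤ npf p α g j := by
    intro j hj
    have hall : ∀ μ : ℚ, α < μ → μ < β →
        0 ≤ (vR p (g.coeff j) - vR p (g.coeff m)) + μ * ((j : ℚ) - m) := by
      intro μ h1 h2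
      have h3 : npf p μ g m ≤ npf p μ g j := by
        have h4 := npf_Smax (p := p) (μ := μ) hg0
        rw [hm_const μ h1 h2] at h4
        rw [h4]
        exact Wmin_le hj
      unfold npf at h3
      have r : μ * ((j : ℚ) - m) = μ * j - μ * m := by ring
      linarith
    obtain ⟨hb, hc⟩ := linear_endpoint' hαβ hall
    constructor
    · unfold npf
      have r : β * ((j : ℚ) - m) = β * j - β * m := by ring
      linarith
    · unfold npf
      have r : α * ((j : ℚ) - m) = α * j - α * m := by ring
      linarith
  have hmβ : m ∈ achievers p β g := by
    refine mem_achievers.2 ⟨hmsupp, le_antisymm ?_ (Wmin_le hmsupp)⟩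
    rw [← npf_Smin (p := p) (μ := β) hg0]
    exact (hend _ (Smin_mem_support (p := p) hg0)).1
  have hmα : m ∈ achievers p α g := by
    refine mem_achievers.2 ⟨hmsupp, le_antisymm ?_ (Wmin_le hmsupp)⟩
    rw [← npf_Smin (p := p) (μ := α) hg0]
    exact (hend _ (Smin_mem_support (p := p) hg0)).2
  -- the key indices
  set s : ℕ := Smax p β g with hs
  set s₂ : ℕ := Smin p α g with hs₂
  have hss2 : s ≤ s₂ := Smax_le_Smin_of_lt (p := p) hg0 hαβ
  have hms : m ≤ s := le_Smax (p := p) hg0 hmβ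
  have hs2m : s₂ ≤ m := Smin_le (p := p) hg0 hmα
  have hseq : s = s₂ := by omega
  -- numeric relations from additivity
  have haddβ := hadd β
  have haddα := hadd α
  have hSmingβ : Smin p β g = 0 := by
    have := haddβ.2
    rw [hSminβF] at this
    omega
  have hsl : s ≤ l := by
    have := haddβ.1
    rw [hSmaxβF] at this
    omega
  have hSmaxαg : Smax p α g = l₁ := by
    have h1 := haddα.1
    rw [hSmaxαF] at h1
    have h2 : Smax p α g ≤ g.natDegree := Smax_le_natDegree (p := p) hg0
    have h3 : Smax p α q ≤ q.natDegree := Smax_le_natDegree (p := p) hq0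
    omega
  have hs2l1 : s₂ ≤ l₁ := by
    have := Smin_le_Smax (p := p) (μ := α) hg0
    rw [hSmaxαg] at this
    omega
  have hsl2 : s₂ ≤ l := by
    have := haddα.2
    rw [hSminαF] at this
    omega
  set t : ℕ := l₁ - s₂ with ht
  have hst : s + t = l₁ := by omega
  have htkl : t ≤ k - l := by
    have h1 := haddα.2
    rw [hSminαF] at h1
    have h2 := Smin_le_Smax (p := p) (μ := α) hq0
    have h3 : Smax p α q ≤ q.natDegree := Smax_le_natDegree (p := p) hq0
    omega
  -- divisibility 1 : l ∣ e * s
  have hdiv1 : l ∣ e * s := by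
    have h0ach : npf p β g 0 = Wmin p β g := by
      rw [← hSmingβ]
      exact npf_Smin (p := p) (μ := β) hg0
    have hsach : npf p β g s = Wmin p β g := npf_Smax (p := p) (μ := β) hg0
    have heq2 : vR p (g.coeff 0) = vR p (g.coeff s) + β * s := by
      unfold npf at h0ach hsach
      simp only [Nat.cast_zero, mul_zero, add_zero] at h0ach
      linarith
    set V0 : ℤ := padicValRat p (g.coeff 0) with hV0
    set Vs : ℤ := padicValRat p (g.coeff s) with hVs
    have hx : (e : ℚ) / l * s = (V0 : ℚ) - Vs := by
      have : vR p (g.coeff 0) = (V0 : ℚ) := rfl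
      have h2 : vR p (g.coeff s) = (Vs : ℚ) := rfl
      rw [this, h2] at heq2
      rw [← hβ]
      linarith
    have hy : (e : ℚ) * s = ((V0 : ℚ) - Vs) * l := by
      rw [← hx]
      field_simp
    have hz : (e * s : ℤ) = (V0 - Vs) * l := by exact_mod_cast hy
    have hzz : (l : ℤ) ∣ (e * s : ℤ) := ⟨V0 - Vs, by linarith⟩
    exact_mod_cast hzz
  -- divisibility 2 : (k - l) ∣ e * t
  have hdiv2 : (k - l) ∣ e * t := by
    have hl1ach : npf p α g l₁ = Wmin p α g := by
      rw [← hSmaxαg]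
      exact npf_Smax (p := p) (μ := α) hg0
    have hs2ach : npf p α g s₂ = Wmin p α g := npf_Smin (p := p) (μ := α) hg0
    set V1 : ℤ := padicValRat p (g.coeff l₁) with hV1
    set V2 : ℤ := padicValRat p (g.coeff s₂) with hV2
    have heq2 : (V1 : ℚ) + α * l₁ = (V2 : ℚ) + α * s₂ := by
      unfold npf at hl1ach hs2ach
      have e1 : vR p (g.coeff l₁) = (V1 : ℚ) := rfl
      have e2 : vR p (g.coeff s₂) = (V2 : ℚ) := rfl
      rw [e1] at hl1ach
      rw [e2] at hs2ach
      linarith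
    have htq : (l₁ : ℚ) - s₂ = (t : ℚ) := by
      have : l₁ = s₂ + t := by omega
      rw [this]
      push_cast
      ring
    have hx : (e : ℚ) / ((k : ℚ) - l) * t = (V1 : ℚ) - V2 := by
      rw [← htq]
      have hαexp : α * l₁ - α * s₂ = -(((e : ℚ) / ((k : ℚ) - l)) * ((l₁ : ℚ) - s₂)) := by
        rw [hα]; ring
      linarith
    have hy : (e : ℚ) * t = ((V1 : ℚ) - V2) * ((k : ℚ) - l) := by
      rw [← hx]
      field_simp
    have hklcast : ((k - l : ℕ) : ℚ) = (k : ℚ) - l := by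
      push_cast [Nat.cast_sub hlk.le]
      ring
    have hz : (e * t : ℤ) = (V1 - V2) * ((k - l : ℕ) : ℤ) := by
      have : (e : ℚ) * t = ((V1 : ℚ) - V2) * ((k - l : ℕ) : ℚ) := by rw [hklcast]; exact hy
      exact_mod_cast this
    have hzz : ((k - l : ℕ) : ℤ) ∣ (e * t : ℤ) := ⟨V1 - V2, by linarith⟩
    exact_mod_cast hzz
  -- from gcd conditions : l ∣ 2s and (k-l) ∣ 2t
  have hgcd_step : ∀ x y w : ℕ, 0 < y → Nat.gcd x y ≤ 2 → y ∣ x * w → y ∣ 2 * w := by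
    intro x y w hy hg hdvd
    have hgpos : 0 < Nat.gcd x y := Nat.gcd_pos_of_pos_right x hy
    set d := Nat.gcd x y with hdd
    have hdy : d ∣ y := Nat.gcd_dvd_right x y
    have hdx : d ∣ x := Nat.gcd_dvd_left x y
    have hco : Nat.Coprime (x / d) (y / d) := Nat.coprime_div_gcd_div_gcd hgpos
    have h1 : d * (y / d) = y := Nat.mul_div_cancel' hdy
    have h2 : d * (x / d) = x := Nat.mul_div_cancel' hdx
    have h3 : d * (y / d) ∣ d * ((x / d) * w) := by
      rw [h1, ← mul_assoc, h2]; exact hdvd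
    have h4 : (y / d) ∣ (x / d) * w := (mul_dvd_mul_iff_left (by omega : d ≠ 0)).1 h3
    have h5 : (y / d) ∣ w := (Nat.Coprime.dvd_of_dvd_mul_left hco.symm h4)
    have h6 : d ∣ 2 := by
      have : d = 1 ∨ d = 2 := by omega
      rcases this with h | h <;> simp [h]
    have := mul_dvd_mul h6 h5
    rwa [h1] at this
  have hdvd2s : l ∣ 2 * s := hgcd_step e l s (by omega) hd hdiv1
  have hdvd2t : (k - l) ∣ 2 * t := hgcd_step e (k - l) t (by omega) hd' hdiv2
  -- final contradiction
  obtain ⟨u, hu⟩ := hdvd2s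
  obtain ⟨v, hv⟩ := hdvd2t
  have hu2 : u ≤ 2 := by
    have h2 : l * u ≤ l * 2 := by
      rw [← hu]; omega
    exact Nat.le_of_mul_le_mul_left h2 (by omega)
  have hv2 : v ≤ 2 := by
    have h2 : (k - l) * v ≤ (k - l) * 2 := by
      rw [← hv]; omega
    exact Nat.le_of_mul_le_mul_left h2 (by omega)
  interval_cases u <;> interval_cases v <;> omega
end

section
/- Let n, k be positive integers with n ≥ k+2 ≥ 4. Suppose there exists a prime p > k such that p^e exactly divides n−l for some l with 1 ≤ l ≤ k−1 (i.e., e = ord_p(n−l) ≥ 1), and that gcd(e, l) = 1 and gcd(e, k−l) = 1. Then F_{n,k}(x) factors over the p-adic field ℚ_p as (a unit multiple of) a product of two non-associate irreducible polynomials, one of degree l and the other of degree k−l. -/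
open Polynomial

/-- `F n k a = ∑_{j=0}^{k} a_j c_j x^j` as a polynomial over the `p`-adic field `ℚ_p`. -/
noncomputable def Fp (p : ℕ) [Fact p.Prime] (n k : ℕ) (a : ℕ → ℤ) : Polynomial ℚ_[p] :=
  ∑ j ∈ Finset.range (k + 1), Polynomial.C ((a j * c n k j : ℤ) : ℚ_[p]) * Polynomial.X ^ j


namespace NPG

variable {p : ℕ} [Fact p.Prime]

lemma norm_sum_le_of_le {ι : Type*} {s : Finset ι} {h : ι → ℚ_[p]} {C : ℝ}
    (hC : 0 ≤ C) (H : ∀ i ∈ s, ‖h i‖ ≤ C) : ‖∑ i ∈ s, h i‖ ≤ C := by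
  classical
  induction s using Finset.cons_induction with
  | empty => simpa using hC
  | cons a s ha ih =>
    rw [Finset.sum_cons]
    refine le_trans (Padic.nonarchimedean _ _) (max_le (H a (Finset.mem_cons_self _ _))
      (ih fun i hi => H i (Finset.mem_cons.2 (Or.inr hi))))

lemma norm_sum_lt_of_lt {ι : Type*} {s : Finset ι} {h : ι → ℚ_[p]} {C : ℝ}
    (hC : 0 < C) (H : ∀ i ∈ s, ‖h i‖ < C) : ‖∑ i ∈ s, h i‖ < C := by
  classical
  induction s using Finset.cons_induction with
  | empty => simpa using hC
  | cons a s ha ih =>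
    rw [Finset.sum_cons]
    refine lt_of_le_of_lt (Padic.nonarchimedean _ _) (max_lt (H a (Finset.mem_cons_self _ _))
      (ih fun i hi => H i (Finset.mem_cons.2 (Or.inr hi))))

lemma val_le_val_iff {x y : ℚ_[p]} (hx : x ≠ 0) (hy : y ≠ 0) :
    x.valuation ≤ y.valuation ↔ ‖y‖ ≤ ‖x‖ := by
  rw [Padic.norm_eq_zpow_neg_valuation hx, Padic.norm_eq_zpow_neg_valuation hy]
  have hp1 : (1:ℝ) < (p:ℝ) := by exact_mod_cast (Fact.out : p.Prime).one_lt
  rw [zpow_le_zpow_iff_right₀ hp1, neg_le_neg_iff]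

lemma val_lt_val_iff {x y : ℚ_[p]} (hx : x ≠ 0) (hy : y ≠ 0) :
    x.valuation < y.valuation ↔ ‖y‖ < ‖x‖ := by
  rw [Padic.norm_eq_zpow_neg_valuation hx, Padic.norm_eq_zpow_neg_valuation hy]
  have hp1 : (1:ℝ) < (p:ℝ) := by exact_mod_cast (Fact.out : p.Prime).one_lt
  rw [zpow_lt_zpow_iff_right₀ hp1, neg_lt_neg_iff]

lemma val_eq_of_norm_eq {x y : ℚ_[p]} (hx : x ≠ 0) (hy : y ≠ 0) (h : ‖x‖ = ‖y‖) :
    x.valuation = y.valuation :=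
  le_antisymm ((val_le_val_iff hx hy).2 h.ge) ((val_le_val_iff hy hx).2 h.le)

/-- A finite sum with a unique term of strictly minimal valuation is nonzero,
with valuation equal to that of the minimal term. -/
lemma val_sum_unique_min {ι : Type*} [DecidableEq ι] {s : Finset ι} {h : ι → ℚ_[p]} {i₀ : ι}
    (hi₀ : i₀ ∈ s) (h0 : h i₀ ≠ 0)
    (H : ∀ i ∈ s, i ≠ i₀ → h i ≠ 0 → (h i₀).valuation < (h i).valuation) :
    (∑ i ∈ s, h i) ≠ 0 ∧ (∑ i ∈ s, h i).valuation = (h i₀).valuation := by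
  have hrest : ‖∑ i ∈ s.erase i₀, h i‖ < ‖h i₀‖ := by
    refine norm_sum_lt_of_lt (norm_pos_iff.2 h0) fun i hi => ?_
    by_cases hz : h i = 0
    · rw [hz, norm_zero]; exact norm_pos_iff.2 h0
    · exact (val_lt_val_iff h0 hz).1
        (H i (Finset.mem_of_mem_erase hi) (Finset.ne_of_mem_erase hi) hz)
  have hsum : ∑ i ∈ s, h i = h i₀ + ∑ i ∈ s.erase i₀, h i := (Finset.add_sum_erase s h hi₀).symm
  have hnorm : ‖∑ i ∈ s, h i‖ = ‖h i₀‖ := by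
    rw [hsum, Padic.add_eq_max_of_ne (ne_of_gt hrest), max_eq_left hrest.le]
  have hne : (∑ i ∈ s, h i) ≠ 0 := by
    rw [← norm_pos_iff, hnorm]; exact norm_pos_iff.2 h0
  exact ⟨hne, val_eq_of_norm_eq hne h0 hnorm⟩

/-- valuation of a sum is at least the min of valuations of terms. -/
lemma val_sum_ge {ι : Type*} {s : Finset ι} {h : ι → ℚ_[p]} {c : ℤ}
    (H : ∀ i ∈ s, h i ≠ 0 → c ≤ (h i).valuation) (hs : (∑ i ∈ s, h i) ≠ 0) :
    c ≤ (∑ i ∈ s, h i).valuation := by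
  classical
  induction s using Finset.cons_induction with
  | empty => simp at hs
  | cons a s ha ih =>
    rw [Finset.sum_cons] at hs ⊢
    by_cases hza : h a = 0
    · rw [hza, zero_add] at hs ⊢
      exact ih (fun i hi => H i (Finset.mem_cons.2 (Or.inr hi))) hs
    by_cases hzs : (∑ i ∈ s, h i) = 0
    · rw [hzs, add_zero]; exact H a (Finset.mem_cons_self _ _) hza
    refine le_trans (le_min (H a (Finset.mem_cons_self _ _) hza)
      (ih (fun i hi => H i (Finset.mem_cons.2 (Or.inr hi))) hzs)) ?_
    exact Padic.le_valuation_add hs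

section Weight

/-- weight of the `j`-th coefficient, for slope parameters `m` (scale) and `t`. -/
noncomputable def w (m t : ℤ) (f : Polynomial ℚ_[p]) (j : ℕ) : ℤ := m * (f.coeff j).valuation + t * j

variable (m t : ℤ)

open scoped Classical in
noncomputable def gmin (f : Polynomial ℚ_[p]) : ℤ :=
  if hf : f = 0 then 0
  else (f.support.image (w m t f)).min'
    ((Polynomial.support_nonempty.mpr hf).image _)

lemma gmin_le {f : Polynomial ℚ_[p]} {j : ℕ} (hj : f.coeff j ≠ 0) :
    gmin m t f ≤ w m t f j := by
  have hf : f ≠ 0 := fun h => hj (by simp [h])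
  rw [gmin, dif_neg hf]
  exact Finset.min'_le _ _ (Finset.mem_image_of_mem _ (Polynomial.mem_support_iff.2 hj))

lemma exists_gmin {f : Polynomial ℚ_[p]} (hf : f ≠ 0) :
    ∃ j, f.coeff j ≠ 0 ∧ w m t f j = gmin m t f := by
  have := Finset.min'_mem (f.support.image (w m t f))
    ((Polynomial.support_nonempty.mpr hf).image _)
  obtain ⟨j, hj, hjeq⟩ := Finset.mem_image.1 this
  exact ⟨j, Polynomial.mem_support_iff.1 hj, by rw [gmin, dif_neg hf]; exact hjeq⟩

noncomputable def maxA (f : Polynomial ℚ_[p]) (hf : f ≠ 0) : ℕ :=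
  (f.support.filter (fun j => w m t f j = gmin m t f)).max'
    (by obtain ⟨j, h1, h2⟩ := exists_gmin m t hf
        exact ⟨j, Finset.mem_filter.2 ⟨Polynomial.mem_support_iff.2 h1, h2⟩⟩)

noncomputable def minA (f : Polynomial ℚ_[p]) (hf : f ≠ 0) : ℕ :=
  (f.support.filter (fun j => w m t f j = gmin m t f)).min'
    (by obtain ⟨j, h1, h2⟩ := exists_gmin m t hf
        exact ⟨j, Finset.mem_filter.2 ⟨Polynomial.mem_support_iff.2 h1, h2⟩⟩)

lemma maxA_spec {f : Polynomial ℚ_[p]} (hf : f ≠ 0) :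
    f.coeff (maxA m t f hf) ≠ 0 ∧ w m t f (maxA m t f hf) = gmin m t f := by
  have := Finset.max'_mem (f.support.filter (fun j => w m t f j = gmin m t f))
    (by obtain ⟨j, h1, h2⟩ := exists_gmin m t hf
        exact ⟨j, Finset.mem_filter.2 ⟨Polynomial.mem_support_iff.2 h1, h2⟩⟩)
  rw [Finset.mem_filter] at this
  exact ⟨Polynomial.mem_support_iff.1 this.1, this.2⟩

lemma minA_spec {f : Polynomial ℚ_[p]} (hf : f ≠ 0) :
    f.coeff (minA m t f hf) ≠ 0 ∧ w m t f (minA m t f hf) = gmin m t f := by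
  have := Finset.min'_mem (f.support.filter (fun j => w m t f j = gmin m t f))
    (by obtain ⟨j, h1, h2⟩ := exists_gmin m t hf
        exact ⟨j, Finset.mem_filter.2 ⟨Polynomial.mem_support_iff.2 h1, h2⟩⟩)
  rw [Finset.mem_filter] at this
  exact ⟨Polynomial.mem_support_iff.1 this.1, this.2⟩

lemma le_maxA {f : Polynomial ℚ_[p]} (hf : f ≠ 0) {j : ℕ}
    (hj : f.coeff j ≠ 0) (hw : w m t f j = gmin m t f) : j ≤ maxA m t f hf :=
  Finset.le_max' _ _ (Finset.mem_filter.2 ⟨Polynomial.mem_support_iff.2 hj, hw⟩)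

lemma minA_le {f : Polynomial ℚ_[p]} (hf : f ≠ 0) {j : ℕ}
    (hj : f.coeff j ≠ 0) (hw : w m t f j = gmin m t f) : minA m t f hf ≤ j :=
  Finset.min'_le _ _ (Finset.mem_filter.2 ⟨Polynomial.mem_support_iff.2 hj, hw⟩)

lemma maxA_le_natDegree {f : Polynomial ℚ_[p]} (hf : f ≠ 0) :
    maxA m t f hf ≤ f.natDegree :=
  Polynomial.le_natDegree_of_ne_zero (maxA_spec m t hf).1

/-- strict weight inequality above `maxA` -/
lemma w_gt_of_maxA_lt {f : Polynomial ℚ_[p]} (hf : f ≠ 0) {j : ℕ}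
    (hj : f.coeff j ≠ 0) (h : maxA m t f hf < j) : gmin m t f < w m t f j := by
  rcases lt_or_eq_of_le (gmin_le m t hj) with h' | h'
  · exact h'
  · exact absurd (le_maxA m t hf hj h'.symm) (not_le.2 h)

lemma w_gt_of_lt_minA {f : Polynomial ℚ_[p]} (hf : f ≠ 0) {j : ℕ}
    (hj : f.coeff j ≠ 0) (h : j < minA m t f hf) : gmin m t f < w m t f j := by
  rcases lt_or_eq_of_le (gmin_le m t hj) with h' | h'
  · exact h'
  · exact absurd (minA_le m t hf hj h'.symm) (not_le.2 h)

end Weight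

end NPG

namespace NPGmul

open NPG

variable {p : ℕ} [Fact p.Prime] {m t : ℤ}

lemma val_sum_ge' {ι : Type*} {s : Finset ι} {h : ι → ℚ_[p]} {c : ℤ} (hm : 0 < m)
    (H : ∀ i ∈ s, h i ≠ 0 → c ≤ m * (h i).valuation) (hs : (∑ i ∈ s, h i) ≠ 0) :
    c ≤ m * (∑ i ∈ s, h i).valuation := by
  classical
  induction s using Finset.cons_induction with
  | empty => simp at hs
  | cons a s ha ih =>
    rw [Finset.sum_cons] at hs ⊢
    by_cases hza : h a = 0
    · rw [hza, zero_add] at hs ⊢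
      exact ih (fun i hi => H i (Finset.mem_cons.2 (Or.inr hi))) hs
    by_cases hzs : (∑ i ∈ s, h i) = 0
    · rw [hzs, add_zero]; exact H a (Finset.mem_cons_self _ _) hza
    have h1 := Padic.le_valuation_add hs
    have h2 : min ((h a).valuation) ((∑ i ∈ s, h i).valuation)
        = (h a).valuation ∨ min ((h a).valuation) ((∑ i ∈ s, h i).valuation)
        = (∑ i ∈ s, h i).valuation := min_choice _ _
    have h3 : c ≤ m * min ((h a).valuation) ((∑ i ∈ s, h i).valuation) := by
      rcases h2 with h2 | h2 <;> rw [h2]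
      · exact H a (Finset.mem_cons_self _ _) hza
      · exact ih (fun i hi => H i (Finset.mem_cons.2 (Or.inr hi))) hzs
    exact le_trans h3 (mul_le_mul_of_nonneg_left h1 hm.le)

lemma w_term {f g : Polynomial ℚ_[p]} {i j : ℕ}
    (hi : f.coeff i ≠ 0) (hj : g.coeff j ≠ 0) :
    m * (f.coeff i * g.coeff j).valuation + t * (i + j : ℕ) = w m t f i + w m t g j := by
  rw [Padic.valuation_mul hi hj, w, w]
  push_cast
  ring

/-- every nonzero coefficient of a product has weight at least the sum of the `gmin`s. -/
lemma w_mul_ge (hm : 0 < m) {f g : Polynomial ℚ_[p]} (hf : f ≠ 0) (hg : g ≠ 0) {N : ℕ}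
    (hc : (f * g).coeff N ≠ 0) :
    gmin m t f + gmin m t g ≤ w m t (f * g) N := by
  rw [Polynomial.coeff_mul] at hc
  rw [w, Polynomial.coeff_mul]
  have := val_sum_ge' (h := fun x : ℕ × ℕ => f.coeff x.1 * g.coeff x.2)
    (c := gmin m t f + gmin m t g - t * N) (s := Finset.HasAntidiagonal.antidiagonal N) hm ?_ hc
  · linarith
  · rintro ⟨i, j⟩ hij hne
    have hij' : i + j = N := Finset.HasAntidiagonal.mem_antidiagonal.1 hij
    have hfi : f.coeff i ≠ 0 := fun h => hne (by simp [h])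
    have hgj : g.coeff j ≠ 0 := fun h => hne (by simp [h])
    have := w_term (m := m) (t := t) hfi hgj
    rw [hij'] at this
    have h1 := gmin_le m t hfi
    have h2 := gmin_le m t hgj
    linarith

/-- the coefficient at the sum of the max attaining indices is nonzero with exact weight. -/
lemma coeff_mul_maxA (hm : 0 < m) {f g : Polynomial ℚ_[p]} (hf : f ≠ 0) (hg : g ≠ 0) :
    (f * g).coeff (maxA m t f hf + maxA m t g hg) ≠ 0 ∧
      w m t (f * g) (maxA m t f hf + maxA m t g hg) = gmin m t f + gmin m t g := by
  classical
  set A := maxA m t f hf with hA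
  set B := maxA m t g hg with hB
  have hfA : f.coeff A ≠ 0 := (maxA_spec m t hf).1
  have hgB : g.coeff B ≠ 0 := (maxA_spec m t hg).1
  have key := val_sum_unique_min (s := Finset.HasAntidiagonal.antidiagonal (A + B))
    (h := fun x : ℕ × ℕ => f.coeff x.1 * g.coeff x.2) (i₀ := (A, B))
    (by simp) (mul_ne_zero hfA hgB) ?_
  · constructor
    · rw [Polynomial.coeff_mul]; exact key.1
    · rw [w, Polynomial.coeff_mul, key.2]
      have := w_term (m := m) (t := t) hfA hgB
      rw [(maxA_spec m t hf).2, (maxA_spec m t hg).2] at this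
      simpa using this
  · rintro ⟨i, j⟩ hij hne hnz
    have hij' : i + j = A + B := Finset.HasAntidiagonal.mem_antidiagonal.1 hij
    have hfi : f.coeff i ≠ 0 := fun h => hnz (by simp [h])
    have hgj : g.coeff j ≠ 0 := fun h => hnz (by simp [h])
    -- strict inequality of weights
    have hstrict : gmin m t f + gmin m t g < w m t f i + w m t g j := by
      rcases lt_trichotomy i A with h | h | h
      · have hj : B < j := by omega
        have := w_gt_of_maxA_lt m t hg hgj hj
        have h2 := gmin_le m t hfi
        linarith
      · exact absurd (Prod.ext h (by omega)) hne
      · have := w_gt_of_maxA_lt m t hf hfi h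
        have h2 := gmin_le m t hgj
        linarith
    have e1 := w_term (m := m) (t := t) hfA hgB
    have e2 := w_term (m := m) (t := t) hfi hgj
    rw [(maxA_spec m t hf).2, (maxA_spec m t hg).2] at e1
    rw [hij'] at e2
    have : m * (f.coeff A * g.coeff B).valuation < m * (f.coeff i * g.coeff j).valuation := by
      linarith
    exact lt_of_mul_lt_mul_left this hm.le

lemma coeff_mul_minA (hm : 0 < m) {f g : Polynomial ℚ_[p]} (hf : f ≠ 0) (hg : g ≠ 0) :
    (f * g).coeff (minA m t f hf + minA m t g hg) ≠ 0 ∧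
      w m t (f * g) (minA m t f hf + minA m t g hg) = gmin m t f + gmin m t g := by
  classical
  set A := minA m t f hf with hA
  set B := minA m t g hg with hB
  have hfA : f.coeff A ≠ 0 := (minA_spec m t hf).1
  have hgB : g.coeff B ≠ 0 := (minA_spec m t hg).1
  have key := val_sum_unique_min (s := Finset.HasAntidiagonal.antidiagonal (A + B))
    (h := fun x : ℕ × ℕ => f.coeff x.1 * g.coeff x.2) (i₀ := (A, B))
    (by simp) (mul_ne_zero hfA hgB) ?_
  · constructor
    · rw [Polynomial.coeff_mul]; exact key.1
    · rw [w, Polynomial.coeff_mul, key.2]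
      have := w_term (m := m) (t := t) hfA hgB
      rw [(minA_spec m t hf).2, (minA_spec m t hg).2] at this
      simpa using this
  · rintro ⟨i, j⟩ hij hne hnz
    have hij' : i + j = A + B := Finset.HasAntidiagonal.mem_antidiagonal.1 hij
    have hfi : f.coeff i ≠ 0 := fun h => hnz (by simp [h])
    have hgj : g.coeff j ≠ 0 := fun h => hnz (by simp [h])
    have hstrict : gmin m t f + gmin m t g < w m t f i + w m t g j := by
      rcases lt_trichotomy i A with h | h | h
      · have := w_gt_of_lt_minA m t hf hfi h
        have h2 := gmin_le m t hgj
        linarith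
      · exact absurd (Prod.ext h (by omega)) hne
      · have hj : j < B := by omega
        have := w_gt_of_lt_minA m t hg hgj hj
        have h2 := gmin_le m t hfi
        linarith
    have e1 := w_term (m := m) (t := t) hfA hgB
    have e2 := w_term (m := m) (t := t) hfi hgj
    rw [(minA_spec m t hf).2, (minA_spec m t hg).2] at e1
    rw [hij'] at e2
    have : m * (f.coeff A * g.coeff B).valuation < m * (f.coeff i * g.coeff j).valuation := by
      linarith
    exact lt_of_mul_lt_mul_left this hm.le

lemma gmin_mul (hm : 0 < m) {f g : Polynomial ℚ_[p]} (hf : f ≠ 0) (hg : g ≠ 0) :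
    gmin m t (f * g) = gmin m t f + gmin m t g := by
  have h1 := coeff_mul_maxA (m := m) (t := t) hm hf hg
  refine le_antisymm (le_trans (gmin_le m t h1.1) h1.2.le) ?_
  obtain ⟨j, hj, hjw⟩ := exists_gmin m t (mul_ne_zero hf hg)
  rw [← hjw]
  exact w_mul_ge hm hf hg hj

/-- strict weight inequality above the sum of maxima -/
lemma w_mul_gt (hm : 0 < m) {f g : Polynomial ℚ_[p]} (hf : f ≠ 0) (hg : g ≠ 0) {N : ℕ}
    (hN : maxA m t f hf + maxA m t g hg < N) (hc : (f * g).coeff N ≠ 0) :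
    gmin m t f + gmin m t g < w m t (f * g) N := by
  rw [Polynomial.coeff_mul] at hc
  rw [w, Polynomial.coeff_mul]
  rw [Int.lt_iff_add_one_le]
  have := val_sum_ge' (h := fun x : ℕ × ℕ => f.coeff x.1 * g.coeff x.2)
    (c := gmin m t f + gmin m t g + 1 - t * N) (s := Finset.HasAntidiagonal.antidiagonal N) hm ?_ hc
  · linarith
  · rintro ⟨i, j⟩ hij hne
    have hij' : i + j = N := Finset.HasAntidiagonal.mem_antidiagonal.1 hij
    have hfi : f.coeff i ≠ 0 := fun h => hne (by simp [h])
    have hgj : g.coeff j ≠ 0 := fun h => hne (by simp [h])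
    have e2 := w_term (m := m) (t := t) hfi hgj
    rw [hij'] at e2
    have hstrict : gmin m t f + gmin m t g < w m t f i + w m t g j := by
      rcases le_or_gt i (maxA m t f hf) with h | h
      · have hj : maxA m t g hg < j := by omega
        have := w_gt_of_maxA_lt m t hg hgj hj
        have h2 := gmin_le m t hfi
        linarith
      · have := w_gt_of_maxA_lt m t hf hfi h
        have h2 := gmin_le m t hgj
        linarith
    rw [Int.lt_iff_add_one_le] at hstrict
    linarith

lemma w_mul_lt_min (hm : 0 < m) {f g : Polynomial ℚ_[p]} (hf : f ≠ 0) (hg : g ≠ 0) {N : ℕ}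
    (hN : N < minA m t f hf + minA m t g hg) (hc : (f * g).coeff N ≠ 0) :
    gmin m t f + gmin m t g < w m t (f * g) N := by
  rw [Polynomial.coeff_mul] at hc
  rw [w, Polynomial.coeff_mul]
  rw [Int.lt_iff_add_one_le]
  have := val_sum_ge' (h := fun x : ℕ × ℕ => f.coeff x.1 * g.coeff x.2)
    (c := gmin m t f + gmin m t g + 1 - t * N) (s := Finset.HasAntidiagonal.antidiagonal N) hm ?_ hc
  · linarith
  · rintro ⟨i, j⟩ hij hne
    have hij' : i + j = N := Finset.HasAntidiagonal.mem_antidiagonal.1 hij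
    have hfi : f.coeff i ≠ 0 := fun h => hne (by simp [h])
    have hgj : g.coeff j ≠ 0 := fun h => hne (by simp [h])
    have e2 := w_term (m := m) (t := t) hfi hgj
    rw [hij'] at e2
    have hstrict : gmin m t f + gmin m t g < w m t f i + w m t g j := by
      rcases le_or_gt (minA m t f hf) i with h | h
      · have hj : j < minA m t g hg := by omega
        have := w_gt_of_lt_minA m t hg hgj hj
        have h2 := gmin_le m t hfi
        linarith
      · have := w_gt_of_lt_minA m t hf hfi h
        have h2 := gmin_le m t hgj
        linarith
    rw [Int.lt_iff_add_one_le] at hstrict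
    linarith

lemma maxA_mul (hm : 0 < m) {f g : Polynomial ℚ_[p]} (hf : f ≠ 0) (hg : g ≠ 0) :
    maxA m t (f * g) (mul_ne_zero hf hg) = maxA m t f hf + maxA m t g hg := by
  have h1 := coeff_mul_maxA (m := m) (t := t) hm hf hg
  have hgm := gmin_mul (m := m) (t := t) hm hf hg
  refine le_antisymm ?_ (le_maxA m t _ h1.1 (by rw [h1.2, hgm]))
  by_contra hlt
  push_neg at hlt
  have h2 := maxA_spec m t (mul_ne_zero hf hg)
  have := w_mul_gt hm hf hg hlt h2.1
  rw [h2.2, hgm] at this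
  exact lt_irrefl _ this

lemma minA_mul (hm : 0 < m) {f g : Polynomial ℚ_[p]} (hf : f ≠ 0) (hg : g ≠ 0) :
    minA m t (f * g) (mul_ne_zero hf hg) = minA m t f hf + minA m t g hg := by
  have h1 := coeff_mul_minA (m := m) (t := t) hm hf hg
  have hgm := gmin_mul (m := m) (t := t) hm hf hg
  refine le_antisymm (minA_le m t _ h1.1 (by rw [h1.2, hgm])) ?_
  by_contra hlt
  push_neg at hlt
  have h2 := minA_spec m t (mul_ne_zero hf hg)
  have := w_mul_lt_min hm hf hg hlt h2.1
  rw [h2.2, hgm] at this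
  exact lt_irrefl _ this

end NPGmul

namespace NPDumas

open NPG NPGmul

variable {p : ℕ} [Fact p.Prime]

/-- Eisenstein–Dumas style irreducibility for a polynomial over `ℚ_p` whose Newton
polygon is a single segment from `(0, v(g₀))` to `(d, v(g_d))` of slope `-t/d`
with `gcd(t,d) = 1`. The weight hypotheses say exactly this. -/
lemma dumas (d : ℕ) (t : ℤ) (g : Polynomial ℚ_[p])
    (hdeg : g.natDegree = d) (hd1 : 1 ≤ d) (h0 : g.coeff 0 ≠ 0)
    (hgcd : IsCoprime (d : ℤ) t)
    (hw : ∀ j, g.coeff j ≠ 0 → (d : ℤ) * (g.coeff 0).valuation ≤ w (d : ℤ) t g j)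
    (hwd : w (d : ℤ) t g d = (d : ℤ) * (g.coeff 0).valuation) :
    Irreducible g := by
  have hmpos : (0 : ℤ) < (d : ℤ) := by exact_mod_cast hd1
  constructor
  · intro hu
    have := Polynomial.natDegree_eq_zero_of_isUnit hu
    omega
  intro r s hrs
  subst hrs
  have hg : r * s ≠ 0 := fun h => h0 (by simp [h])
  have hr : r ≠ 0 := fun h => hg (by simp [h])
  have hs : s ≠ 0 := fun h => hg (by simp [h])
  -- gmin of the product
  have hgmin : gmin (d : ℤ) t (r * s) = (d : ℤ) * ((r * s).coeff 0).valuation := by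
    refine le_antisymm ?_ ?_
    · have := gmin_le (d : ℤ) t h0
      rw [w] at this
      simpa using this
    · obtain ⟨j, hj, hjw⟩ := exists_gmin (d : ℤ) t hg
      rw [← hjw]
      exact hw j hj
  -- min attaining index is 0, max attaining index is d
  have hminA : minA (d : ℤ) t (r * s) hg = 0 := by
    have h1 : w (d : ℤ) t (r * s) 0 = gmin (d : ℤ) t (r * s) := by
      rw [hgmin, w]; simp
    exact Nat.le_zero.1 (minA_le (d : ℤ) t hg h0 h1)
  have hcd : (r * s).coeff d ≠ 0 := by
    rw [← hdeg]
    exact Polynomial.leadingCoeff_ne_zero.2 hg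
  have hmaxA : maxA (d : ℤ) t (r * s) hg = d := by
    refine le_antisymm (hdeg ▸ maxA_le_natDegree (d : ℤ) t hg) ?_
    exact le_maxA (d : ℤ) t hg hcd (by rw [hwd, hgmin])
  have hminmul := minA_mul (m := (d : ℤ)) (t := t) hmpos hr hs
  have hmaxmul := maxA_mul (m := (d : ℤ)) (t := t) hmpos hr hs
  rw [hminA] at hminmul
  rw [hmaxA] at hmaxmul
  have hminr : minA (d : ℤ) t r hr = 0 := by omega
  have hmins : minA (d : ℤ) t s hs = 0 := by omega
  have hdeg' : r.natDegree + s.natDegree = d := by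
    rw [← Polynomial.natDegree_mul hr hs, hdeg]
  have hmaxr : maxA (d : ℤ) t r hr = r.natDegree := by
    have h1 := maxA_le_natDegree (d : ℤ) t hr
    have h2 := maxA_le_natDegree (d : ℤ) t hs
    omega
  -- single-slope forces `d ∣ natDegree r`
  have hdvd : (d : ℤ) ∣ t * (r.natDegree : ℤ) := by
    have e0 : w (d : ℤ) t r 0 = gmin (d : ℤ) t r := by
      rw [← hminr]; exact (minA_spec (d : ℤ) t hr).2
    have ed : w (d : ℤ) t r r.natDegree = gmin (d : ℤ) t r := by
      rw [← hmaxr]; exact (maxA_spec (d : ℤ) t hr).2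
    have : w (d : ℤ) t r 0 = w (d : ℤ) t r r.natDegree := by rw [e0, ed]
    rw [w, w] at this
    refine ⟨(r.coeff 0).valuation - (r.coeff r.natDegree).valuation, ?_⟩
    push_cast at this ⊢
    linarith
  have hdvd' : d ∣ r.natDegree := by
    have := hgcd.dvd_of_dvd_mul_left hdvd
    exact_mod_cast this
  have hcases : r.natDegree = 0 ∨ s.natDegree = 0 := by
    rcases Nat.eq_zero_or_pos r.natDegree with h | h
    · exact Or.inl h
    · right
      have := Nat.le_of_dvd h hdvd'
      omega
  rcases hcases with h | h
  · left
    rw [Polynomial.eq_C_of_natDegree_eq_zero h]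
    exact Polynomial.isUnit_C.2 (isUnit_iff_ne_zero.2 (fun hc => hr (by
      rw [Polynomial.eq_C_of_natDegree_eq_zero h, hc, map_zero])))
  · right
    rw [Polynomial.eq_C_of_natDegree_eq_zero h]
    exact Polynomial.isUnit_C.2 (isUnit_iff_ne_zero.2 (fun hc => hs (by
      rw [Polynomial.eq_C_of_natDegree_eq_zero h, hc, map_zero])))

end NPDumas


namespace NPW

variable {p : ℕ} [Fact p.Prime]

lemma norm_sum_le_of_le' {ι : Type*} {s : Finset ι} {h : ι → ℚ_[p]} {C : ℝ}
    (hC : 0 ≤ C) (H : ∀ i ∈ s, ‖h i‖ ≤ C) : ‖∑ i ∈ s, h i‖ ≤ C := by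
  classical
  induction s using Finset.cons_induction with
  | empty => simpa using hC
  | cons a s ha ih =>
    rw [Finset.sum_cons]
    refine le_trans (Padic.nonarchimedean _ _) (max_le (H a (Finset.mem_cons_self _ _))
      (ih fun i hi => H i (Finset.mem_cons.2 (Or.inr hi))))

/-- polynomial with prescribed coefficients below `m` -/
noncomputable def ofCoeffs (m : ℕ) (c : ℕ → ℚ_[p]) : Polynomial ℚ_[p] :=
  ∑ j ∈ Finset.range m, C (c j) * X ^ j

lemma ofCoeffs_coeff (m : ℕ) (c : ℕ → ℚ_[p]) (N : ℕ) :
    (ofCoeffs m c).coeff N = if N < m then c N else 0 := by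
  rw [ofCoeffs, Polynomial.finset_sum_coeff]
  simp only [Polynomial.coeff_C_mul, Polynomial.coeff_X_pow, mul_ite, mul_one, mul_zero]
  rw [Finset.sum_ite_eq (Finset.range m) N c]
  simp [Finset.mem_range]

lemma coeff_mul_norm_le {f g : Polynomial ℚ_[p]} {a b : ℝ} (ha : 0 ≤ a)
    (hf : ∀ i, ‖f.coeff i‖ ≤ a) (hg : ∀ j, ‖g.coeff j‖ ≤ b) (N : ℕ) :
    ‖(f * g).coeff N‖ ≤ a * b := by
  rw [Polynomial.coeff_mul]
  refine norm_sum_le_of_le' (mul_nonneg ha (le_trans (norm_nonneg _) (hg 0))) ?_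
  rintro ⟨i, j⟩ _
  rw [norm_mul]
  exact mul_le_mul (hf i) (hg j) (norm_nonneg _) ha

lemma coeff_mul_eq_zero {f g : Polynomial ℚ_[p]} {a b : ℕ}
    (hf : ∀ i, a < i → f.coeff i = 0) (hg : ∀ j, b < j → g.coeff j = 0)
    {N : ℕ} (hN : a + b < N) : (f * g).coeff N = 0 := by
  rw [Polynomial.coeff_mul]
  refine Finset.sum_eq_zero ?_
  rintro ⟨i, j⟩ hij
  have hij' : i + j = N := Finset.HasAntidiagonal.mem_antidiagonal.1 hij
  rcases le_or_gt i a with h | h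
  · rw [hg j (by omega), mul_zero]
  · rw [hf i h, zero_mul]

variable (l k : ℕ) (F : Polynomial ℚ_[p])

/-- the part of `E` of degree `≥ l`, shifted down by `X^l` (up to degree `k`). -/
noncomputable def Tpart (E : Polynomial ℚ_[p]) : Polynomial ℚ_[p] :=
  ofCoeffs (k - l + 1) (fun j => E.coeff (l + j))

/-- the part of `E` of degree `< l`, divided by the unit coefficient. -/
noncomputable def Spart (E : Polynomial ℚ_[p]) : Polynomial ℚ_[p] :=
  ofCoeffs l (fun j => (F.coeff l)⁻¹ * E.coeff j)

noncomputable def step (PQ : Polynomial ℚ_[p] × Polynomial ℚ_[p]) :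
    Polynomial ℚ_[p] × Polynomial ℚ_[p] :=
  (PQ.1 + Spart l F (F - PQ.1 * PQ.2), PQ.2 + Tpart l k (F - PQ.1 * PQ.2))

noncomputable def wseq (n : ℕ) : Polynomial ℚ_[p] × Polynomial ℚ_[p] :=
  (step l k F)^[n] (X ^ l, C (F.coeff l))

lemma wseq_succ (n : ℕ) : wseq l k F (n + 1) = step l k F (wseq l k F n) := by
  rw [wseq, Function.iterate_succ_apply', wseq]

lemma split (hlk : l ≤ k) (hbl : F.coeff l ≠ 0) (E : Polynomial ℚ_[p])
    (hE : ∀ j, k < j → E.coeff j = 0) :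
    Spart l F E * C (F.coeff l) + Tpart l k E * X ^ l = E := by
  ext N
  rw [Polynomial.coeff_add, Polynomial.coeff_mul_C, Polynomial.coeff_mul_X_pow',
    Spart, Tpart, ofCoeffs_coeff]
  rcases lt_or_ge N l with h | h
  · rw [if_pos h, if_neg (by omega)]
    field_simp
    simp
  · rw [if_neg (by omega), if_pos h, ofCoeffs_coeff]
    rcases le_or_gt N k with h2 | h2
    · rw [if_pos (by omega)]
      rw [zero_mul, zero_add]
      congr 1
      omega
    · rw [if_neg (by omega), hE N h2]
      simp

lemma step_error (hlk : l ≤ k) (hbl : F.coeff l ≠ 0) (P Q : Polynomial ℚ_[p])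
    (hE : ∀ j, k < j → (F - P * Q).coeff j = 0) :
    F - (P + Spart l F (F - P * Q)) * (Q + Tpart l k (F - P * Q)) =
      -(Spart l F (F - P * Q) * (Q - C (F.coeff l))
        + Tpart l k (F - P * Q) * (P - X ^ l)
        + Spart l F (F - P * Q) * Tpart l k (F - P * Q)) := by
  have h := split l k F hlk hbl (F - P * Q) hE
  linear_combination -h

end NPW

namespace NPW

variable {p : ℕ} [Fact p.Prime] (l k : ℕ) (F : Polynomial ℚ_[p])

/-- All the invariants of the Hensel iteration. -/
def Inv (n : ℕ) : Prop :=
  ((wseq l k F n).1.coeff l = 1) ∧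
  (∀ j, l < j → (wseq l k F n).1.coeff j = 0) ∧
  (∀ j, j < l → ‖(wseq l k F n).1.coeff j‖ ≤ (p:ℝ)⁻¹) ∧
  (∀ j, k - l < j → (wseq l k F n).2.coeff j = 0) ∧
  (∀ j, ‖((wseq l k F n).2 - C (F.coeff l)).coeff j‖ ≤ (p:ℝ)⁻¹) ∧
  (∀ j, k < j → (F - (wseq l k F n).1 * (wseq l k F n).2).coeff j = 0) ∧
  (∀ j, ‖(F - (wseq l k F n).1 * (wseq l k F n).2).coeff j‖ ≤ ((p:ℝ)⁻¹) ^ (n + 1))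

lemma wseq_spec (hl : 1 ≤ l) (hlk : l ≤ k) (hbl : ‖F.coeff l‖ = 1)
    (hFdeg : ∀ j, k < j → F.coeff j = 0)
    (hFsmall : ∀ j, j ≠ l → ‖F.coeff j‖ ≤ (p:ℝ)⁻¹) :
    ∀ n, Inv l k F n := by
  have hp1 : (1:ℝ) < (p:ℝ) := by exact_mod_cast (Fact.out : p.Prime).one_lt
  have hpinv0 : (0:ℝ) ≤ (p:ℝ)⁻¹ := by positivity
  have hpinv1 : (p:ℝ)⁻¹ ≤ 1 := by
    rw [inv_le_one_iff₀]; right; exact hp1.le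
  have hbl0 : F.coeff l ≠ 0 := by
    intro h; rw [h, norm_zero] at hbl; norm_num at hbl
  intro n
  induction n with
  | zero =>
    have hPQ : wseq l k F 0 = (X ^ l, C (F.coeff l)) := rfl
    have hEcoeff : ∀ j, (F - (X ^ l : Polynomial ℚ_[p]) * C (F.coeff l)).coeff j
        = if j = l then 0 else F.coeff j := by
      intro j
      rw [Polynomial.coeff_sub, mul_comm, Polynomial.coeff_C_mul, Polynomial.coeff_X_pow]
      split
      · rename_i h; subst h; simp
      · simp
    refine ⟨?_, ?_, ?_, ?_, ?_, ?_, ?_⟩ <;> rw [hPQ]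
    · simp
    · intro j hj
      rw [Polynomial.coeff_X_pow, if_neg (by omega)]
    · intro j hj
      rw [Polynomial.coeff_X_pow, if_neg (by omega), norm_zero]
      exact hpinv0
    · intro j hj
      rw [Polynomial.coeff_C, if_neg (by omega)]
    · intro j
      simp [hpinv0]
    · intro j hj
      rw [hEcoeff, if_neg (by omega), hFdeg j hj]
    · intro j
      rw [hEcoeff, pow_one]
      split
      · rw [norm_zero]; exact hpinv0
      · rename_i h; exact hFsmall j h
  | succ n ih =>
    obtain ⟨h1, h2, h3, h4, h5, h6, h7⟩ := ih
    set P := (wseq l k F n).1 with hP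
    set Q := (wseq l k F n).2 with hQ
    set E := F - P * Q with hEdef
    set S := Spart l F E with hS
    set T := Tpart l k E with hT
    have hstep : wseq l k F (n + 1) = (P + S, Q + T) := by
      rw [wseq_succ]
      simp only [step, ← hP, ← hQ, ← hEdef, ← hS, ← hT]
    have hScoeff : ∀ j, S.coeff j = if j < l then (F.coeff l)⁻¹ * E.coeff j else 0 :=
      fun j => ofCoeffs_coeff _ _ j
    have hTcoeff : ∀ j, T.coeff j = if j < k - l + 1 then E.coeff (l + j) else 0 :=
      fun j => ofCoeffs_coeff _ _ j
    have hSnorm : ∀ j, ‖S.coeff j‖ ≤ ((p:ℝ)⁻¹) ^ (n + 1) := by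
      intro j
      rw [hScoeff]
      split
      · rw [norm_mul, norm_inv, hbl, inv_one, one_mul]; exact h7 _
      · rw [norm_zero]; positivity
    have hTnorm : ∀ j, ‖T.coeff j‖ ≤ ((p:ℝ)⁻¹) ^ (n + 1) := by
      intro j
      rw [hTcoeff]
      split
      · exact h7 _
      · rw [norm_zero]; positivity
    have hSdeg : ∀ j, l - 1 < j → S.coeff j = 0 := by
      intro j hj; rw [hScoeff, if_neg (by omega)]
    have hTdeg : ∀ j, k - l < j → T.coeff j = 0 := by
      intro j hj; rw [hTcoeff, if_neg (by omega)]
    have hQmdeg : ∀ j, k - l < j → (Q - C (F.coeff l)).coeff j = 0 := by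
      intro j hj
      rw [Polynomial.coeff_sub, h4 j hj, Polynomial.coeff_C, if_neg (by omega), sub_zero]
    have hPmnorm : ∀ j, ‖(P - X ^ l).coeff j‖ ≤ (p:ℝ)⁻¹ := by
      intro j
      rw [Polynomial.coeff_sub, Polynomial.coeff_X_pow]
      rcases lt_trichotomy j l with h | h | h
      · rw [if_neg (by omega), sub_zero]; exact h3 j h
      · subst h; rw [if_pos rfl, h1, sub_self, norm_zero]; exact hpinv0
      · rw [if_neg (by omega), sub_zero, h2 j h, norm_zero]; exact hpinv0
    have hPmdeg : ∀ j, l - 1 < j → (P - X ^ l).coeff j = 0 := by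
      intro j hj
      rw [Polynomial.coeff_sub, Polynomial.coeff_X_pow]
      rcases eq_or_lt_of_le (show l ≤ j by omega) with h | h
      · rw [if_pos h.symm, ← h, h1, sub_self]
      · rw [if_neg (by omega), h2 j h, sub_zero]
    have hεn : ((p:ℝ)⁻¹) ^ (n + 1) ≤ (p:ℝ)⁻¹ := by
      calc ((p:ℝ)⁻¹) ^ (n + 1) ≤ ((p:ℝ)⁻¹) ^ 1 :=
            pow_le_pow_of_le_one hpinv0 hpinv1 (by omega)
        _ = (p:ℝ)⁻¹ := pow_one _
    have hεn0 : (0:ℝ) ≤ ((p:ℝ)⁻¹) ^ (n + 1) := by positivity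
    have herr := step_error l k F hlk hbl0 P Q (by rw [← hEdef]; exact h6)
    rw [← hEdef, ← hS, ← hT] at herr
    refine ⟨?_, ?_, ?_, ?_, ?_, ?_, ?_⟩ <;> rw [hstep] <;> dsimp only
    · rw [Polynomial.coeff_add, h1, hScoeff, if_neg (by omega), add_zero]
    · intro j hj
      rw [Polynomial.coeff_add, h2 j hj, hSdeg j (by omega), add_zero]
    · intro j hj
      rw [Polynomial.coeff_add]
      refine le_trans (Padic.nonarchimedean _ _) (max_le (h3 j hj) ?_)
      exact le_trans (hSnorm j) hεn
    · intro j hj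
      rw [Polynomial.coeff_add, h4 j hj, hTdeg j hj, add_zero]
    · intro j
      have : Q + T - C (F.coeff l) = (Q - C (F.coeff l)) + T := by ring
      rw [this, Polynomial.coeff_add]
      refine le_trans (Padic.nonarchimedean _ _) (max_le (h5 j) ?_)
      exact le_trans (hTnorm j) hεn
    · intro j hj
      rw [herr, Polynomial.coeff_neg, Polynomial.coeff_add, Polynomial.coeff_add]
      rw [coeff_mul_eq_zero hSdeg hQmdeg (show l - 1 + (k - l) < j by omega),
        coeff_mul_eq_zero hTdeg hPmdeg (show k - l + (l - 1) < j by omega),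
        coeff_mul_eq_zero hSdeg hTdeg (show l - 1 + (k - l) < j by omega)]
      simp
    · intro j
      rw [herr, Polynomial.coeff_neg, norm_neg, Polynomial.coeff_add, Polynomial.coeff_add]
      have b1 : ‖(S * (Q - C (F.coeff l))).coeff j‖ ≤ ((p:ℝ)⁻¹) ^ (n + 1) * (p:ℝ)⁻¹ :=
        coeff_mul_norm_le hεn0 hSnorm h5 j
      have b2 : ‖(T * (P - X ^ l)).coeff j‖ ≤ ((p:ℝ)⁻¹) ^ (n + 1) * (p:ℝ)⁻¹ :=
        coeff_mul_norm_le hεn0 hTnorm hPmnorm j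
      have b3 : ‖(S * T).coeff j‖ ≤ ((p:ℝ)⁻¹) ^ (n + 1) * (p:ℝ)⁻¹ := by
        refine le_trans (coeff_mul_norm_le hεn0 hSnorm hTnorm j) ?_
        exact mul_le_mul_of_nonneg_left hεn hεn0
      have : ((p:ℝ)⁻¹) ^ (n + 1) * (p:ℝ)⁻¹ = ((p:ℝ)⁻¹) ^ (n + 1 + 1) := (pow_succ _ _).symm
      rw [this] at b1 b2 b3
      exact le_trans (Padic.nonarchimedean _ _)
        (max_le (le_trans (Padic.nonarchimedean _ _) (max_le b1 b2)) b3)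

end NPW

namespace NPW

variable {p : ℕ} [Fact p.Prime]

lemma weierstrass (l k : ℕ) (F : Polynomial ℚ_[p]) (hl : 1 ≤ l) (hlk : l ≤ k)
    (hbl : ‖F.coeff l‖ = 1)
    (hFdeg : ∀ j, k < j → F.coeff j = 0)
    (hFsmall : ∀ j, j ≠ l → ‖F.coeff j‖ ≤ (p:ℝ)⁻¹) :
    ∃ P Q : Polynomial ℚ_[p], P.Monic ∧ P.natDegree = l ∧
      (∀ j, ‖P.coeff j‖ ≤ 1) ∧
      (∀ j, k - l < j → Q.coeff j = 0) ∧ (∀ j, ‖Q.coeff j‖ ≤ 1) ∧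
      ‖Q.coeff 0‖ = 1 ∧ F = P * Q := by
  have hp1 : (1:ℝ) < (p:ℝ) := by exact_mod_cast (Fact.out : p.Prime).one_lt
  have hpinv0 : (0:ℝ) ≤ (p:ℝ)⁻¹ := by positivity
  have hpinvlt : (p:ℝ)⁻¹ < 1 := by
    rw [inv_lt_one_iff₀]; right; exact hp1
  have hpinv1 : (p:ℝ)⁻¹ ≤ 1 := hpinvlt.le
  have hinv := wseq_spec l k F hl hlk hbl hFdeg hFsmall
  have h1 : ∀ n, (wseq l k F n).1.coeff l = 1 := fun n => (hinv n).1
  have h2 : ∀ n j, l < j → (wseq l k F n).1.coeff j = 0 := fun n => (hinv n).2.1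
  have h3 : ∀ n j, j < l → ‖(wseq l k F n).1.coeff j‖ ≤ (p:ℝ)⁻¹ := fun n => (hinv n).2.2.1
  have h4 : ∀ n j, k - l < j → (wseq l k F n).2.coeff j = 0 := fun n => (hinv n).2.2.2.1
  have h5 : ∀ n j, ‖((wseq l k F n).2 - C (F.coeff l)).coeff j‖ ≤ (p:ℝ)⁻¹ :=
    fun n => (hinv n).2.2.2.2.1
  have h7 : ∀ n j, ‖(F - (wseq l k F n).1 * (wseq l k F n).2).coeff j‖ ≤ ((p:ℝ)⁻¹) ^ (n + 1) :=
    fun n => (hinv n).2.2.2.2.2.2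
  have hbl0 : F.coeff l ≠ 0 := by
    intro h; rw [h, norm_zero] at hbl; norm_num at hbl
  -- step increments
  have hs1 : ∀ n, (wseq l k F (n+1)).1 = (wseq l k F n).1
      + Spart l F (F - (wseq l k F n).1 * (wseq l k F n).2) := by
    intro n; rw [wseq_succ]; rfl
  have hs2 : ∀ n, (wseq l k F (n+1)).2 = (wseq l k F n).2
      + Tpart l k (F - (wseq l k F n).1 * (wseq l k F n).2) := by
    intro n; rw [wseq_succ]; rfl
  have hSn : ∀ n j, ‖(Spart l F (F - (wseq l k F n).1 * (wseq l k F n).2)).coeff j‖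
      ≤ ((p:ℝ)⁻¹) ^ (n+1) := by
    intro n j
    rw [Spart, ofCoeffs_coeff]
    split
    · rw [norm_mul, norm_inv, hbl, inv_one, one_mul]; exact h7 n j
    · rw [norm_zero]; positivity
  have hTn : ∀ n j, ‖(Tpart l k (F - (wseq l k F n).1 * (wseq l k F n).2)).coeff j‖
      ≤ ((p:ℝ)⁻¹) ^ (n+1) := by
    intro n j
    rw [Tpart, ofCoeffs_coeff]
    split
    · exact h7 n _
    · rw [norm_zero]; positivity
  -- Cauchy sequences of coefficients
  have hcauchyP : ∀ j, ∃ a, Filter.Tendsto (fun n => (wseq l k F n).1.coeff j)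
      Filter.atTop (nhds a) := by
    intro j
    apply cauchySeq_tendsto_of_complete
    apply cauchySeq_of_le_geometric ((p:ℝ)⁻¹) ((p:ℝ)⁻¹) hpinvlt
    intro n
    rw [dist_eq_norm, hs1 n, Polynomial.coeff_add]
    have : (wseq l k F n).1.coeff j - ((wseq l k F n).1.coeff j
        + (Spart l F (F - (wseq l k F n).1 * (wseq l k F n).2)).coeff j)
        = -(Spart l F (F - (wseq l k F n).1 * (wseq l k F n).2)).coeff j := by ring
    rw [this, norm_neg]
    calc ‖_‖ ≤ ((p:ℝ)⁻¹) ^ (n+1) := hSn n j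
      _ = (p:ℝ)⁻¹ * ((p:ℝ)⁻¹) ^ n := by ring
  have hcauchyQ : ∀ j, ∃ a, Filter.Tendsto (fun n => (wseq l k F n).2.coeff j)
      Filter.atTop (nhds a) := by
    intro j
    apply cauchySeq_tendsto_of_complete
    apply cauchySeq_of_le_geometric ((p:ℝ)⁻¹) ((p:ℝ)⁻¹) hpinvlt
    intro n
    rw [dist_eq_norm, hs2 n, Polynomial.coeff_add]
    have : (wseq l k F n).2.coeff j - ((wseq l k F n).2.coeff j
        + (Tpart l k (F - (wseq l k F n).1 * (wseq l k F n).2)).coeff j)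
        = -(Tpart l k (F - (wseq l k F n).1 * (wseq l k F n).2)).coeff j := by ring
    rw [this, norm_neg]
    calc ‖_‖ ≤ ((p:ℝ)⁻¹) ^ (n+1) := hTn n j
      _ = (p:ℝ)⁻¹ * ((p:ℝ)⁻¹) ^ n := by ring
  choose Pc hPc using hcauchyP
  choose Qc hQc using hcauchyQ
  refine ⟨X ^ l + ofCoeffs l Pc, ofCoeffs (k - l + 1) Qc, ?_⟩
  set Pp : Polynomial ℚ_[p] := X ^ l + ofCoeffs l Pc with hPp
  set Qp : Polynomial ℚ_[p] := ofCoeffs (k - l + 1) Qc with hQp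
  have hPpc : ∀ j, Pp.coeff j = (if j = l then 1 else 0) + (if j < l then Pc j else 0) := by
    intro j
    rw [hPp, Polynomial.coeff_add, Polynomial.coeff_X_pow, ofCoeffs_coeff]
  have hQpc : ∀ j, Qp.coeff j = if j < k - l + 1 then Qc j else 0 := by
    intro j; rw [hQp, ofCoeffs_coeff]
  -- coefficientwise convergence
  have hPt : ∀ j, Filter.Tendsto (fun n => (wseq l k F n).1.coeff j)
      Filter.atTop (nhds (Pp.coeff j)) := by
    intro j
    rcases lt_trichotomy j l with h | h | h
    · rw [hPpc, if_neg (by omega), if_pos h, zero_add]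
      exact hPc j
    · subst h
      rw [hPpc, if_pos rfl, if_neg (by omega), add_zero]
      exact tendsto_const_nhds.congr (fun n => (h1 n).symm)
    · rw [hPpc, if_neg (by omega), if_neg (by omega), add_zero]
      exact tendsto_const_nhds.congr (fun n => (h2 n j h).symm)
  have hQt : ∀ j, Filter.Tendsto (fun n => (wseq l k F n).2.coeff j)
      Filter.atTop (nhds (Qp.coeff j)) := by
    intro j
    rcases lt_or_ge j (k - l + 1) with h | h
    · rw [hQpc, if_pos h]
      exact hQc j
    · rw [hQpc, if_neg (by omega)]
      exact tendsto_const_nhds.congr (fun n => (h4 n j (by omega)).symm)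
  -- the product identity
  have hFeq : F = Pp * Qp := by
    ext N
    have hmul : Filter.Tendsto (fun n => ((wseq l k F n).1 * (wseq l k F n).2).coeff N)
        Filter.atTop (nhds ((Pp * Qp).coeff N)) := by
      simp only [Polynomial.coeff_mul]
      exact tendsto_finset_sum _ (fun x _ => (hPt x.1).mul (hQt x.2))
    have hzero : Filter.Tendsto (fun n => (F - (wseq l k F n).1 * (wseq l k F n).2).coeff N)
        Filter.atTop (nhds 0) := by
      apply squeeze_zero_norm (fun n => h7 n N)
      have hb := tendsto_pow_atTop_nhds_zero_of_lt_one hpinv0 hpinvlt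
      have := hb.comp (Filter.tendsto_add_atTop_nat 1)
      exact this.congr (fun n => by simp [Function.comp])
    have hzero' : Filter.Tendsto (fun n => (F - (wseq l k F n).1 * (wseq l k F n).2).coeff N)
        Filter.atTop (nhds (F.coeff N - (Pp * Qp).coeff N)) := by
      simp only [Polynomial.coeff_sub]
      exact tendsto_const_nhds.sub hmul
    exact sub_eq_zero.1 (tendsto_nhds_unique hzero' hzero)
  -- properties of Pp
  have hPl : Pp.coeff l = 1 := by rw [hPpc, if_pos rfl, if_neg (by omega), add_zero]
  have hPhigh : ∀ j, l < j → Pp.coeff j = 0 := by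
    intro j hj; rw [hPpc, if_neg (by omega), if_neg (by omega), add_zero]
  have hPdeg : Pp.natDegree = l := by
    refine le_antisymm (Polynomial.natDegree_le_iff_coeff_eq_zero.2 hPhigh) ?_
    exact Polynomial.le_natDegree_of_ne_zero (by rw [hPl]; exact one_ne_zero)
  have hPmonic : Pp.Monic := by
    rw [Polynomial.Monic, Polynomial.leadingCoeff, hPdeg, hPl]
  have hPnorm : ∀ j, ‖Pp.coeff j‖ ≤ 1 := by
    intro j
    rcases lt_trichotomy j l with h | h | h
    · refine le_of_tendsto (hPt j).norm ?_
      exact Filter.Eventually.of_forall (fun n => le_trans (h3 n j h) hpinv1)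
    · subst h; rw [hPl, norm_one]
    · rw [hPhigh j h, norm_zero]; norm_num
  -- properties of Qp
  have hQdeg : ∀ j, k - l < j → Qp.coeff j = 0 := by
    intro j hj; rw [hQpc, if_neg (by omega)]
  have hQnormn : ∀ n j, ‖(wseq l k F n).2.coeff j‖ ≤ 1 := by
    intro n j
    have : (wseq l k F n).2.coeff j
        = ((wseq l k F n).2 - C (F.coeff l)).coeff j + (C (F.coeff l)).coeff j := by
      rw [Polynomial.coeff_sub]; ring
    rw [this]
    refine le_trans (Padic.nonarchimedean _ _) (max_le (le_trans (h5 n j) hpinv1) ?_)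
    rw [Polynomial.coeff_C]
    split
    · rw [hbl]
    · rw [norm_zero]; norm_num
  have hQnorm : ∀ j, ‖Qp.coeff j‖ ≤ 1 := by
    intro j
    rcases lt_or_ge j (k - l + 1) with h | h
    · refine le_of_tendsto (hQt j).norm ?_
      exact Filter.Eventually.of_forall (fun n => hQnormn n j)
    · rw [hQpc, if_neg (by omega), norm_zero]; norm_num
  have hQ0 : ‖Qp.coeff 0‖ = 1 := by
    have htend : Filter.Tendsto (fun n => (wseq l k F n).2.coeff 0 - F.coeff l)
        Filter.atTop (nhds (Qp.coeff 0 - F.coeff l)) := (hQt 0).sub tendsto_const_nhds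
    have hle : ‖Qp.coeff 0 - F.coeff l‖ ≤ (p:ℝ)⁻¹ := by
      refine le_of_tendsto htend.norm (Filter.Eventually.of_forall (fun n => ?_))
      have := h5 n 0
      rwa [Polynomial.coeff_sub, Polynomial.coeff_C, if_pos rfl] at this
    have hlt : ‖Qp.coeff 0 - F.coeff l‖ < ‖F.coeff l‖ := by
      rw [hbl]; exact lt_of_le_of_lt hle hpinvlt
    have : Qp.coeff 0 = F.coeff l + (Qp.coeff 0 - F.coeff l) := by ring
    rw [this, Padic.add_eq_max_of_ne (by rw [hbl]; rw [hbl] at hlt; exact (ne_of_lt hlt).symm),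
      max_eq_left (by rw [hbl] at hlt ⊢; exact hlt.le), hbl]
  exact ⟨hPmonic, hPdeg, hPnorm, hQdeg, hQnorm, hQ0, hFeq⟩

end NPW

namespace NPN

open Finset

variable {p : ℕ} [hp : Fact p.Prime]

lemma padicValNat_prod_range (f : ℕ → ℕ) (m : ℕ) (hf : ∀ i, i < m → f i ≠ 0) :
    padicValNat p (∏ i ∈ Finset.range m, f i) = ∑ i ∈ Finset.range m, padicValNat p (f i) := by
  induction m with
  | zero => simp
  | succ m ih =>
    rw [Finset.prod_range_succ, Finset.sum_range_succ,
      padicValNat.mul (Finset.prod_ne_zero_iff.2 (fun i hi => hf i (by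
        have := Finset.mem_range.1 hi; omega))) (hf m (by omega)),
      ih (fun i hi => hf i (by omega))]

variable (n k l e : ℕ)

lemma not_dvd_window (hpk : k < p) (hn : k + 2 ≤ n) (hl : l ≤ k) (hpl : p ∣ n - l)
    {i : ℕ} (hik : i ≤ k) (hil : i ≠ l) : ¬ p ∣ (n - i) := by
  intro hdvd
  rcases lt_or_gt_of_ne hil with h | h
  · have h1 : (n - i) - (n - l) = l - i := by omega
    have h2 := Nat.dvd_sub hdvd hpl
    rw [h1] at h2
    have := Nat.le_of_dvd (by omega) h2
    omega
  · have h1 : (n - l) - (n - i) = i - l := by omega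
    have h2 := Nat.dvd_sub hpl hdvd
    rw [h1] at h2
    have := Nat.le_of_dvd (by omega) h2
    omega

lemma val_window (hpk : k < p) (hn : k + 2 ≤ n) (hl : l ≤ k) (hpl : p ∣ n - l)
    (he : e = padicValNat p (n - l)) {i : ℕ} (hik : i ≤ k) :
    padicValNat p (n - i) = if i = l then e else 0 := by
  split
  · rename_i h; subst h; exact he.symm
  · rename_i h
    exact padicValNat.eq_zero_of_not_dvd (not_dvd_window n k l hpk hn hl hpl hik h)

lemma val_choose_left (hpk : k < p) (hn : k + 2 ≤ n) (hl : l ≤ k) (hpl : p ∣ n - l)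
    (he : e = padicValNat p (n - l)) {j : ℕ} (hj : j ≤ k) :
    padicValNat p (n.choose j) = if l < j then e else 0 := by
  have hcne : n.choose j ≠ 0 := (Nat.choose_pos (by omega : j ≤ n)).ne'
  have hfne : Nat.factorial j ≠ 0 := Nat.factorial_ne_zero j
  have hfval : padicValNat p (Nat.factorial j) = 0 := by
    refine padicValNat.eq_zero_of_not_dvd (fun hdvd => ?_)
    have := (Nat.Prime.dvd_factorial (Fact.out : p.Prime)).1 hdvd
    omega
  have hdesc : padicValNat p (n.descFactorial j)
      = padicValNat p (Nat.factorial j) + padicValNat p (n.choose j) := by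
    rw [Nat.descFactorial_eq_factorial_mul_choose, padicValNat.mul hfne hcne]
  have hprod : padicValNat p (n.descFactorial j)
      = ∑ i ∈ Finset.range j, padicValNat p (n - i) := by
    rw [Nat.descFactorial_eq_prod_range]
    exact padicValNat_prod_range _ _ (fun i hi => by omega)
  have hsum : ∑ i ∈ Finset.range j, padicValNat p (n - i) = if l < j then e else 0 := by
    rw [Finset.sum_congr rfl (fun i hi => val_window n k l e hpk hn hl hpl he
      (by have := Finset.mem_range.1 hi; omega))]
    rw [Finset.sum_ite_eq' (Finset.range j) l (fun _ => e)]
    simp [Finset.mem_range]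
  rw [hprod, hsum] at hdesc
  omega

lemma val_choose_right (hpk : k < p) (hn : k + 2 ≤ n) (hl1 : 1 ≤ l) (hlk : l + 1 ≤ k)
    (hpl : p ∣ n - l) (he : e = padicValNat p (n - l)) {j : ℕ} (hj : j ≤ k) :
    padicValNat p ((n - j - 1).choose (k - j)) = if j < l then e else 0 := by
  have hcne : (n - j - 1).choose (k - j) ≠ 0 := by
    have := Nat.choose_pos (show k - j ≤ n - j - 1 by omega)
    omega
  have hfne : Nat.factorial (k - j) ≠ 0 := Nat.factorial_ne_zero _
  have hfval : padicValNat p (Nat.factorial (k - j)) = 0 := by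
    refine padicValNat.eq_zero_of_not_dvd (fun hdvd => ?_)
    have := (Nat.Prime.dvd_factorial (Fact.out : p.Prime)).1 hdvd
    omega
  have hdesc : padicValNat p ((n - j - 1).descFactorial (k - j))
      = padicValNat p (Nat.factorial (k - j)) + padicValNat p ((n - j - 1).choose (k - j)) := by
    rw [Nat.descFactorial_eq_factorial_mul_choose, padicValNat.mul hfne hcne]
  have hprod : padicValNat p ((n - j - 1).descFactorial (k - j))
      = ∑ t ∈ Finset.range (k - j), padicValNat p (n - (j + 1 + t)) := by
    rw [Nat.descFactorial_eq_prod_range]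
    rw [padicValNat_prod_range _ _ (fun i hi => by omega)]
    refine Finset.sum_congr rfl (fun t ht => ?_)
    congr 1
    omega
  have hsum : ∑ t ∈ Finset.range (k - j), padicValNat p (n - (j + 1 + t))
      = if j < l then e else 0 := by
    have hterm : ∀ t ∈ Finset.range (k - j),
        padicValNat p (n - (j + 1 + t)) = if j + 1 + t = l then e else 0 := by
      intro t ht
      have htk : t < k - j := Finset.mem_range.1 ht
      exact val_window n k l e hpk hn (by omega) hpl he (by omega)
    rw [Finset.sum_congr rfl hterm]
    rcases lt_or_ge j l with h | h
    · have : ∀ t ∈ Finset.range (k - j),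
          (if j + 1 + t = l then e else 0) = if t = l - j - 1 then e else 0 := by
        intro t ht
        split <;> split <;> first | rfl | omega
      rw [Finset.sum_congr rfl this, Finset.sum_ite_eq' (Finset.range (k - j)) (l - j - 1)
        (fun _ => e), if_pos (Finset.mem_range.2 (by omega)), if_pos h]
    · rw [if_neg (by omega)]
      refine Finset.sum_eq_zero (fun t ht => ?_)
      rw [if_neg (by omega)]
  rw [hprod, hsum] at hdesc
  omega

/-- combined: the `p`-adic valuation of the integer coefficients. -/
lemma val_coeff_int (hpk : k < p) (hn : k + 2 ≤ n) (hl1 : 1 ≤ l) (hlk : l + 1 ≤ k)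
    (hpl : p ∣ n - l) (he : e = padicValNat p (n - l))
    (a : ℕ → ℤ) (ha : ∀ j ≤ k, a j ≠ 0 ∧ ∀ q : ℕ, q.Prime → (q : ℤ) ∣ a j → q ≤ k)
    {j : ℕ} (hj : j ≤ k) :
    a j * c n k j ≠ 0 ∧ padicValInt p (a j * c n k j) = if j = l then 0 else e := by
  have hC1 : n.choose j ≠ 0 := (Nat.choose_pos (by omega : j ≤ n)).ne'
  have hC2 : (n - j - 1).choose (k - j) ≠ 0 := by
    have := Nat.choose_pos (show k - j ≤ n - j - 1 by omega)
    omega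
  have hcne : c n k j ≠ 0 := by
    rw [c]
    refine mul_ne_zero (mul_ne_zero (pow_ne_zero _ (by norm_num)) ?_) ?_
    · exact_mod_cast hC1
    · exact_mod_cast hC2
  have hane : a j ≠ 0 := (ha j hj).1
  refine ⟨mul_ne_zero hane hcne, ?_⟩
  rw [padicValInt.mul hane hcne]
  have hva : padicValInt p (a j) = 0 := by
    refine padicValInt.eq_zero_of_not_dvd (fun hdvd => ?_)
    have := (ha j hj).2 p (Fact.out : p.Prime) hdvd
    omega
  have hnatAbs : (c n k j).natAbs = n.choose j * (n - j - 1).choose (k - j) := by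
    rw [c, Int.natAbs_mul, Int.natAbs_mul, Int.natAbs_pow]
    simp
  have hvc : padicValInt p (c n k j)
      = padicValNat p (n.choose j) + padicValNat p ((n - j - 1).choose (k - j)) := by
    rw [padicValInt, hnatAbs, padicValNat.mul hC1 hC2]
  rw [hva, hvc, val_choose_left n k l e hpk hn (by omega) hpl he hj,
    val_choose_right n k l e hpk hn hl1 hlk hpl he hj]
  rcases lt_trichotomy j l with h | h | h
  · rw [if_neg (by omega), if_pos h, if_neg (by omega)]; omega
  · rw [if_neg (by omega), if_neg (by omega), if_pos h]
  · rw [if_pos h, if_neg (by omega), if_neg (by omega)]; omega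

end NPN

set_option maxHeartbeats 1000000

theorem F_factors_into_two_irreducibles (n k : ℕ) (hk : k + 2 ≥ 4) (hn : n ≥ k + 2)
    (p : ℕ) [hp : Fact p.Prime] (hpk : k < p)
    (l : ℕ) (hl1 : 1 ≤ l) (hl2 : l ≤ k - 1) (hpl : p ∣ (n - l))
    (e : ℕ) (he : e = padicValNat p (n - l))
    (hd : Nat.gcd e l = 1) (hd' : Nat.gcd e (k - l) = 1)
    (a : ℕ → ℤ) (ha : ∀ j ≤ k, a j ≠ 0 ∧ ∀ q : ℕ, q.Prime → (q : ℤ) ∣ a j → q ≤ k) :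
    ∃ g h : Polynomial ℚ_[p], Irreducible g ∧ Irreducible h ∧ ¬Associated g h ∧
      g.natDegree = l ∧ h.natDegree = k - l ∧
      ∃ u : (Polynomial ℚ_[p])ˣ, Fp p n k a = ↑u * (g * h) := by
  have hk2 : 2 ≤ k := by omega
  have hlk' : l + 1 ≤ k := by omega
  have he1 : 1 ≤ e := by
    rw [he]; exact one_le_padicValNat_of_dvd (by omega) hpl
  have hp1 : (1:ℝ) < (p:ℝ) := by exact_mod_cast hp.out.one_lt
  set F := Fp p n k a with hF
  have hco : ∀ N, F.coeff N = if N < k + 1 then ((a N * c n k N : ℤ) : ℚ_[p]) else 0 := by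
    intro N
    rw [hF, show Fp p n k a
      = NPW.ofCoeffs (k + 1) (fun j => ((a j * c n k j : ℤ) : ℚ_[p])) from rfl,
      NPW.ofCoeffs_coeff]
  have hvals : ∀ j, j ≤ k →
      F.coeff j ≠ 0 ∧ (F.coeff j).valuation = if j = l then 0 else (e:ℤ) := by
    intro j hj
    have h0 := NPN.val_coeff_int n k l e hpk hn hl1 hlk' hpl he a ha hj
    rw [hco j, if_pos (by omega)]
    refine ⟨Int.cast_ne_zero.2 h0.1, ?_⟩
    rw [Padic.valuation_intCast, h0.2]
    split <;> simp
  have hFdeg0 : ∀ j, k < j → F.coeff j = 0 := by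
    intro j hj; rw [hco j, if_neg (by omega)]
  have hFne : F ≠ 0 := fun h => ((hvals l (by omega)).1 (by rw [h]; simp))
  have hdegF : F.natDegree = k :=
    le_antisymm (Polynomial.natDegree_le_iff_coeff_eq_zero.2 hFdeg0)
      (Polynomial.le_natDegree_of_ne_zero (hvals k le_rfl).1)
  have hnorm1 : ‖F.coeff l‖ = 1 := by
    rw [Padic.norm_eq_zpow_neg_valuation (hvals l (by omega)).1, (hvals l (by omega)).2, if_pos rfl]
    simp
  have hnorms : ∀ j, j ≠ l → ‖F.coeff j‖ ≤ (p:ℝ)⁻¹ := by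
    intro j hjl
    rcases le_or_gt j k with hjk | hjk
    · rw [Padic.norm_eq_zpow_neg_valuation (hvals j hjk).1, (hvals j hjk).2, if_neg hjl]
      calc (p:ℝ) ^ (-(e:ℤ)) ≤ (p:ℝ) ^ (-(1:ℤ)) := by
            apply zpow_le_zpow_right₀ hp1.le
            have : (1:ℤ) ≤ (e:ℤ) := by exact_mod_cast he1
            omega
        _ = (p:ℝ)⁻¹ := by rw [zpow_neg_one]
    · rw [hFdeg0 j hjk, norm_zero]; positivity
  obtain ⟨P, Q, hPmon, hPdeg, hPnorm, hQhigh, hQnorm, hQ0n, hFPQ⟩ :=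
    NPW.weierstrass l k F hl1 (by omega) hnorm1 hFdeg0 hnorms
  have hPne : P ≠ 0 := hPmon.ne_zero
  have hQ0ne : Q.coeff 0 ≠ 0 := by
    intro h; rw [h, norm_zero] at hQ0n; norm_num at hQ0n
  have hQne : Q ≠ 0 := fun h => hQ0ne (by rw [h]; simp)
  have hQdeg : Q.natDegree = k - l := by
    have h := Polynomial.natDegree_mul hPne hQne
    rw [← hFPQ, hdegF, hPdeg] at h
    omega
  -- valuation facts for the factors
  have hvP : ∀ j, 0 ≤ (P.coeff j).valuation :=
    fun j => (Padic.norm_le_one_iff_val_nonneg _).1 (hPnorm j)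
  have hvQ : ∀ j, 0 ≤ (Q.coeff j).valuation :=
    fun j => (Padic.norm_le_one_iff_val_nonneg _).1 (hQnorm j)
  have hPl1 : P.coeff l = 1 := by
    have h := hPmon.coeff_natDegree; rwa [hPdeg] at h
  have hvPl : (P.coeff l).valuation = 0 := by rw [hPl1, Padic.valuation_one]
  have hvQ0 : (Q.coeff 0).valuation = 0 := by
    have h := NPG.val_eq_of_norm_eq hQ0ne (one_ne_zero : (1:ℚ_[p]) ≠ 0)
      (by rw [hQ0n, norm_one])
    rw [h, Padic.valuation_one]
  have hF0 : F.coeff 0 = P.coeff 0 * Q.coeff 0 := by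
    rw [hFPQ, Polynomial.mul_coeff_zero]
  have hF0ne : F.coeff 0 ≠ 0 := (hvals 0 (by omega)).1
  have hP0ne : P.coeff 0 ≠ 0 := by
    intro h; rw [hF0, h, zero_mul] at hF0ne; exact hF0ne rfl
  have hvP0 : (P.coeff 0).valuation = (e:ℤ) := by
    have hv := (hvals 0 (by omega)).2
    rw [if_neg (by omega), hF0, Padic.valuation_mul hP0ne hQ0ne, hvQ0, add_zero] at hv
    exact hv
  have hFk : F.coeff k = Q.coeff (k - l) := by
    have h1 := Polynomial.coeff_mul_degree_add_degree P Q
    rw [hPdeg, hQdeg, hPmon.leadingCoeff, one_mul,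
      show l + (k - l) = k by omega] at h1
    rw [hFPQ, h1, Polynomial.leadingCoeff, hQdeg]
  have hQtopne : Q.coeff (k - l) ≠ 0 := by rw [← hFk]; exact (hvals k le_rfl).1
  have hvQtop : (Q.coeff (k - l)).valuation = (e:ℤ) := by
    have hv := (hvals k le_rfl).2
    rwa [if_neg (by omega), hFk] at hv
  -- Gauss valuation, slope parameters (l, e)
  have hl0 : (0:ℤ) < (l:ℤ) := by exact_mod_cast hl1
  have hE0 : (0:ℤ) ≤ (e:ℤ) := by positivity
  have hgmin1F : NPG.gmin (l:ℤ) (e:ℤ) F = (l:ℤ) * (e:ℤ) := by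
    refine le_antisymm ?_ ?_
    · have h := NPG.gmin_le (l:ℤ) (e:ℤ) (hvals l (by omega)).1
      rw [NPG.w, (hvals l (by omega)).2, if_pos rfl] at h
      have h2 : ((l:ℤ)) * 0 + (e:ℤ) * ((l:ℕ):ℤ) = (l:ℤ) * (e:ℤ) := by push_cast; ring
      linarith [h2]
    · obtain ⟨j, hj, hjw⟩ := NPG.exists_gmin (l:ℤ) (e:ℤ) hFne
      have hjk : j ≤ k := by
        by_contra hc; push_neg at hc; exact hj (hFdeg0 j hc)
      rw [← hjw, NPG.w, (hvals j hjk).2]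
      split
      · rename_i hh
        rw [hh]
        have h2 : ((l:ℤ)) * 0 + (e:ℤ) * ((l:ℕ):ℤ) = (l:ℤ) * (e:ℤ) := by push_cast; ring
        linarith [h2]
      · have h2 : (0:ℤ) ≤ (e:ℤ) * (j:ℤ) := by positivity
        linarith [h2]
  have hgminP_le : NPG.gmin (l:ℤ) (e:ℤ) P ≤ (l:ℤ) * (e:ℤ) := by
    have h := NPG.gmin_le (l:ℤ) (e:ℤ) (show P.coeff l ≠ 0 by rw [hPl1]; exact one_ne_zero)
    rw [NPG.w, hvPl] at h
    have h2 : ((l:ℤ)) * 0 + (e:ℤ) * ((l:ℕ):ℤ) = (l:ℤ) * (e:ℤ) := by push_cast; ring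
    linarith [h2]
  have hgminQ_le : NPG.gmin (l:ℤ) (e:ℤ) Q ≤ 0 := by
    have h := NPG.gmin_le (l:ℤ) (e:ℤ) hQ0ne
    rw [NPG.w, hvQ0] at h
    simpa using h
  have hgminQ_ge : 0 ≤ NPG.gmin (l:ℤ) (e:ℤ) Q := by
    obtain ⟨j, hj, hjw⟩ := NPG.exists_gmin (l:ℤ) (e:ℤ) hQne
    rw [← hjw, NPG.w]
    have h1 : 0 ≤ (l:ℤ) * (Q.coeff j).valuation := mul_nonneg hl0.le (hvQ j)
    have h2 : (0:ℤ) ≤ (e:ℤ) * (j:ℤ) := by positivity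
    linarith
  have hmul1 : NPG.gmin (l:ℤ) (e:ℤ) P + NPG.gmin (l:ℤ) (e:ℤ) Q = (l:ℤ) * (e:ℤ) := by
    have h := NPGmul.gmin_mul (m := (l:ℤ)) (t := (e:ℤ)) hl0 hPne hQne
    rw [← hFPQ, hgmin1F] at h
    exact h.symm
  have hgminP1 : NPG.gmin (l:ℤ) (e:ℤ) P = (l:ℤ) * (e:ℤ) := by linarith
  have hwP : ∀ j, P.coeff j ≠ 0 →
      (l:ℤ) * (e:ℤ) ≤ (l:ℤ) * (P.coeff j).valuation + (e:ℤ) * (j:ℤ) := by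
    intro j hj
    have h := NPG.gmin_le (l:ℤ) (e:ℤ) hj
    rw [NPG.w, hgminP1] at h
    exact h
  have hirrP : Irreducible P := by
    refine NPDumas.dumas l (e:ℤ) P hPdeg hl1 hP0ne ?_ ?_ ?_
    · rw [Int.isCoprime_iff_gcd_eq_one]
      rw [Int.gcd_natCast_natCast, Nat.gcd_comm]
      exact hd
    · intro j hj
      rw [hvP0, NPG.w]
      exact hwP j hj
    · rw [NPG.w, hvPl, hvP0]; ring
  -- Gauss valuation, slope parameters (k - l, -e)
  have hM0 : (0:ℤ) < ((k - l : ℕ):ℤ) := by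
    have : 1 ≤ k - l := by omega
    exact_mod_cast this
  have hMkl : ((k - l : ℕ):ℤ) = (k:ℤ) - (l:ℤ) := by
    push_cast [Nat.cast_sub (by omega : l ≤ k)]
    ring
  have hgmin2F : NPG.gmin ((k - l : ℕ):ℤ) (-(e:ℤ)) F = -((e:ℤ) * (l:ℤ)) := by
    refine le_antisymm ?_ ?_
    · have h := NPG.gmin_le ((k - l : ℕ):ℤ) (-(e:ℤ)) (hvals l (by omega)).1
      rw [NPG.w, (hvals l (by omega)).2, if_pos rfl] at h
      have h2 : ((k - l : ℕ):ℤ) * 0 + (-(e:ℤ)) * ((l:ℕ):ℤ) = -((e:ℤ) * (l:ℤ)) := by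
        push_cast; ring
      linarith [h2]
    · obtain ⟨j, hj, hjw⟩ := NPG.exists_gmin ((k - l : ℕ):ℤ) (-(e:ℤ)) hFne
      have hjk : j ≤ k := by
        by_contra hc; push_neg at hc; exact hj (hFdeg0 j hc)
      rw [← hjw, NPG.w, (hvals j hjk).2]
      split
      · rename_i hh
        rw [hh]
        have h2 : ((k - l : ℕ):ℤ) * 0 + (-(e:ℤ)) * ((l:ℕ):ℤ) = -((e:ℤ) * (l:ℤ)) := by
          push_cast; ring
        linarith [h2]
      · rw [hMkl]
        have h1 : 0 ≤ (e:ℤ) * ((k:ℤ) - (j:ℤ)) := by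
          have : (j:ℤ) ≤ (k:ℤ) := by exact_mod_cast hjk
          have h3 : (0:ℤ) ≤ (k:ℤ) - (j:ℤ) := by linarith
          exact mul_nonneg hE0 h3
        linarith [h1]
  have hgminP2_le : NPG.gmin ((k - l : ℕ):ℤ) (-(e:ℤ)) P ≤ -((e:ℤ) * (l:ℤ)) := by
    have h := NPG.gmin_le ((k - l : ℕ):ℤ) (-(e:ℤ))
      (show P.coeff l ≠ 0 by rw [hPl1]; exact one_ne_zero)
    rw [NPG.w, hvPl] at h
    have h2 : ((k - l : ℕ):ℤ) * 0 + (-(e:ℤ)) * ((l:ℕ):ℤ) = -((e:ℤ) * (l:ℤ)) := by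
      push_cast; ring
    linarith [h2]
  have hgminQ2_le : NPG.gmin ((k - l : ℕ):ℤ) (-(e:ℤ)) Q ≤ 0 := by
    have h := NPG.gmin_le ((k - l : ℕ):ℤ) (-(e:ℤ)) hQ0ne
    rw [NPG.w, hvQ0] at h
    simpa using h
  have hgminP2_ge : -((e:ℤ) * (l:ℤ)) ≤ NPG.gmin ((k - l : ℕ):ℤ) (-(e:ℤ)) P := by
    obtain ⟨j, hj, hjw⟩ := NPG.exists_gmin ((k - l : ℕ):ℤ) (-(e:ℤ)) hPne
    rw [← hjw, NPG.w]
    have hjl : j ≤ l := by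
      have := Polynomial.le_natDegree_of_ne_zero hj
      omega
    have h1 : 0 ≤ ((k - l : ℕ):ℤ) * (P.coeff j).valuation := mul_nonneg hM0.le (hvP j)
    have h2 : (e:ℤ) * (j:ℤ) ≤ (e:ℤ) * (l:ℤ) := by
      have : (j:ℤ) ≤ (l:ℤ) := by exact_mod_cast hjl
      exact mul_le_mul_of_nonneg_left this hE0
    linarith
  have hmul2 : NPG.gmin ((k - l : ℕ):ℤ) (-(e:ℤ)) P + NPG.gmin ((k - l : ℕ):ℤ) (-(e:ℤ)) Q
      = -((e:ℤ) * (l:ℤ)) := by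
    have h := NPGmul.gmin_mul (m := ((k - l : ℕ):ℤ)) (t := -(e:ℤ)) hM0 hPne hQne
    rw [← hFPQ, hgmin2F] at h
    exact h.symm
  have hgminQ2 : NPG.gmin ((k - l : ℕ):ℤ) (-(e:ℤ)) Q = 0 := by linarith
  have hwQ : ∀ j, Q.coeff j ≠ 0 →
      (0:ℤ) ≤ ((k - l : ℕ):ℤ) * (Q.coeff j).valuation + (-(e:ℤ)) * (j:ℤ) := by
    intro j hj
    have h := NPG.gmin_le ((k - l : ℕ):ℤ) (-(e:ℤ)) hj
    rw [NPG.w, hgminQ2] at h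
    exact h
  have hirrQ : Irreducible Q := by
    refine NPDumas.dumas (k - l) (-(e:ℤ)) Q hQdeg (by omega) hQ0ne ?_ ?_ ?_
    · refine IsCoprime.neg_right ?_
      rw [Int.isCoprime_iff_gcd_eq_one, Int.gcd_natCast_natCast, Nat.gcd_comm]
      exact hd'
    · intro j hj
      rw [hvQ0, NPG.w, mul_zero]
      exact hwQ j hj
    · rw [NPG.w, hvQtop, hvQ0]; ring
  -- non-associated
  have hnassoc : ¬ Associated P Q := by
    rintro ⟨u, hu⟩
    have hu0 : (u : Polynomial ℚ_[p]).natDegree = 0 :=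
      Polynomial.natDegree_eq_zero_of_isUnit u.isUnit
    have hdeq : l = k - l := by
      have h := congrArg Polynomial.natDegree hu
      rw [Polynomial.natDegree_mul hPne (Units.ne_zero u), hPdeg, hu0, add_zero, hQdeg] at h
      exact h
    obtain ⟨r, hr⟩ : ∃ r : ℚ_[p], (u : Polynomial ℚ_[p]) = Polynomial.C r :=
      ⟨_, Polynomial.eq_C_of_natDegree_eq_zero hu0⟩
    have hrne : r ≠ 0 := by
      intro h; exact Units.ne_zero u (by rw [hr, h, map_zero])
    have hq0 : Q.coeff 0 = P.coeff 0 * r := by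
      rw [← hu, hr, Polynomial.coeff_mul_C]
    have hqt : Q.coeff (k - l) = r := by
      rw [← hu, hr, Polynomial.coeff_mul_C, ← hdeq, hPl1, one_mul]
    have hvr : r.valuation = (e:ℤ) := by rw [← hqt]; exact hvQtop
    have h1 : (0:ℤ) = (e:ℤ) + (e:ℤ) := by
      rw [← hvQ0, hq0, Padic.valuation_mul hP0ne hrne, hvP0, hvr]
    have h2 : (1:ℤ) ≤ (e:ℤ) := by exact_mod_cast he1
    linarith
  exact ⟨P, Q, hirrP, hirrQ, hnassoc, hPdeg, hQdeg, 1, by rw [Units.val_one, one_mul]; exact hFPQ⟩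
end

section
/- Let n, k be positive integers with n ≥ k+2 ≥ 4. Suppose there exist integers l', l'' with 1 ≤ l' < l'' < k and l' + l'' ≠ k, and primes p' > k and p'' > k, such that ord_{p'}(n−l') = 1 and ord_{p''}(n−l'') = 1 (each prime divides the corresponding term exactly to the first power). Then F_{n,k}(x) is irreducible over ℚ. -/
open Polynomial

section Aux
open Finset

lemma coeff_mul_not_dvd {p : ℤ} (hp : Prime p) (g h : Polynomial ℤ) (r s : ℕ)
    (H : ∀ i j : ℕ, i + j = r + s → i ≠ r → p ∣ g.coeff i ∨ p ∣ h.coeff j)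
    (hgr : ¬ p ∣ g.coeff r) (hhs : ¬ p ∣ h.coeff s) :
    ¬ p ∣ (g * h).coeff (r + s) := by
  rw [Polynomial.coeff_mul]
  have hmem : ((r, s) : ℕ × ℕ) ∈ Finset.HasAntidiagonal.antidiagonal (r + s) := by
    simp [Finset.mem_antidiagonal]
  rw [← Finset.add_sum_erase _ _ hmem]
  intro hdvd
  have hrest : p ∣ ∑ x ∈ (Finset.HasAntidiagonal.antidiagonal (r + s)).erase (r, s),
      g.coeff x.1 * h.coeff x.2 := by
    apply Finset.dvd_sum
    intro x hx
    have hx1 := Finset.mem_of_mem_erase hx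
    have hne := Finset.ne_of_mem_erase hx
    rw [Finset.HasAntidiagonal.mem_antidiagonal] at hx1
    have hx1ne : x.1 ≠ r := by
      intro hxr
      apply hne
      have : x.2 = s := by omega
      exact Prod.ext hxr this
    rcases H x.1 x.2 hx1 hx1ne with h1 | h2
    · exact Dvd.dvd.mul_right h1 _
    · exact Dvd.dvd.mul_left h2 _
  have : p ∣ g.coeff r * h.coeff s := (dvd_add_right hrest).mp (by rwa [add_comm] at hdvd)
  rcases hp.dvd_mul.mp this with h1 | h2
  · exact hgr h1
  · exact hhs h2

lemma exists_nondvd_coeff {p : ℤ} (hp : Prime p) (g h : Polynomial ℤ) {l : ℕ}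
    (hnd : ¬ p ∣ (g * h).coeff l) :
    ∃ i, ¬ p ∣ g.coeff i := by
  by_contra hcon
  push_neg at hcon
  apply hnd
  rw [Polynomial.coeff_mul]
  exact Finset.dvd_sum fun x _ => Dvd.dvd.mul_right (hcon x.1) _

lemma key_degree {p : ℤ} (hp : Prime p) {k l : ℕ} (hl : 0 < l) (hlk : l < k)
    (g h : Polynomial ℤ) (hdeg : (g * h).natDegree = k)
    (hg : 0 < g.natDegree) (hh : 0 < h.natDegree)
    (hdvd : ∀ j, j ≠ l → p ∣ (g * h).coeff j)
    (hnd : ¬ p ∣ (g * h).coeff l)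
    (h0 : ¬ p ^ 2 ∣ (g * h).coeff 0) (hk2 : ¬ p ^ 2 ∣ (g * h).coeff k) :
    g.natDegree = l ∨ g.natDegree = k - l := by
  have hg0 : g ≠ 0 := fun h' => by simp [h'] at hg
  have hh0 : h ≠ 0 := fun h' => by simp [h'] at hh
  -- finsets of nondivisible coefficient indices
  set Sg : Finset ℕ := (Finset.range (g.natDegree + 1)).filter (fun i => ¬ p ∣ g.coeff i) with hSg
  set Sh : Finset ℕ := (Finset.range (h.natDegree + 1)).filter (fun i => ¬ p ∣ h.coeff i) with hSh
  have hmemg : ∀ i, ¬ p ∣ g.coeff i → i ∈ Sg := by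
    intro i hi
    have : i ≤ g.natDegree := by
      by_contra hc
      push_neg at hc
      exact hi (by rw [Polynomial.coeff_eq_zero_of_natDegree_lt hc]; exact dvd_zero p)
    simp [hSg, Finset.mem_filter, Finset.mem_range]
    exact ⟨by omega, hi⟩
  have hmemh : ∀ i, ¬ p ∣ h.coeff i → i ∈ Sh := by
    intro i hi
    have : i ≤ h.natDegree := by
      by_contra hc
      push_neg at hc
      exact hi (by rw [Polynomial.coeff_eq_zero_of_natDegree_lt hc]; exact dvd_zero p)
    simp [hSh, Finset.mem_filter, Finset.mem_range]
    exact ⟨by omega, hi⟩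
  have hneg : Sg.Nonempty := by
    obtain ⟨i, hi⟩ := exists_nondvd_coeff hp g h hnd
    exact ⟨i, hmemg i hi⟩
  have hneh : Sh.Nonempty := by
    obtain ⟨i, hi⟩ := exists_nondvd_coeff hp h g (by rwa [mul_comm])
    exact ⟨i, hmemh i hi⟩
  set rg := Sg.min' hneg with hrg
  set Rg := Sg.max' hneg with hRg
  set rh := Sh.min' hneh with hrh
  set Rh := Sh.max' hneh with hRh
  have hgr : ¬ p ∣ g.coeff rg := (Finset.mem_filter.mp (Sg.min'_mem hneg)).2
  have hgR : ¬ p ∣ g.coeff Rg := (Finset.mem_filter.mp (Sg.max'_mem hneg)).2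
  have hhr : ¬ p ∣ h.coeff rh := (Finset.mem_filter.mp (Sh.min'_mem hneh)).2
  have hhR : ¬ p ∣ h.coeff Rh := (Finset.mem_filter.mp (Sh.max'_mem hneh)).2
  have hglt : ∀ i, i < rg → p ∣ g.coeff i := by
    intro i hi; by_contra hc; exact absurd (Sg.min'_le i (hmemg i hc)) (by omega)
  have hggt : ∀ i, Rg < i → p ∣ g.coeff i := by
    intro i hi; by_contra hc; exact absurd (Sg.le_max' i (hmemg i hc)) (by omega)
  have hhlt : ∀ i, i < rh → p ∣ h.coeff i := by
    intro i hi; by_contra hc; exact absurd (Sh.min'_le i (hmemh i hc)) (by omega)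
  have hhgt : ∀ i, Rh < i → p ∣ h.coeff i := by
    intro i hi; by_contra hc; exact absurd (Sh.le_max' i (hmemh i hc)) (by omega)
  have hmin : rg + rh = l := by
    by_contra hc
    apply coeff_mul_not_dvd hp g h rg rh ?_ hgr hhr (hdvd _ hc)
    intro i j hij hine
    rcases lt_or_gt_of_ne hine with h1 | h1
    · exact Or.inl (hglt i h1)
    · exact Or.inr (hhlt j (by omega))
  have hmax : Rg + Rh = l := by
    by_contra hc
    apply coeff_mul_not_dvd hp g h Rg Rh ?_ hgR hhR (hdvd _ hc)
    intro i j hij hine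
    rcases lt_or_gt_of_ne hine with h1 | h1
    · exact Or.inr (hhgt j (by omega))
    · exact Or.inl (hggt i h1)
  have hrgRg : rg ≤ Rg := Sg.min'_le (Sg.max' hneg) (Sg.max'_mem hneg)
  have hrhRh : rh ≤ Rh := Sh.min'_le (Sh.max' hneh) (Sh.max'_mem hneh)
  have heqg : rg = Rg := by omega
  have heqh : rh = Rh := by omega
  have hgall : ∀ i, i ≠ rg → p ∣ g.coeff i := by
    intro i hi
    rcases lt_or_gt_of_ne hi with h1 | h1
    · exact hglt i h1
    · exact hggt i (by omega)
  have hhall : ∀ i, i ≠ rh → p ∣ h.coeff i := by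
    intro i hi
    rcases lt_or_gt_of_ne hi with h1 | h1
    · exact hhlt i h1
    · exact hhgt i (by omega)
  -- constant coefficient
  have hc0 : rg = 0 ∨ rh = 0 := by
    by_contra hc
    push_neg at hc
    apply h0
    rw [Polynomial.mul_coeff_zero, pow_two]
    exact mul_dvd_mul (hgall 0 (fun h => hc.1 h.symm))
      (hhall 0 (fun h => hc.2 h.symm))
  have hdegsum : g.natDegree + h.natDegree = k := by
    rw [← hdeg, Polynomial.natDegree_mul hg0 hh0]
  have hlead : (g * h).coeff k = g.coeff g.natDegree * h.coeff h.natDegree := by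
    rw [← hdegsum, Polynomial.coeff_mul_degree_add_degree]
    rfl
  have hckk : g.natDegree = rg ∨ h.natDegree = rh := by
    by_contra hc
    push_neg at hc
    apply hk2
    rw [hlead, pow_two]
    exact mul_dvd_mul (hgall _ hc.1) (hhall _ hc.2)
  rcases hc0 with h1 | h1
  · -- rg = 0, rh = l
    have hrhl : rh = l := by omega
    rcases hckk with h2 | h2
    · omega
    · right; omega
  · -- rh = 0, rg = l
    have hrgl : rg = l := by omega
    rcases hckk with h2 | h2
    · left; omega
    · omega

-- basic divisibility setup from the padic hypothesis
lemma padic_facts (p n k l : ℕ) (hp : p.Prime) (hpk : k < p) (hn : n ≥ k + 2)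
    (hl : l ≤ k) (hord : padicValNat p (n - l) = 1) :
    p ∣ (n - l) ∧ ¬ p ^ 2 ∣ (n - l) ∧ ∀ m ≤ k, m ≠ l → ¬ p ∣ (n - m) := by
  haveI : Fact p.Prime := ⟨hp⟩
  have hnl : n - l ≠ 0 := by omega
  have h1 : p ∣ n - l := by
    have := (padicValNat_dvd_iff 1 (n - l)).mpr (Or.inr (le_of_eq hord.symm))
    simpa using this
  have h2 : ¬ p ^ 2 ∣ (n - l) := by
    intro hc
    rcases (padicValNat_dvd_iff 2 (n - l)).mp hc with h | h
    · exact hnl h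
    · omega
  refine ⟨h1, h2, fun m hm hne hdvd => ?_⟩
  rcases Nat.lt_or_ge m l with hml | hml
  · have hd : p ∣ (n - m) - (n - l) := Nat.dvd_sub hdvd h1
    have he : (n - m) - (n - l) = l - m := by omega
    rw [he] at hd
    have := Nat.le_of_dvd (by omega) hd
    omega
  · have hlm : l < m := by omega
    have hd : p ∣ (n - l) - (n - m) := Nat.dvd_sub h1 hdvd
    have he : (n - l) - (n - m) = m - l := by omega
    rw [he] at hd
    have := Nat.le_of_dvd (by omega) hd
    omega

-- not dvd square of an "exactly one factor" product
lemma sq_not_dvd_prod {p : ℕ} (hp : p.Prime) {s : Finset ℕ} {f : ℕ → ℕ} {i0 : ℕ}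
    (hi0 : i0 ∈ s) (h1 : ¬ p ^ 2 ∣ f i0) (h2 : ∀ i ∈ s, i ≠ i0 → ¬ p ∣ f i) :
    ¬ p ^ 2 ∣ ∏ i ∈ s, f i := by
  rw [← Finset.mul_prod_erase s f hi0]
  intro hc
  have hR : ¬ p ∣ ∏ i ∈ s.erase i0, f i := by
    intro hd
    obtain ⟨i, hi, hdi⟩ := (hp.prime.dvd_finset_prod_iff f).mp hd
    exact h2 i (Finset.mem_of_mem_erase hi) (Finset.ne_of_mem_erase hi) hdi
  have hcop : Nat.Coprime (p ^ 2) (∏ i ∈ s.erase i0, f i) :=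
    Nat.Coprime.pow_left 2 ((Nat.Prime.coprime_iff_not_dvd hp).mpr hR)
  exact h1 (hcop.dvd_of_dvd_mul_right hc)

lemma not_dvd_fact {p k t : ℕ} (hp : p.Prime) (hpk : k < p) (ht : t ≤ k) : ¬ p ∣ t.factorial := by
  rw [Nat.Prime.dvd_factorial hp]
  omega

-- p ∣ C(n, j) for l < j ≤ k
lemma dvd_choose_of_gt {p n k l j : ℕ} (hp : p.Prime) (hpk : k < p) (hdl : p ∣ n - l)
    (hlj : l < j) (hjk : j ≤ k) : p ∣ n.choose j := by
  have hd : p ∣ n.descFactorial j := by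
    rw [Nat.descFactorial_eq_prod_range]
    exact dvd_trans hdl (Finset.dvd_prod_of_mem _ (Finset.mem_range.mpr hlj))
  rw [Nat.descFactorial_eq_factorial_mul_choose] at hd
  rcases (Nat.Prime.dvd_mul hp).mp hd with h | h
  · exact absurd h (not_dvd_fact hp hpk hjk)
  · exact h

-- p ∣ C(n-j-1, k-j) for j < l (l < k, n large)
lemma dvd_choose_of_lt {p n k l j : ℕ} (hp : p.Prime) (hpk : k < p) (hdl : p ∣ n - l)
    (hn : n ≥ k + 2) (hjl : j < l) (hlk : l < k) : p ∣ (n - j - 1).choose (k - j) := by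
  have hd : p ∣ (n - j - 1).descFactorial (k - j) := by
    rw [Nat.descFactorial_eq_prod_range]
    have hmem : l - j - 1 ∈ Finset.range (k - j) := Finset.mem_range.mpr (by omega)
    have heq : n - j - 1 - (l - j - 1) = n - l := by omega
    have h2 := Finset.dvd_prod_of_mem (fun i => n - j - 1 - i) hmem
    rw [heq] at h2
    exact dvd_trans hdl h2
  rw [Nat.descFactorial_eq_factorial_mul_choose] at hd
  rcases (Nat.Prime.dvd_mul hp).mp hd with h | h
  · exact absurd h (not_dvd_fact hp hpk (by omega))
  · exact h

-- p ∤ C(n, l)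
lemma not_dvd_choose_l {p n k l : ℕ} (hp : p.Prime) (hpk : k < p) (hn : n ≥ k + 2)
    (hlk : l < k) (hnot : ∀ m ≤ k, m ≠ l → ¬ p ∣ (n - m)) : ¬ p ∣ n.choose l := by
  intro hc
  have hd : p ∣ n.descFactorial l := by
    rw [Nat.descFactorial_eq_factorial_mul_choose]
    exact Dvd.dvd.mul_left hc _
  rw [Nat.descFactorial_eq_prod_range] at hd
  obtain ⟨i, hi, hdi⟩ := (hp.prime.dvd_finset_prod_iff _).mp hd
  rw [Finset.mem_range] at hi
  exact hnot i (by omega) (by omega) hdi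

-- p ∤ C(n-l-1, k-l)
lemma not_dvd_choose_l2 {p n k l : ℕ} (hp : p.Prime) (hpk : k < p) (hn : n ≥ k + 2)
    (hlk : l < k) (hnot : ∀ m ≤ k, m ≠ l → ¬ p ∣ (n - m)) : ¬ p ∣ (n - l - 1).choose (k - l) := by
  intro hc
  have hd : p ∣ (n - l - 1).descFactorial (k - l) := by
    rw [Nat.descFactorial_eq_factorial_mul_choose]
    exact Dvd.dvd.mul_left hc _
  rw [Nat.descFactorial_eq_prod_range] at hd
  obtain ⟨i, hi, hdi⟩ := (hp.prime.dvd_finset_prod_iff _).mp hd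
  rw [Finset.mem_range] at hi
  have heq : n - l - 1 - i = n - (l + 1 + i) := by omega
  rw [heq] at hdi
  exact hnot (l + 1 + i) (by omega) (by omega) hdi

-- p^2 ∤ C(n-1, k)
lemma sq_not_dvd_choose0 {p n k l : ℕ} (hp : p.Prime) (hpk : k < p) (hn : n ≥ k + 2)
    (hl1 : 1 ≤ l) (hlk : l < k) (hnd2 : ¬ p ^ 2 ∣ (n - l))
    (hnot : ∀ m ≤ k, m ≠ l → ¬ p ∣ (n - m)) : ¬ p ^ 2 ∣ (n - 1).choose k := by
  intro hc
  have hd : p ^ 2 ∣ (n - 1).descFactorial k := by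
    rw [Nat.descFactorial_eq_factorial_mul_choose]
    exact Dvd.dvd.mul_left hc _
  rw [Nat.descFactorial_eq_prod_range] at hd
  revert hd
  apply sq_not_dvd_prod hp (i0 := l - 1) (Finset.mem_range.mpr (by omega))
  · have heq : n - 1 - (l - 1) = n - l := by omega
    rw [heq]; exact hnd2
  · intro i hi hne
    rw [Finset.mem_range] at hi
    have heq : n - 1 - i = n - (i + 1) := by omega
    rw [heq]
    exact hnot (i + 1) (by omega) (by omega)

-- p^2 ∤ C(n, k)
lemma sq_not_dvd_choosek {p n k l : ℕ} (hp : p.Prime) (hpk : k < p) (hn : n ≥ k + 2)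
    (hl1 : 1 ≤ l) (hlk : l < k) (hnd2 : ¬ p ^ 2 ∣ (n - l))
    (hnot : ∀ m ≤ k, m ≠ l → ¬ p ∣ (n - m)) : ¬ p ^ 2 ∣ n.choose k := by
  intro hc
  have hd : p ^ 2 ∣ n.descFactorial k := by
    rw [Nat.descFactorial_eq_factorial_mul_choose]
    exact Dvd.dvd.mul_left hc _
  rw [Nat.descFactorial_eq_prod_range] at hd
  revert hd
  apply sq_not_dvd_prod hp (i0 := l) (Finset.mem_range.mpr (by omega))
  · exact hnd2
  · intro i hi hne
    rw [Finset.mem_range] at hi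
    exact hnot i (by omega) hne

lemma natAbs_b (a : ℕ → ℤ) (n k j : ℕ) :
    (a j * c n k j).natAbs = (a j).natAbs * (n.choose j * (n - j - 1).choose (k - j)) := by
  simp [c, Int.natAbs_mul, Int.natAbs_pow, mul_assoc]

lemma coeff_facts (p n k l : ℕ) (a : ℕ → ℤ) (hp : p.Prime) (hpk : k < p) (hn : n ≥ k + 2)
    (hl1 : 1 ≤ l) (hlk : l < k) (hord : padicValNat p (n - l) = 1)
    (ha : ∀ j ≤ k, a j ≠ 0 ∧ ∀ q : ℕ, q.Prime → (q : ℤ) ∣ a j → q ≤ k) :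
    (∀ j ≤ k, j ≠ l → (p:ℤ) ∣ a j * c n k j) ∧ ¬ (p:ℤ) ∣ a l * c n k l ∧
    ¬ (p:ℤ)^2 ∣ a 0 * c n k 0 ∧ ¬ (p:ℤ)^2 ∣ a k * c n k k := by
  obtain ⟨hdl, hnd2, hnot⟩ := padic_facts p n k l hp hpk hn (le_of_lt hlk) hord
  have hpa : ∀ j ≤ k, ¬ p ∣ (a j).natAbs := fun j hj hd => by
    have := (ha j hj).2 p hp (Int.natCast_dvd.mpr hd); omega
  have hb := natAbs_b a n k
  refine ⟨?_, ?_, ?_, ?_⟩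
  · intro j hj hne
    rw [Int.natCast_dvd, hb]
    rcases Nat.lt_or_ge j l with h1 | h1
    · exact Dvd.dvd.mul_left (Dvd.dvd.mul_left (dvd_choose_of_lt hp hpk hdl hn h1 hlk) _) _
    · have h2 : l < j := by omega
      exact Dvd.dvd.mul_left (Dvd.dvd.mul_right (dvd_choose_of_gt hp hpk hdl h2 hj) _) _
  · rw [Int.natCast_dvd, hb]
    intro hd
    rcases (Nat.Prime.dvd_mul hp).mp hd with h | h
    · exact hpa l (le_of_lt hlk) h
    rcases (Nat.Prime.dvd_mul hp).mp h with h | h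
    · exact not_dvd_choose_l hp hpk hn hlk hnot h
    · exact not_dvd_choose_l2 hp hpk hn hlk hnot h
  · intro hd
    rw [show ((p:ℤ))^2 = ((p^2 : ℕ) : ℤ) by push_cast; ring, Int.natCast_dvd, hb] at hd
    have hcop : Nat.Coprime (p^2) (a 0).natAbs :=
      Nat.Coprime.pow_left 2 ((Nat.Prime.coprime_iff_not_dvd hp).mpr (hpa 0 (by omega)))
    have h2 := hcop.dvd_of_dvd_mul_left hd
    simp at h2
    exact sq_not_dvd_choose0 hp hpk hn hl1 hlk hnd2 hnot h2
  · intro hd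
    rw [show ((p:ℤ))^2 = ((p^2 : ℕ) : ℤ) by push_cast; ring, Int.natCast_dvd, hb] at hd
    have hcop : Nat.Coprime (p^2) (a k).natAbs :=
      Nat.Coprime.pow_left 2 ((Nat.Prime.coprime_iff_not_dvd hp).mpr (hpa k le_rfl))
    have h2 := hcop.dvd_of_dvd_mul_left hd
    simp at h2
    exact sq_not_dvd_choosek hp hpk hn hl1 hlk hnd2 hnot h2

end Aux

theorem F_irreducible_of_two_terms (n k : ℕ) (hk : k + 2 ≥ 4) (hn : n ≥ k + 2)
    (l' l'' : ℕ) (hl' : 1 ≤ l') (hl'l'' : l' < l'') (hl''k : l'' < k) (hsum : l' + l'' ≠ k)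
    (p' p'' : ℕ) (hp' : p'.Prime) (hp'' : p''.Prime) (hp'k : k < p') (hp''k : k < p'')
    (hordl' : padicValNat p' (n - l') = 1) (hordl'' : padicValNat p'' (n - l'') = 1)
    (a : ℕ → ℤ) (ha : ∀ j ≤ k, a j ≠ 0 ∧ ∀ q : ℕ, q.Prime → (q : ℤ) ∣ a j → q ≤ k) :
    Irreducible (F n k a) := by
  have hk2 : 2 ≤ k := by omega
  set fZ : Polynomial ℤ := ∑ j ∈ Finset.range (k + 1), Polynomial.monomial j (a j * c n k j) with hfZ
  have hmap : fZ.map (Int.castRingHom ℚ) = F n k a := by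
    rw [hfZ, Polynomial.map_sum]
    unfold F
    apply Finset.sum_congr rfl
    intro j _
    rw [Polynomial.map_monomial, ← Polynomial.C_mul_X_pow_eq_monomial]
    have : ((Int.castRingHom ℚ) (a j * c n k j)) = ((a j * c n k j : ℤ) : ℚ) := rfl
    rw [this]
  have hcoeff : ∀ m, fZ.coeff m = if m ∈ Finset.range (k + 1) then a m * c n k m else 0 := by
    intro m
    rw [hfZ, Polynomial.finset_sum_coeff]
    simp only [Polynomial.coeff_monomial]
    exact Finset.sum_ite_eq' (Finset.range (k + 1)) m (fun j => a j * c n k j)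
  have hcle : ∀ m, m ≤ k → fZ.coeff m = a m * c n k m := fun m hm => by
    rw [hcoeff, if_pos (Finset.mem_range.mpr (by omega))]
  have hcgt : ∀ m, k < m → fZ.coeff m = 0 := fun m hm => by
    rw [hcoeff, if_neg (fun hc => by rw [Finset.mem_range] at hc; omega)]
  have hbk : a k * c n k k ≠ 0 := by
    have h1 : a k ≠ 0 := (ha k le_rfl).1
    have h2 : c n k k ≠ 0 := by
      simp only [c, Nat.sub_self, pow_zero, one_mul, Nat.choose_zero_right, Nat.cast_one, mul_one]
      exact_mod_cast (Nat.choose_pos (by omega : k ≤ n)).ne'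
    exact mul_ne_zero h1 h2
  have hfZne : fZ ≠ 0 := fun h => hbk (by rw [← hcle k le_rfl, h, Polynomial.coeff_zero])
  have hdeg : fZ.natDegree = k := by
    apply le_antisymm
    · exact Polynomial.natDegree_le_iff_coeff_eq_zero.mpr hcgt
    · exact Polynomial.le_natDegree_of_ne_zero (by rw [hcle k le_rfl]; exact hbk)
  set q : Polynomial ℤ := fZ.primPart with hq
  have hqprim : q.IsPrimitive := fZ.isPrimitive_primPart
  have heqq : fZ = Polynomial.C fZ.content * q := fZ.eq_C_content_mul_primPart
  have hqdeg : q.natDegree = k := by rw [hq, Polynomial.natDegree_primPart, hdeg]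
  have hqcoeff : ∀ m, fZ.coeff m = fZ.content * q.coeff m := fun m => by
    conv_lhs => rw [heqq]
    rw [Polynomial.coeff_C_mul]
  have transfer : ∀ (p l : ℕ), p.Prime → k < p → 1 ≤ l → l < k → padicValNat p (n - l) = 1 →
      ∀ g h : Polynomial ℤ, q = g * h → 0 < g.natDegree → 0 < h.natDegree →
      g.natDegree = l ∨ g.natDegree = k - l := by
    intro p l hp hpk hl1 hlk hord g h hgh hg hh
    obtain ⟨H1, H2, H3, H4⟩ := coeff_facts p n k l a hp hpk hn hl1 hlk hord ha
    have hpz : Prime (p : ℤ) := Int.prime_iff_natAbs_prime.mpr (by simpa using hp)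
    have hcont : ¬ (p : ℤ) ∣ fZ.content := by
      intro hd
      apply H2
      rw [← hcle l (by omega), hqcoeff l]
      exact Dvd.dvd.mul_right hd _
    have hbtrans : ∀ j, j ≤ k → ((p : ℤ) ∣ a j * c n k j ↔ (p : ℤ) ∣ q.coeff j) := by
      intro j hj
      rw [← hcle j hj, hqcoeff j]
      constructor
      · intro hd
        rcases hpz.dvd_mul.mp hd with h1 | h1
        · exact absurd h1 hcont
        · exact h1
      · intro hd
        exact Dvd.dvd.mul_left hd _
    have hql : ∀ j, j ≠ l → (p : ℤ) ∣ (g * h).coeff j := by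
      intro j hj
      rw [← hgh]
      rcases le_or_gt j k with h1 | h1
      · exact (hbtrans j h1).mp (H1 j h1 hj)
      · rw [Polynomial.coeff_eq_zero_of_natDegree_lt (by omega)]
        exact dvd_zero _
    have hqlnd : ¬ (p : ℤ) ∣ (g * h).coeff l := by
      rw [← hgh]
      intro hd
      exact H2 ((hbtrans l (by omega)).mpr hd)
    have hq0 : ¬ (p : ℤ) ^ 2 ∣ (g * h).coeff 0 := by
      rw [← hgh]
      intro hd
      apply H3
      rw [← hcle 0 (by omega), hqcoeff 0]
      exact Dvd.dvd.mul_left hd _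
    have hqk : ¬ (p : ℤ) ^ 2 ∣ (g * h).coeff k := by
      rw [← hgh]
      intro hd
      apply H4
      rw [← hcle k le_rfl, hqcoeff k]
      exact Dvd.dvd.mul_left hd _
    have hdeg' : (g * h).natDegree = k := by rw [← hgh]; exact hqdeg
    exact key_degree hpz (by omega) hlk g h hdeg' hg hh hql hqlnd hq0 hqk
  have hirrq : Irreducible q := by
    constructor
    · exact Polynomial.not_isUnit_of_natDegree_pos q (by omega)
    · intro g h hgh
      by_cases hg0 : g.natDegree = 0
      · left
        have hgC := Polynomial.eq_C_of_natDegree_eq_zero hg0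
        rw [hgC]
        apply Polynomial.isUnit_C.mpr
        apply hqprim
        exact ⟨h, by rw [hgh, ← hgC]⟩
      by_cases hh0 : h.natDegree = 0
      · right
        have hhC := Polynomial.eq_C_of_natDegree_eq_zero hh0
        rw [hhC]
        apply Polynomial.isUnit_C.mpr
        apply hqprim
        exact ⟨g, by rw [hgh, ← hhC, mul_comm]⟩
      · exfalso
        have hgpos : 0 < g.natDegree := by omega
        have hhpos : 0 < h.natDegree := by omega
        have d1 := transfer p' l' hp' hp'k hl' (by omega) hordl' g h hgh hgpos hhpos
        have d2 := transfer p'' l'' hp'' hp''k (by omega) hl''k hordl'' g h hgh hgpos hhpos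
        omega
  have hirrmap : Irreducible (q.map (Int.castRingHom ℚ)) :=
    (Polynomial.IsPrimitive.Int.irreducible_iff_irreducible_map_cast hqprim).mp hirrq
  have hcontne : fZ.content ≠ 0 := fun h => hfZne (Polynomial.content_eq_zero_iff.mp h)
  have hcont0 : ((fZ.content : ℚ)) ≠ 0 := by exact_mod_cast hcontne
  have hFeq : F n k a = Polynomial.C ((fZ.content : ℚ)) * q.map (Int.castRingHom ℚ) := by
    rw [← hmap]
    conv_lhs => rw [heqq]
    rw [Polynomial.map_mul, Polynomial.map_C]
    rfl
  have hu : IsUnit (Polynomial.C ((fZ.content : ℚ))) :=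
    Polynomial.isUnit_C.mpr (isUnit_iff_ne_zero.mpr hcont0)
  have hassoc : Associated (q.map (Int.castRingHom ℚ)) (F n k a) := by
    rw [hFeq]
    exact ⟨hu.unit, by rw [IsUnit.unit_spec, mul_comm]⟩
  exact hassoc.irreducible hirrmap
end

section
/- Let n, k be positive integers with n ≥ k+2 ≥ 4. Let p > k be a prime and e > 0 be such that p^e exactly divides n (i.e., e = ord_p(n)). Then every irreducible factor of F_{n,k}(x) over the p-adic field ℚ_p has degree a multiple of k/D, where D = gcd(e, k). -/
open Polynomial

lemma newton_slope {L : Type*} [Field L] {Γ : Type*} [LinearOrderedCommGroupWithZero Γ]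
    (v : Valuation L Γ) (k : ℕ) (hk : 0 < k) (γ : Γ) (hγ0 : γ ≠ 0) (hγ1 : γ < 1)
    (e : ℕ) (he : 0 < e) (B : ℕ → L)
    (hB0 : v (B 0) = 1) (hBj : ∀ j, 1 ≤ j → j ≤ k → v (B j) = γ ^ e)
    (α : L) (hsum : ∑ j ∈ Finset.range (k+1), B j * α ^ j = 0) :
    v α ^ k * γ ^ e = 1 := by
  have hγe0 : γ ^ e ≠ 0 := pow_ne_zero _ hγ0
  have hγe1 : γ ^ e < 1 := pow_lt_one₀ zero_le' hγ1 he.ne'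
  have hα : α ≠ 0 := by
    rintro rfl
    have : ∑ j ∈ Finset.range (k+1), B j * (0:L) ^ j = B 0 := by
      rw [Finset.sum_eq_single_of_mem 0 (Finset.mem_range.2 (Nat.succ_pos k))]
      · simp
      · intro j _ hj; simp [zero_pow hj]
    rw [this] at hsum
    rw [hsum, map_zero] at hB0
    exact zero_ne_one hB0
  set T := v α with hT
  have hT0 : T ≠ 0 := by simpa [hT] using (Valuation.ne_zero_iff v).2 hα
  have hterm : ∀ j, 1 ≤ j → j ≤ k → v (B j * α ^ j) = γ ^ e * T ^ j :=
    fun j h1 hjk => by rw [map_mul, map_pow, hBj j h1 hjk]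
  rcases lt_trichotomy (γ ^ e * T ^ k) 1 with hlt | heq | hgt
  · exfalso
    have hsmall : ∀ j, 1 ≤ j → j ≤ k → γ ^ e * T ^ j < 1 := by
      intro j h1 hjk
      by_cases hT1 : T ≤ 1
      · calc γ ^ e * T ^ j ≤ γ ^ e * 1 :=
              mul_le_mul_right (pow_le_one₀ zero_le' hT1) _
          _ < 1 := by rwa [mul_one]
      · push_neg at hT1
        calc γ ^ e * T ^ j ≤ γ ^ e * T ^ k :=
              mul_le_mul_right (pow_le_pow_right₀ hT1.le hjk) _
          _ < 1 := hlt
    have h0 : B 0 * α ^ 0 = -∑ i ∈ Finset.range k, B (i+1) * α ^ (i+1) := by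
      have := Finset.sum_range_succ' (fun j => B j * α ^ j) k
      rw [hsum] at this
      linear_combination -this
    have : v (B 0 * α ^ 0) < 1 := by
      rw [h0, Valuation.map_neg]
      refine Valuation.map_sum_lt v one_ne_zero (fun i hi => ?_)
      rw [hterm (i+1) (Nat.succ_pos i) (Nat.succ_le_of_lt (Finset.mem_range.1 hi))]
      exact hsmall (i+1) (Nat.succ_pos i) (Nat.succ_le_of_lt (Finset.mem_range.1 hi))
    rw [pow_zero, mul_one, hB0] at this
    exact lt_irrefl 1 this
  · rw [mul_comm] at heq; exact heq
  · exfalso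
    have hT1 : 1 < T := by
      by_contra h
      push_neg at h
      have : γ ^ e * T ^ k ≤ γ ^ e * 1 := mul_le_mul_right (pow_le_one₀ zero_le' h) _
      rw [mul_one] at this
      exact absurd hgt (not_lt.2 (this.trans hγe1.le))
    have hne : γ ^ e * T ^ k ≠ 0 := mul_ne_zero hγe0 (pow_ne_zero _ hT0)
    have hk' : B k * α ^ k = -∑ i ∈ Finset.range k, B i * α ^ i := by
      have := Finset.sum_range_succ (fun j => B j * α ^ j) k
      rw [hsum] at this
      linear_combination -this
    have hsm : ∀ i ∈ Finset.range k, v (B i * α ^ i) < γ ^ e * T ^ k := by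
      intro i hi
      rcases Nat.eq_zero_or_pos i with rfl | hi1
      · rw [pow_zero, mul_one, hB0]; exact hgt
      · rw [hterm i hi1 (Finset.mem_range.1 hi).le]
        exact mul_lt_mul_of_pos_left (pow_lt_pow_right₀ hT1 (Finset.mem_range.1 hi)) (zero_lt_iff.2 hγe0)
    have : v (B k * α ^ k) < γ ^ e * T ^ k := by
      rw [hk', Valuation.map_neg]
      exact Valuation.map_sum_lt v hne hsm
    rw [hterm k hk le_rfl] at this
    exact lt_irrefl _ this

lemma coeff_fact (n k : ℕ) (hk : 1 ≤ k) (hn : n ≥ k + 2) (p : ℕ) (hp : p.Prime) (hpk : k < p)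
    (e : ℕ) (he : e = padicValNat p n) (hepos : 0 < e)
    (a : ℕ → ℤ) (ha : ∀ j ≤ k, a j ≠ 0 ∧ ∀ q : ℕ, q.Prime → (q : ℤ) ∣ a j → q ≤ k) :
    (¬ (p:ℤ) ∣ a 0 * c n k 0) ∧
      ∀ j, 1 ≤ j → j ≤ k → ∃ M : ℤ, a j * c n k j = (p:ℤ)^e * M ∧ ¬ (p:ℤ) ∣ M := by
  have hn0 : n ≠ 0 := by omega
  have hpn : p ∣ n := by
    by_contra h
    rw [padicValNat.eq_zero_of_not_dvd h] at he; omega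
  have hnm : ∀ m, 1 ≤ m → m ≤ k → ¬ p ∣ (n - m) := by
    intro m h1 h2 hdvd
    have hmn : m ≤ n := by omega
    have : p ∣ m := by
      have := Nat.dvd_sub hpn hdvd
      rwa [Nat.sub_sub_self hmn] at this
    have := Nat.le_of_dvd (by omega) this
    omega
  have hdesc : ∀ j t, j + t ≤ k → ¬ p ∣ (n - j - 1).descFactorial t := by
    intro j t hjt hdvd
    rw [Nat.descFactorial_eq_prod_range] at hdvd
    obtain ⟨i, hi, hdvd⟩ := (hp.prime.dvd_finset_prod_iff _).1 hdvd
    rw [Finset.mem_range] at hi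
    have : n - j - 1 - i = n - (j + 1 + i) := by omega
    rw [this] at hdvd
    exact hnm (j + 1 + i) (by omega) (by omega) hdvd
  have hchoose2 : ∀ j, j ≤ k → ¬ p ∣ (n - j - 1).choose (k - j) := by
    intro j hj hdvd
    refine hdesc j (k - j) (by omega) ?_
    rw [Nat.descFactorial_eq_factorial_mul_choose]
    exact hdvd.mul_left _
  have hpa : ∀ j, j ≤ k → ¬ (p:ℤ) ∣ a j := by
    intro j hj hdvd
    exact absurd ((ha j hj).2 p hp hdvd) (by omega)
  have hpint : Prime (p : ℤ) := Nat.prime_iff_prime_int.1 hp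
  constructor
  · intro hdvd
    have hc0 : c n k 0 = (-1) ^ k * ((n - 1).choose k : ℤ) := by
      simp [c]
    rw [hc0] at hdvd
    rcases hpint.dvd_mul.1 hdvd with h | h
    · exact hpa 0 (by omega) h
    · rcases hpint.dvd_mul.1 h with h' | h'
      · exact hpint.not_unit (isUnit_of_dvd_unit h' (isUnit_one.neg.pow _))
      · have : (p:ℤ) ∣ ((n - 0 - 1).choose (k - 0) : ℤ) := by simpa using h'
        rw [Int.natCast_dvd_natCast] at this
        exact hchoose2 0 (by omega) this
  · intro j h1 hjk
    set n0 := n / p ^ e with hn0def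
    have hfac : n.factorization p = e := by rw [Nat.factorization_def n hp]; omega
    have hne : n = p ^ e * n0 := by
      rw [hn0def, ← hfac]
      exact (Nat.ordProj_mul_ordCompl_eq_self n p).symm
    have hpn0 : ¬ p ∣ n0 := by
      rw [hn0def, ← hfac]
      exact Nat.not_dvd_ordCompl hp hn0
    have hdj : n.descFactorial j = n * (n-1).descFactorial (j-1) := by
      obtain ⟨n', rfl⟩ : ∃ n', n = n' + 1 := ⟨n-1, by omega⟩
      obtain ⟨j', rfl⟩ : ∃ j', j = j' + 1 := ⟨j-1, by omega⟩
      rw [Nat.succ_descFactorial_succ]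
      simp
    have hkey : j.factorial * n.choose j = n * (n-1).descFactorial (j-1) := by
      rw [← hdj, ← Nat.descFactorial_eq_factorial_mul_choose]
    have hpfact : ¬ p ∣ j.factorial := by
      intro h
      have := (Nat.Prime.dvd_factorial hp).1 h
      omega
    have hpD : ¬ p ∣ (n-1).descFactorial (j-1) := by
      have : n - 1 = n - 0 - 1 := by omega
      rw [this]
      exact hdesc 0 (j-1) (by omega)
    have hdvd_choose : p ^ e ∣ n.choose j := by
      have h1' : p ^ e ∣ j.factorial * n.choose j := by
        rw [hkey, hne]; exact Dvd.dvd.mul_right ⟨n0, rfl⟩ _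
      have hcop : Nat.Coprime (p ^ e) j.factorial :=
        Nat.Coprime.pow_left _ ((Nat.Prime.coprime_iff_not_dvd hp).2 hpfact)
      exact (Nat.Coprime.dvd_of_dvd_mul_left hcop h1')
    obtain ⟨m, hm⟩ := hdvd_choose
    have hpm : ¬ p ∣ m := by
      intro hdvd
      have hcancel : j.factorial * m = n0 * (n-1).descFactorial (j-1) := by
        have : p ^ e * (j.factorial * m) = p ^ e * (n0 * (n-1).descFactorial (j-1)) := by
          rw [show p ^ e * (j.factorial * m) = j.factorial * (p ^ e * m) by ring, ← hm, hkey,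
            hne]; ring
        exact Nat.eq_of_mul_eq_mul_left (Nat.pow_pos hp.pos) this
      have : p ∣ n0 * (n-1).descFactorial (j-1) := by
        rw [← hcancel]; exact (hdvd.mul_left _)
      rcases (Nat.Prime.dvd_mul hp).1 this with h | h
      · exact hpn0 h
      · exact hpD h
    refine ⟨(-1) ^ (k - j) * a j * (m : ℤ) * ((n - j - 1).choose (k - j) : ℤ), ?_, ?_⟩
    · rw [c, hm]; push_cast; ring
    · intro hdvd
      rcases hpint.dvd_mul.1 hdvd with h | h
      · rcases hpint.dvd_mul.1 h with h' | h'
        · rcases hpint.dvd_mul.1 h' with h'' | h''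
          · exact (hpint.not_unit) (isUnit_of_dvd_unit h'' ((isUnit_one.neg).pow _))
          · exact hpa j hjk h''
        · rw [Int.natCast_dvd_natCast] at h'; exact hpm h'
      · rw [Int.natCast_dvd_natCast] at h; exact hchoose2 j hjk h

theorem irreducible_factor_degree_multiple (n k : ℕ) (hk : k + 2 ≥ 4) (hn : n ≥ k + 2)
    (p : ℕ) [hp : Fact p.Prime] (hpk : k < p)
    (e : ℕ) (he : e = padicValNat p n) (hepos : 0 < e)
    (a : ℕ → ℤ) (ha : ∀ j ≤ k, a j ≠ 0 ∧ ∀ q : ℕ, q.Prime → (q : ℤ) ∣ a j → q ≤ k) :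
    ∀ g : Polynomial ℚ_[p], Irreducible g → g ∣ Fp p n k a →
      (k / Nat.gcd e k) ∣ g.natDegree := by
  intro g hgirr hgdvd
  have hp' := hp.out
  have hk1 : 1 ≤ k := by omega
  obtain ⟨hb0, hbj⟩ := coeff_fact n k hk1 hn p hp' hpk e he hepos a ha
  set F := Fp p n k a with hF
  have hFcoeff : ∀ m, F.coeff m =
      if m ∈ Finset.range (k+1) then ((a m * c n k m : ℤ) : ℚ_[p]) else 0 := by
    intro m
    simp only [hF, Fp, Polynomial.finset_sum_coeff, Polynomial.coeff_C_mul,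
      Polynomial.coeff_X_pow, mul_ite, mul_one, mul_zero]
    rw [Finset.sum_ite_eq (Finset.range (k+1)) m]
  have hb0ne : (a 0 * c n k 0 : ℤ) ≠ 0 := fun h => hb0 (h ▸ dvd_zero _)
  have hF0ne : F.coeff 0 ≠ 0 := by
    rw [hFcoeff 0, if_pos (Finset.mem_range.2 (Nat.succ_pos k))]
    exact_mod_cast hb0ne
  have hFne : F ≠ 0 := fun h => hF0ne (by simp [h])
  set L := F.SplittingField with hL
  set ι := algebraMap ℚ_[p] L with hι
  set f : ℤ_[p] →+* L := ι.comp (PadicInt.Coe.ringHom) with hfdef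
  obtain ⟨A, hA, hloc⟩ := IsLocalRing.exists_factor_valuationRing f
  set v := A.valuation with hvdef
  set γ := v (ι (p : ℚ_[p])) with hγdef
  have hmem : ∀ z : ℤ_[p], v (ι (z : ℚ_[p])) ≤ 1 := by
    intro z
    exact (A.valuation_le_one_iff _).2 (hA z)
  have hvu : ∀ z : ℤ_[p], IsUnit z → v (ι (z : ℚ_[p])) = 1 := by
    rintro z ⟨u, rfl⟩
    have h1 : v (ι ((u : ℤ_[p]) : ℚ_[p])) ≤ 1 := hmem _
    have h2 : v (ι (((u⁻¹ : ℤ_[p]ˣ) : ℤ_[p]) : ℚ_[p])) ≤ 1 := hmem _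
    have h3 : v (ι ((u : ℤ_[p]) : ℚ_[p])) * v (ι (((u⁻¹ : ℤ_[p]ˣ) : ℤ_[p]) : ℚ_[p])) = 1 := by
      rw [← map_mul, ← map_mul]
      norm_cast
      simp
    refine le_antisymm h1 ?_
    calc (1:A.ValueGroup) = v (ι ((u : ℤ_[p]) : ℚ_[p])) *
          v (ι (((u⁻¹ : ℤ_[p]ˣ) : ℤ_[p]) : ℚ_[p])) := h3.symm
      _ ≤ v (ι ((u : ℤ_[p]) : ℚ_[p])) * 1 := mul_le_mul_right h2 _
      _ = v (ι ((u : ℤ_[p]) : ℚ_[p])) := mul_one _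
  have hcast : (((p:ℤ_[p]) : ℚ_[p])) = (p : ℚ_[p]) := by push_cast; rfl
  have hγ0 : γ ≠ 0 := by
    rw [hγdef]
    simp only [ne_eq, Valuation.zero_iff]
    exact fun h => (Nat.cast_ne_zero.2 hp'.ne_zero : (p:ℚ_[p]) ≠ 0) (ι.injective (by simpa using h))
  have hγ1 : γ < 1 := by
    have hple : γ ≤ 1 := by rw [hγdef, ← hcast]; exact hmem _
    refine lt_of_le_of_ne hple ?_
    intro hγeq
    have hunitA : IsUnit (f.codRestrict A.toSubring hA (p : ℤ_[p])) := by
      rw [(A.valuation_eq_one_iff (f.codRestrict A.toSubring hA (p : ℤ_[p])))]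
      show v (f (p : ℤ_[p])) = 1
      rw [hfdef]
      simpa [hcast, hγdef] using hγeq
    have hup : IsUnit (p : ℤ_[p]) := hloc.map_nonunit _ hunitA
    rw [PadicInt.isUnit_iff, PadicInt.norm_p] at hup
    have h2 : (1:ℝ) < p := by exact_mod_cast hp'.one_lt
    rw [inv_eq_one] at hup
    linarith
  have hintv : ∀ z : ℤ, ¬ (p:ℤ) ∣ z → v (ι ((z:ℤ) : ℚ_[p])) = 1 := by
    intro z hz
    have h1 : IsUnit ((z : ℤ_[p])) := by
      rw [PadicInt.isUnit_iff]
      refine le_antisymm (PadicInt.norm_le_one _) ?_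
      by_contra h
      push_neg at h
      exact hz ((PadicInt.norm_int_lt_one_iff_dvd z).1 h)
    have := hvu _ h1
    rwa [show (((z:ℤ_[p]) : ℚ_[p])) = ((z:ℤ) : ℚ_[p]) by push_cast; rfl] at this
  -- valuations of coefficients
  set B : ℕ → L := fun j => ι ((a j * c n k j : ℤ) : ℚ_[p]) with hB
  have hB0v : v (B 0) = 1 := hintv _ hb0
  have hBjv : ∀ j, 1 ≤ j → j ≤ k → v (B j) = γ ^ e := by
    intro j h1 hjk
    obtain ⟨M, hM, hpM⟩ := hbj j h1 hjk
    rw [hB]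
    simp only
    rw [hM]
    have : (((p:ℤ)^e * M : ℤ) : ℚ_[p]) = (p:ℚ_[p])^e * ((M:ℤ) : ℚ_[p]) := by push_cast; ring
    rw [this, map_mul, map_mul, hintv M hpM, mul_one, map_pow, map_pow, ← hγdef]
  -- roots of F have valuation determined
  set Fm := F.map ι with hFm
  have hFmne : Fm ≠ 0 := (Polynomial.map_ne_zero_iff ι.injective).2 hFne
  have hFm_eval : ∀ r : L, Fm.eval r = ∑ j ∈ Finset.range (k+1), B j * r ^ j := by
    intro r
    simp only [hFm, hF, Fp, Polynomial.map_sum, Polynomial.map_mul, Polynomial.map_C,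
      Polynomial.map_pow, Polynomial.map_X, Polynomial.eval_finset_sum, Polynomial.eval_mul,
      Polynomial.eval_C, Polynomial.eval_pow, Polynomial.eval_X, hB]
  have hroot : ∀ r : L, Fm.eval r = 0 → v r ^ k * γ ^ e = 1 := by
    intro r hr
    rw [hFm_eval r] at hr
    exact newton_slope v k (by omega) γ hγ0 hγ1 e hepos B hB0v hBjv r hr
  -- the irreducible factor
  have hgne : g ≠ 0 := hgirr.ne_zero
  have hg0ne : g.coeff 0 ≠ 0 := by
    obtain ⟨h, hFh⟩ := hgdvd
    intro h0
    apply hF0ne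
    rw [hFh, Polynomial.mul_coeff_zero, h0, zero_mul]
  have hleadne : g.leadingCoeff ≠ 0 := Polynomial.leadingCoeff_ne_zero.2 hgne
  have hsplit : Polynomial.Splits (g.map ι) :=
    (Polynomial.SplittingField.splits F).of_dvd (Polynomial.map_ne_zero hFne) (Polynomial.map_dvd ι hgdvd)
  set gm := g.map ι with hgm
  set d := g.natDegree with hd
  have hcard : d = gm.roots.card := by rw [hd, ← Polynomial.natDegree_map ι]; exact hsplit.natDegree_eq_card_roots
  have hprodform : gm = Polynomial.C (ι g.leadingCoeff) *
      (gm.roots.map fun r => Polynomial.X - Polynomial.C r).prod :=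
    by (conv_lhs => rw [hsplit.eq_prod_roots]); rw [hgm, Polynomial.leadingCoeff_map]
  have hrootsval : ∀ r ∈ gm.roots, v r ^ k = (γ ^ e)⁻¹ := by
    intro r hr
    have h1 : gm.eval r = 0 := Polynomial.isRoot_of_mem_roots hr
    have h2 : gm ∣ Fm := Polynomial.map_dvd ι hgdvd
    have h3 : Fm.eval r = 0 := by
      have := Polynomial.eval_dvd (x := r) h2
      rw [h1, zero_dvd_iff] at this
      exact this
    exact eq_inv_of_mul_eq_one_left (hroot r h3) ▸ rfl
  -- constant coefficient identity
  have he0 : ι (g.coeff 0) = ι g.leadingCoeff * (gm.roots.map fun r => -r).prod := by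
    have h1 : gm.eval 0 = ι (g.coeff 0) := by
      rw [← Polynomial.coeff_zero_eq_eval_zero, hgm, Polynomial.coeff_map]
    have h2 := congrArg (Polynomial.eval 0) hprodform
    rw [h1] at h2
    rw [h2, Polynomial.eval_mul, Polynomial.eval_C, Polynomial.eval_multiset_prod,
      Multiset.map_map]
    refine congrArg _ (congrArg Multiset.prod (Multiset.map_congr rfl fun r _ => ?_))
    simp
  have hγe0 : (γ : A.ValueGroup) ^ e ≠ 0 := pow_ne_zero _ hγ0
  -- key valuation identity
  have key : v (ι (g.coeff 0)) ^ k * γ ^ (e * d) = v (ι g.leadingCoeff) ^ k := by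
    have h1 : v (ι (g.coeff 0)) = v (ι g.leadingCoeff) * (gm.roots.map fun r => v r).prod := by
      rw [he0, map_mul]
      congr 1
      rw [map_multiset_prod, Multiset.map_map]
      refine congrArg Multiset.prod (Multiset.map_congr rfl fun r _ => ?_)
      simp [Valuation.map_neg]
    have h2 : ((gm.roots.map fun r => v r).prod) ^ k = ((γ ^ e)⁻¹) ^ d := by
      rw [← Multiset.prod_map_pow]
      rw [show (Multiset.map (fun i => v i ^ k) gm.roots)
            = Multiset.map (fun _ => (γ ^ e)⁻¹) gm.roots from
          Multiset.map_congr rfl (fun r hr => hrootsval r hr)]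
      rw [Multiset.map_const', Multiset.prod_replicate, ← hcard]
    have h3 : ((γ ^ e)⁻¹) ^ d * γ ^ (e * d) = 1 := by
      rw [inv_pow, ← pow_mul, inv_mul_cancel₀ (pow_ne_zero (e*d) hγ0)]
    rw [h1, mul_pow, mul_assoc, h2, h3, mul_one]
  -- express coefficient valuations as powers of γ
  have hxval : ∀ x : ℚ_[p], x ≠ 0 → ∃ w : ℤ, v (ι x) = γ ^ w := by
    intro x hx
    set N := (-x.valuation).toNat with hN
    have hxpN : ‖x * (p:ℚ_[p])^N‖ ≤ 1 := by
      rw [norm_mul, norm_pow, Padic.norm_p, Padic.norm_eq_zpow_neg_valuation hx]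
      have hp1 : (1:ℝ) ≤ (p:ℝ) := by exact_mod_cast hp'.one_lt.le
      have h1 : ((p:ℝ)⁻¹)^N = (p:ℝ) ^ (-(N:ℤ)) := by
        rw [inv_pow, ← zpow_natCast, ← zpow_neg]
      rw [h1, ← zpow_add₀ (by positivity : (p:ℝ) ≠ 0)]
      refine zpow_le_one_of_nonpos₀ hp1 ?_
      have : -x.valuation ≤ (N:ℤ) := Int.self_le_toNat _
      omega
    set z : ℤ_[p] := ⟨x * (p:ℚ_[p])^N, hxpN⟩ with hz
    have hzne : z ≠ 0 := by
      intro h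
      apply mul_ne_zero hx (pow_ne_zero N (Nat.cast_ne_zero.2 hp'.ne_zero : (p:ℚ_[p]) ≠ 0))
      exact congrArg Subtype.val h
    have hzval : v (ι (z : ℚ_[p])) = γ ^ z.valuation := by
      conv_lhs => rw [PadicInt.unitCoeff_spec hzne]
      rw [show ((((PadicInt.unitCoeff hzne : ℤ_[p]) * (p:ℤ_[p]) ^ z.valuation : ℤ_[p])) : ℚ_[p])
          = ((PadicInt.unitCoeff hzne : ℤ_[p]) : ℚ_[p]) * (((p:ℤ_[p]):ℚ_[p])) ^ z.valuation
          by push_cast; ring]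
      rw [map_mul, map_pow, map_mul, map_pow, hvu _ (PadicInt.unitCoeff hzne).isUnit, one_mul,
        hcast]
    have hzc : (z : ℚ_[p]) = x * (p:ℚ_[p])^N := rfl
    rw [hzc, map_mul, map_pow, map_mul, map_pow, ← hγdef] at hzval
    refine ⟨(z.valuation : ℤ) - (N:ℤ), ?_⟩
    have hγN : γ ^ N ≠ 0 := pow_ne_zero _ hγ0
    rw [zpow_sub₀ hγ0, zpow_natCast, zpow_natCast]
    rw [eq_div_iff hγN]
    exact hzval
  obtain ⟨w0, hw0⟩ := hxval (g.coeff 0) hg0ne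
  obtain ⟨w1, hw1⟩ := hxval g.leadingCoeff hleadne
  have hked : (k:ℤ) ∣ ((e*d : ℕ) : ℤ) := by
    rw [hw0, hw1] at key
    have h1 : (γ ^ w0) ^ k = γ ^ (w0 * k) := by
      rw [← zpow_natCast ((γ:A.ValueGroup) ^ w0) k, ← zpow_mul]
    have h2 : (γ ^ w1) ^ k = γ ^ (w1 * k) := by
      rw [← zpow_natCast ((γ:A.ValueGroup) ^ w1) k, ← zpow_mul]
    have h3 : γ ^ (e*d) = γ ^ ((e*d : ℕ) : ℤ) := by rw [zpow_natCast]
    rw [h1, h2, h3, ← zpow_add₀ hγ0] at key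
    have hinj := zpow_right_injective₀ (zero_lt_iff.2 hγ0) (ne_of_lt hγ1) key
    exact ⟨w1 - w0, by linarith⟩
  have hked' : k ∣ e * d := by exact_mod_cast hked
  -- gcd arithmetic
  set D := Nat.gcd e k with hD
  have hDpos : 0 < D := Nat.gcd_pos_of_pos_right e (by omega)
  obtain ⟨m, hm⟩ := hked'
  have hek : D * (e / D) = e := Nat.mul_div_cancel' (Nat.gcd_dvd_left e k)
  have hkk : D * (k / D) = k := Nat.mul_div_cancel' (Nat.gcd_dvd_right e k)
  have hstep : (e / D) * d = (k / D) * m := by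
    apply Nat.eq_of_mul_eq_mul_left hDpos
    rw [← mul_assoc, ← mul_assoc, hek, hkk, hm]
  have hcop : Nat.Coprime (k / D) (e / D) := (Nat.coprime_div_gcd_div_gcd hDpos).symm
  refine Nat.Coprime.dvd_of_dvd_mul_left hcop ?_
  rw [mul_comm (e/D) d] at hstep
  exact ⟨m, by rw [← hstep]; ring⟩
end

section
/- Let n, k be positive integers with n ≥ k+2 ≥ 4. If there exists a prime p > k with ord_p(n) = 1 (p divides n exactly to the first power), then F_{n,k}(x) is irreducible over ℚ (indeed, x^k F_{n,k}(1/x) is an Eisenstein polynomial with respect to p). -/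
open Polynomial

/-- `F n k a = ∑_{j=0}^{k} a_j c_j x^j` as a polynomial over `ℤ`. -/
noncomputable def Fz (n k : ℕ) (a : ℕ → ℤ) : Polynomial ℤ :=
  ∑ j ∈ Finset.range (k + 1), Polynomial.C (a j * c n k j) * Polynomial.X ^ j

lemma aux_irred_of_reverse {K : Type*} [Field K] {f : K[X]} (h0 : f.coeff 0 ≠ 0)
    (hd : 0 < f.natDegree) (h : Irreducible f.reverse) : Irreducible f := by
  have hm : f.mirror = f.reverse := by
    rw [Polynomial.mirror, Polynomial.natTrailingDegree_eq_zero.mpr (Or.inr h0), pow_zero,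
      mul_one]
  rw [← hm] at h
  constructor
  · exact not_isUnit_of_natDegree_pos f hd
  · intro u v huv
    have hmul : f.mirror = u.mirror * v.mirror := by
      rw [huv, mirror_mul_of_domain]
    rcases h.2 hmul with h' | h'
    · left
      obtain ⟨r, hr, hru⟩ := Polynomial.isUnit_iff.mp h'
      have : u = C r := by
        rw [← mirror_mirror u, ← hru, mirror_C]
      rw [this]
      exact isUnit_C.mpr hr
    · right
      obtain ⟨r, hr, hru⟩ := Polynomial.isUnit_iff.mp h'
      have : v = C r := by
        rw [← mirror_mirror v, ← hru, mirror_C]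
      rw [this]
      exact isUnit_C.mpr hr

theorem F_irreducible_of_ord_one (n k : ℕ) (hk : k + 2 ≥ 4) (hn : n ≥ k + 2)
    (p : ℕ) (hp : p.Prime) (hpk : k < p) (hord : padicValNat p n = 1)
    (a : ℕ → ℤ) (ha : ∀ j ≤ k, a j ≠ 0 ∧ ∀ q : ℕ, q.Prime → (q : ℤ) ∣ a j → q ≤ k) :
    Irreducible ((Fz n k a).map (Int.castRingHom ℚ)) ∧
      ((Fz n k a).reverse).IsEisensteinAt (Ideal.span {(p : ℤ)}) := by
  haveI : Fact p.Prime := ⟨hp⟩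
  have hk2 : 2 ≤ k := by omega
  have hn0 : n ≠ 0 := by omega
  have hp1 : 1 < p := hp.one_lt
  -- basic divisibility facts in ℕ
  have hpn : p ∣ n := by
    have h := pow_padicValNat_dvd (p := p) (n := n)
    rwa [hord, pow_one] at h
  have hp2n : ¬ p ^ 2 ∣ n := by
    rw [padicValNat_dvd_iff_le hn0, hord]
    omega
  have hD : ∀ s m : ℕ, s + m ≤ k → ¬ p ∣ (n - s - 1).descFactorial m := by
    intro s m
    induction m with
    | zero =>
      intro _ h
      rw [Nat.descFactorial_zero] at h
      have := Nat.le_of_dvd one_pos h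
      omega
    | succ m ih =>
      intro hle h
      rw [Nat.descFactorial_succ] at h
      rcases (Nat.Prime.dvd_mul hp).mp h with h1 | h1
      · have hsub : n - s - 1 - m = n - (s + m + 1) := by omega
        rw [hsub] at h1
        have h2 : p ∣ n - (n - (s + m + 1)) := Nat.dvd_sub hpn h1
        have h3 : n - (n - (s + m + 1)) = s + m + 1 := by omega
        rw [h3] at h2
        have := Nat.le_of_dvd (by omega) h2
        omega
      · exact ih (by omega) h1
  have hD' : ∀ m ≤ k, ¬ p ∣ (n - 1).descFactorial m := by
    intro m hm
    have := hD 0 m (by omega)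
    simpa using this
  have hfac : ∀ m ≤ k, ¬ p ∣ m.factorial := by
    intro m hm h
    have := (hp.dvd_factorial).mp h
    omega
  have hdesc_top : ∀ j : ℕ, 1 ≤ j → n.descFactorial j = n * (n - 1).descFactorial (j - 1) := by
    intro j hj
    obtain ⟨n', rfl⟩ : ∃ n', n = n' + 1 := ⟨n - 1, by omega⟩
    obtain ⟨j', rfl⟩ : ∃ j', j = j' + 1 := ⟨j - 1, by omega⟩
    simp only [Nat.add_sub_cancel]
    rw [Nat.succ_descFactorial_succ]
  have hchoose_dvd : ∀ j : ℕ, 1 ≤ j → j ≤ k → p ∣ n.choose j := by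
    intro j h1 h2
    have e1 : n.descFactorial j = j.factorial * n.choose j :=
      Nat.descFactorial_eq_factorial_mul_choose n j
    have hd : p ∣ j.factorial * n.choose j := by
      rw [← e1, hdesc_top j h1]
      exact Dvd.dvd.mul_right hpn _
    rcases (hp.dvd_mul).mp hd with h | h
    · exact absurd h (hfac j h2)
    · exact h
  have hcj : ∀ j ≤ k, ¬ p ∣ (n - j - 1).choose (k - j) := by
    intro j hj h
    apply hD j (k - j) (by omega)
    rw [Nat.descFactorial_eq_factorial_mul_choose]
    exact Dvd.dvd.mul_left h _
  have hck2 : ¬ p ^ 2 ∣ n.choose k := by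
    intro h
    have hd : p ^ 2 ∣ n * (n - 1).descFactorial (k - 1) := by
      rw [← hdesc_top k (by omega), Nat.descFactorial_eq_factorial_mul_choose]
      exact Dvd.dvd.mul_left h _
    have hcop : Nat.Coprime (p ^ 2) ((n - 1).descFactorial (k - 1)) :=
      Nat.Coprime.pow_left _ ((Nat.Prime.coprime_iff_not_dvd hp).mpr (hD' (k - 1) (by omega)))
    exact hp2n ((Nat.Coprime.dvd_of_dvd_mul_right hcop) hd)
  -- a facts
  have hpa : ∀ j ≤ k, ¬ (p : ℤ) ∣ a j := by
    intro j hj hdvd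
    have := (ha j hj).2 p hp hdvd
    omega
  set q : ℤ := (p : ℤ) with hq
  have qp : Prime q := Nat.prime_iff_prime_int.mp hp
  -- divisibility of coefficients
  have hdvd_coeff : ∀ j : ℕ, 1 ≤ j → j ≤ k → q ∣ a j * c n k j := by
    intro j h1 h2
    have hq1 : q ∣ (n.choose j : ℤ) := Int.natCast_dvd_natCast.mpr (hchoose_dvd j h1 h2)
    have : q ∣ c n k j := by
      unfold c
      exact dvd_mul_of_dvd_left (dvd_mul_of_dvd_right hq1 _) _
    exact Dvd.dvd.mul_left this (a j)
  have hnotdvd : ∀ j ≤ k, ¬ p ∣ n.choose j → ¬ q ∣ a j * c n k j := by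
    intro j hj hnc h
    unfold c at h
    rcases qp.dvd_mul.mp h with h | h
    · exact hpa j hj h
    rcases qp.dvd_mul.mp h with h | h
    · rcases qp.dvd_mul.mp h with h | h
      · have h2 : q ∣ (-1 : ℤ) := qp.dvd_of_dvd_pow h
        have : IsUnit q := isUnit_of_dvd_unit h2 isUnit_one.neg
        exact qp.not_unit this
      · exact hnc (Int.natCast_dvd_natCast.mp h)
    · exact hcj j hj (Int.natCast_dvd_natCast.mp h)
  have hckk : c n k k = (n.choose k : ℤ) := by
    simp [c]
  have hnotdvd2 : ¬ q ^ 2 ∣ a k * c n k k := by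
    rw [hckk]
    intro h
    have h1 : q ∣ a k * (n.choose k : ℤ) := dvd_trans (dvd_pow_self q two_ne_zero) h
    have hq1 : q ∣ (n.choose k : ℤ) := by
      rcases qp.dvd_mul.mp h1 with h' | h'
      · exact absurd h' (hpa k le_rfl)
      · exact h'
    obtain ⟨t, ht⟩ := hq1
    rw [ht] at h
    have h2 : q * q ∣ (a k * t) * q := by
      rw [pow_two] at h
      convert h using 1
      ring
    have h3 : q ∣ a k * t := (mul_dvd_mul_iff_right qp.ne_zero).mp h2
    rcases qp.dvd_mul.mp h3 with h' | h'
    · exact absurd h' (hpa k le_rfl)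
    · have : q ^ 2 ∣ (n.choose k : ℤ) := by
        obtain ⟨s, hs⟩ := h'
        exact ⟨s, by rw [ht, hs]; ring⟩
      have : (p : ℤ) ^ 2 ∣ ((n.choose k : ℕ) : ℤ) := this
      rw [show ((p : ℤ)) ^ 2 = ((p ^ 2 : ℕ) : ℤ) by push_cast; ring] at this
      exact hck2 (Int.natCast_dvd_natCast.mp this)
  -- nonvanishing of coefficients
  have hcne : ∀ j ≤ k, c n k j ≠ 0 := by
    intro j hj
    unfold c
    have h1 : (0 : ℤ) < (n.choose j : ℤ) := by
      exact_mod_cast Nat.choose_pos (by omega : j ≤ n)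
    have h2 : (0 : ℤ) < ((n - j - 1).choose (k - j) : ℤ) := by
      exact_mod_cast Nat.choose_pos (by omega : k - j ≤ n - j - 1)
    exact mul_ne_zero (mul_ne_zero (pow_ne_zero _ (by norm_num)) h1.ne') h2.ne'
  have hane : ∀ j ≤ k, a j ≠ 0 := fun j hj => (ha j hj).1
  -- coefficients of Fz
  have hcoeff : ∀ j ≤ k, (Fz n k a).coeff j = a j * c n k j := by
    intro j hj
    unfold Fz
    rw [finset_sum_coeff]
    simp only [coeff_C_mul, coeff_X_pow, mul_ite, mul_one, mul_zero]
    rw [Finset.sum_ite_eq]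
    simp [Nat.lt_succ_iff, hj]
  have hcoeff' : ∀ j, k < j → (Fz n k a).coeff j = 0 := by
    intro j hj
    unfold Fz
    rw [finset_sum_coeff]
    apply Finset.sum_eq_zero
    intro i hi
    rw [Finset.mem_range, Nat.lt_succ_iff] at hi
    rw [coeff_C_mul, coeff_X_pow, if_neg (by omega)]
    ring
  have hkne : (Fz n k a).coeff k ≠ 0 := by
    rw [hcoeff k le_rfl]
    exact mul_ne_zero (hane k le_rfl) (hcne k le_rfl)
  have hdeg : (Fz n k a).natDegree = k := by
    apply le_antisymm
    · exact natDegree_le_iff_coeff_eq_zero.mpr fun m hm => hcoeff' m hm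
    · exact le_natDegree_of_ne_zero hkne
  have h0ne : (Fz n k a).coeff 0 ≠ 0 := by
    rw [hcoeff 0 (Nat.zero_le k)]
    exact mul_ne_zero (hane 0 (Nat.zero_le k)) (hcne 0 (Nat.zero_le k))
  have hFne : Fz n k a ≠ 0 := fun h => h0ne (by simp [h])
  have htd : (Fz n k a).natTrailingDegree = 0 :=
    natTrailingDegree_eq_zero.mpr (Or.inr h0ne)
  have hrdeg : (Fz n k a).reverse.natDegree = k := by
    rw [reverse_natDegree, htd, hdeg, Nat.sub_zero]
  have hrcoeff : ∀ i ≤ k, (Fz n k a).reverse.coeff i = (Fz n k a).coeff (k - i) := by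
    intro i hi
    rw [coeff_reverse, hdeg, revAt_le hi]
  have hchoose0 : ¬ p ∣ n.choose 0 := by
    simp only [Nat.choose_zero_right]
    intro h
    have := Nat.le_of_dvd one_pos h
    omega
  -- Eisenstein
  have hEis : ((Fz n k a).reverse).IsEisensteinAt (Ideal.span {q}) := by
    refine ⟨?_, ?_, ?_⟩
    · rw [Polynomial.leadingCoeff, hrdeg, hrcoeff k le_rfl, Nat.sub_self,
        hcoeff 0 (Nat.zero_le k), Ideal.mem_span_singleton]
      exact hnotdvd 0 (Nat.zero_le k) hchoose0
    · intro i hi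
      rw [hrdeg] at hi
      rw [hrcoeff i (le_of_lt hi), hcoeff (k - i) (by omega), Ideal.mem_span_singleton]
      exact hdvd_coeff (k - i) (by omega) (by omega)
    · rw [coeff_zero_reverse, Polynomial.leadingCoeff, hdeg, hcoeff k le_rfl,
        Ideal.span_singleton_pow, Ideal.mem_span_singleton]
      exact hnotdvd2
  refine ⟨?_, hEis⟩
  -- irreducibility
  set G := (Fz n k a).reverse with hG
  have hGne : G ≠ 0 := fun h => hFne (reverse_eq_zero.mp h)
  have hGlead : ¬ q ∣ G.leadingCoeff := fun h =>
    hEis.leading (Ideal.mem_span_singleton.mpr h)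
  have hcont : ¬ q ∣ G.content := by
    intro h
    apply hGlead
    exact h.trans (content_dvd_coeff G.natDegree)
  have heqG : G = C G.content * G.primPart := eq_C_content_mul_primPart G
  have hcoeffPP : ∀ i, G.coeff i = G.content * G.primPart.coeff i := by
    intro i
    conv_lhs => rw [heqG]
    rw [coeff_C_mul]
  have hPPdeg : G.primPart.natDegree = k := by rw [natDegree_primPart, hrdeg]
  have hPP : G.primPart.IsEisensteinAt (Ideal.span {q}) := by
    refine ⟨?_, ?_, ?_⟩
    · rw [Ideal.mem_span_singleton]
      intro h
      apply hGlead
      rw [Polynomial.leadingCoeff, ← natDegree_primPart G, hcoeffPP]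
      exact Dvd.dvd.mul_left h _
    · intro i hi
      rw [Ideal.mem_span_singleton]
      have hmem := hEis.mem (by rwa [hrdeg, ← hPPdeg])
      rw [Ideal.mem_span_singleton, hcoeffPP] at hmem
      rcases qp.dvd_mul.mp hmem with h | h
      · exact absurd h hcont
      · exact h
    · rw [Ideal.span_singleton_pow, Ideal.mem_span_singleton]
      intro h
      have hnm := hEis.notMem
      rw [Ideal.span_singleton_pow, Ideal.mem_span_singleton, hcoeffPP] at hnm
      exact hnm (Dvd.dvd.mul_left h _)
  have hqne : q ≠ 0 := by
    simp only [hq, ne_eq, Nat.cast_eq_zero]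
    omega
  have hprime : (Ideal.span ({q} : Set ℤ)).IsPrime :=
    (Ideal.span_singleton_prime hqne).mpr qp
  have hirr : Irreducible G.primPart :=
    hPP.irreducible hprime (isPrimitive_primPart G) (by rw [hPPdeg]; omega)
  have hirrQ : Irreducible (G.primPart.map (Int.castRingHom ℚ)) :=
    (Polynomial.IsPrimitive.Int.irreducible_iff_irreducible_map_cast
      (isPrimitive_primPart G)).mp hirr
  have hcontQ : ((G.content : ℤ) : ℚ) ≠ 0 := by
    simp only [ne_eq, Int.cast_eq_zero]
    exact fun h => hGne (content_eq_zero_iff.mp h)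
  have huC : IsUnit (C ((G.content : ℤ) : ℚ)) :=
    isUnit_C.mpr (isUnit_iff_ne_zero.mpr hcontQ)
  have hGQirr : Irreducible (G.map (Int.castRingHom ℚ)) := by
    have hmapeq : G.map (Int.castRingHom ℚ) =
        C ((G.content : ℤ) : ℚ) * G.primPart.map (Int.castRingHom ℚ) := by
      conv_lhs => rw [heqG]
      rw [Polynomial.map_mul, map_C]
      rfl
    rw [hmapeq]
    obtain ⟨u, hu⟩ := huC
    exact Associated.irreducible ⟨u, by rw [hu, mul_comm]⟩ hirrQ
  have hinj : Function.Injective (Int.castRingHom ℚ) := Int.cast_injective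
  have hGmap : G.map (Int.castRingHom ℚ) = ((Fz n k a).map (Int.castRingHom ℚ)).reverse := by
    rw [hG, Polynomial.reverse, Polynomial.reverse,
      natDegree_map_eq_of_injective hinj, reflect_map]
  rw [hGmap] at hGQirr
  apply aux_irred_of_reverse _ _ hGQirr
  · rw [Polynomial.coeff_map]
    simp only [ne_eq, eq_intCast, Int.cast_eq_zero]
    exact h0ne
  · rw [natDegree_map_eq_of_injective hinj, hdeg]
    omega
end
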